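/- arXiv:math/0505330 — 4 statements merged into one kernel-verified Lean document; each statement's English description precedes it below -/
import Mathlib

section
/- Every finite geometric meet semi-lattice L satisfies the Kruskal–Katona inequalities: 0 ≤ ∂_k(f_k) ≤ f_{k−1} for all k ≥ 0, where f_i is the number of elements of rank i+1. -/
/-- The largest `m` with `C(m, k) ≤ n` (the leading term of the greedy cascade
representation). -/
def cascadeTop (k n : ℕ) : ℕ := Nat.findGreatest (fun m => Nat.choose m k ≤ n) (n + k + 1)

/-- `delSym k n = ∂^k(n)`: for `n > 0` with `k`-cascade representation
`n = C(n_k, k) + ... + C(n_i, i)` (computed greedily), `∂^k(n) = C(n_k - 1, k - 1)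
+ ... + C(n_i - 1, i - 1)`, and `∂^k(0) = 0`. -/
def delSym : ℕ → ℕ → ℕ
  | _, 0 => 0
  | 0, _ + 1 => 1
  | k + 1, n + 1 =>
    Nat.choose (cascadeTop (k + 1) (n + 1) - 1) k +
      delSym k (n + 1 - Nat.choose (cascadeTop (k + 1) (n + 1)) (k + 1))

/-- Auxiliary for Kruskal–Katona shadow: `delKKaux k n` is
`C(n_k, k-1) + ... + C(n_i, i-1)` for the `k`-cascade representation of `n`. -/
def delKKaux : ℕ → ℕ → ℕ
  | _, 0 => 0
  | 0, _ + 1 => 1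
  | k + 1, n + 1 =>
    Nat.choose (cascadeTop (k + 1) (n + 1)) k +
      delKKaux k (n + 1 - Nat.choose (cascadeTop (k + 1) (n + 1)) (k + 1))

/-- `delKK k n = ∂_k(n)`, computed via the `(k+1)`-cascade representation of `n`. -/
def delKK (k n : ℕ) : ℕ := delKKaux (k + 1) n

/-- The rank function is compatible with the covering relation. -/
def CoverRank {P : Type*} [PartialOrder P] (rk : P → ℕ) : Prop :=
  ∀ a b : P, a ⋖ b → rk b = rk a + 1

/-- The rank function is strictly monotone (the poset is graded). -/
def RankStrictMono {P : Type*} [PartialOrder P] (rk : P → ℕ) : Prop :=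
  ∀ a b : P, a < b → rk a < rk b

/-- The diamond property: every interval of rank 2 contains at least two
intermediate elements. -/
def DiamondProp {P : Type*} [PartialOrder P] (rk : P → ℕ) : Prop :=
  ∀ x y : P, x < y → rk y = rk x + 2 →
    ∃ a b : P, a ≠ b ∧ a ∈ Set.Ioo x y ∧ b ∈ Set.Ioo x y

/-- The parallelogram property (Definition of the paper): for every `x̂` and every
`y > x̂`, if the chain `x̂ = x 0 ⋖ x 1 ⋖ ... ⋖ x r` (`r > 0`) equals the closed
interval `[x̂, x r]`, is maximal w.r.t. inclusion among chain-intervals above `x̂`,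
and `r` is less than the rank of `y` in `P(x̂)`, then whenever `x i < y` and
`x (i+1) ≰ y` for some `0 < i ≤ r` (interpreting, for `i = r`, the latter as
`[x̂, y]` is not a chain), there exists `y'` with `x̂ ≤ y'`, `y' ⋖ y`,
`x (i-1) < y'` and `¬ x i ≤ y'`. -/
def ParallelogramProp {P : Type*} [PartialOrder P] (rk : P → ℕ) : Prop :=
  ∀ (xh y : P) (r : ℕ) (x : ℕ → P),
    xh < y → 0 < r → x 0 = xh →
    (∀ j, j < r → x j ⋖ x (j + 1)) →
    Set.Icc xh (x r) = {p | ∃ j ≤ r, p = x j} →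
    (∀ z : P, x r < z → ¬ IsChain (· ≤ ·) (Set.Icc xh z)) →
    r < rk y - rk xh →
    ∀ i, 0 < i → i ≤ r → x i < y →
      ((i < r ∧ ¬ x (i + 1) ≤ y) ∨ (i = r ∧ ¬ IsChain (· ≤ ·) (Set.Icc xh y))) →
      ∃ y' : P, xh ≤ y' ∧ y' ⋖ y ∧ x (i - 1) < y' ∧ ¬ x i ≤ y'

/-- Atomic: every element is the join of the atoms (rank-1 elements) below it. -/
def AtomicRk {L : Type*} [PartialOrder L] (rk : L → ℕ) : Prop :=
  ∀ l : L, IsLUB {a : L | rk a = 1 ∧ a ≤ l} l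

attribute [-instance] instDecidableEqFin

namespace KKGeo
open Nat

lemma succ_le_choose (n k : ℕ) : n + 1 ≤ (n + (k + 1)).choose (k + 1) := by
  induction n with
  | zero => simp
  | succ n ih =>
      have h : n + 1 + (k + 1) = (n + (k+1)) + 1 := by omega
      rw [h]
      have h4 : ((n + (k+1)) + 1).choose (k + 1) =
          (n + (k+1)).choose k + (n + (k+1)).choose (k + 1) :=
        Nat.choose_succ_succ (n + (k+1)) k
      have h2 : 1 ≤ (n + (k + 1)).choose k := Nat.choose_pos (by omega)
      omega

lemma delKKaux_zero (k : ℕ) : delKKaux k 0 = 0 := by cases k <;> rfl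

lemma cascadeTop_eq {k n m : ℕ} (hk : 0 < k) (h1 : m.choose k ≤ n)
    (h2 : n < (m + 1).choose k) : cascadeTop k n = m := by
  have hb : m ≤ n + k + 1 := by
    rcases le_or_gt k m with h | h
    · have : m - k + 1 ≤ (m - k + k).choose k := by obtain ⟨j, rfl⟩ : ∃ j, k = j + 1 := ⟨k - 1, by omega⟩; exact succ_le_choose _ _
      rw [Nat.sub_add_cancel h] at this
      omega
    · omega
  refine le_antisymm ?_ (Nat.le_findGreatest hb h1)
  by_contra hlt
  push_neg at hlt
  have hP : (cascadeTop k n).choose k ≤ n :=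
    Nat.findGreatest_spec (P := fun m => Nat.choose m k ≤ n) (m := m) hb h1
  have hge : (m+1).choose k ≤ (cascadeTop k n).choose k :=
    Nat.choose_le_choose k hlt
  omega

lemma delKKaux_succ (k n : ℕ) : delKKaux (k + 1) (n + 1) =
    Nat.choose (cascadeTop (k + 1) (n + 1)) k +
      delKKaux k (n + 1 - Nat.choose (cascadeTop (k + 1) (n + 1)) (k + 1)) := rfl

lemma delKKaux_choose {k m : ℕ} (hm : k + 1 ≤ m) :
    delKKaux (k + 1) (m.choose (k + 1)) = m.choose k := by
  have hpos : 0 < m.choose (k + 1) := Nat.choose_pos hm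
  have hsum : (m+1).choose (k+1) = m.choose k + m.choose (k+1) :=
    Nat.choose_succ_succ m k
  obtain ⟨N, hN⟩ : ∃ N, m.choose (k+1) = N + 1 := ⟨m.choose (k+1) - 1, by omega⟩
  have hct : cascadeTop (k + 1) (m.choose (k + 1)) = m := by
    apply cascadeTop_eq (by omega) le_rfl
    have : 0 < m.choose k := Nat.choose_pos (by omega)
    omega
  rw [hN] at hct ⊢
  rw [delKKaux_succ, hct, ← hN, Nat.sub_self, delKKaux_zero]
  omega

lemma delKKaux_cascade {k m r : ℕ} (hm : k + 2 ≤ m + 1) (hr1 : 1 ≤ r)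
    (hr2 : r ≤ m.choose (k + 1)) :
    delKKaux (k + 2) (m.choose (k + 2) + r) ≤ m.choose (k + 1) + delKKaux (k + 1) r := by
  have hsum : (m+1).choose (k+2) = m.choose (k+1) + m.choose (k+2) :=
    Nat.choose_succ_succ m (k+1)
  have hbr : (m + 1).choose (k + 1 + 1) = (m+1).choose (k+2) := rfl
  rcases lt_or_eq_of_le hr2 with hlt | heq
  · have hct : cascadeTop (k + 2) (m.choose (k + 2) + r) = m := by
      have h1 : m.choose (k+2) ≤ m.choose (k+2) + r := by omega
      have h2 : m.choose (k+2) + r < (m+1).choose (k+2) := by omega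
      exact cascadeTop_eq (by omega) h1 h2
    obtain ⟨N, hN⟩ : ∃ N, m.choose (k+2) + r = N + 1 := ⟨m.choose (k+2) + r - 1, by omega⟩
    rw [hN] at hct ⊢
    rw [delKKaux_succ, hct, ← hN]
    simp
  · subst heq
    have hsum2 : (m+1+1).choose (k+2) = (m+1).choose (k+1) + (m+1).choose (k+2) :=
      Nat.choose_succ_succ (m+1) (k+1)
    have hct : cascadeTop (k + 2) (m.choose (k + 2) + m.choose (k+1)) = m + 1 := by
      have h1 : (m+1).choose (k+2) ≤ m.choose (k+2) + m.choose (k+1) := by omega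
      have hp : 0 < (m+1).choose (k+1) := Nat.choose_pos (by omega)
      have h2 : m.choose (k+2) + m.choose (k+1) < (m+1+1).choose (k+2) := by omega
      exact cascadeTop_eq (by omega) h1 h2
    have hpos : 0 < m.choose (k+1) := by omega
    obtain ⟨N, hN⟩ : ∃ N, m.choose (k+2) + m.choose (k+1) = N + 1 := ⟨m.choose (k+2) + m.choose (k+1) - 1, by omega⟩
    rw [hN] at hct ⊢
    rw [delKKaux_succ, hct, ← hN]
    have hz : m.choose (k + 2) + m.choose (k + 1) - (m + 1).choose (k + 1 + 1) = 0 := by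
      have : (m + 1).choose (k + 1 + 1) = (m+1).choose (k+2) := rfl
      omega
    rw [hz, delKKaux_zero, Nat.add_zero]
    rcases Nat.lt_or_ge k m with hkm | hkm
    · have hdd : delKKaux (k + 1) (m.choose (k + 1)) = m.choose k := delKKaux_choose (by omega)
      have hsum3 : (m+1).choose (k+1) = m.choose k + m.choose (k+1) :=
        Nat.choose_succ_succ m k
      have : (m + 1).choose (k + 1 + 1) = (m+1).choose (k+2) := rfl
      omega
    · -- k ≥ m, but k + 2 ≤ m + 1 means k < m; contradiction unless k+1 = m
      omega

lemma delKKaux_one_pos (n : ℕ) : delKKaux 1 (n + 1) = 1 := by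
  have hct : cascadeTop 1 (n + 1) = n + 1 := by
    apply cascadeTop_eq (by omega) <;> simp [Nat.choose_one_right]
  rw [delKKaux_succ, hct]
  simp [delKKaux]

end KKGeo
open Finset Colex in
lemma KKGeo.initSeg_empty_eq {α : Type*} [LinearOrder α] [Fintype α] [DecidableEq α] :
    initSeg (∅ : Finset α) = {∅} := by
  ext t
  simp only [mem_initSeg, card_empty, mem_singleton]
  constructor
  · rintro ⟨h1, -⟩; exact (Finset.card_eq_zero.1 h1.symm)
  · rintro rfl; simp

namespace KKGeo
open Finset Colex

variable {n : ℕ}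

lemma initSeg_subset_powersetCard {s : Finset (Fin n)} {m : Fin n} (h : ∀ b ∈ s, b < m) :
    initSeg s ⊆ powersetCard #s (Finset.Iio m) := by
  intro t ht
  rw [mem_initSeg] at ht
  rw [mem_powersetCard]
  refine ⟨fun b hb => ?_, ht.1.symm⟩
  rw [Finset.mem_Iio]
  exact forall_lt_mono ht.2 h b hb

lemma initSeg_card_le_of_lt {s : Finset (Fin n)} {m : Fin n} (h : ∀ b ∈ s, b < m) :
    #(initSeg s) ≤ Nat.choose (m : ℕ) #s := by
  calc #(initSeg s) ≤ #(powersetCard #s (Finset.Iio m)) :=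
        card_le_card (initSeg_subset_powersetCard h)
    _ = Nat.choose (m : ℕ) #s := by rw [card_powersetCard, Fin.card_Iio]

lemma initSeg_card_erase_max (s : Finset (Fin n)) (hs : s.Nonempty) :
    #(initSeg s) = Nat.choose (s.max' hs : ℕ) #s + #(initSeg (s.erase (s.max' hs))) := by
  classical
  set m := s.max' hs with hm
  have hsplit : #((initSeg s).filter (fun t => m ∈ t))
      + #((initSeg s).filter (fun t => m ∉ t)) = #(initSeg s) :=
    card_filter_add_card_filter_not _
  have hnotm : (initSeg s).filter (fun t => m ∉ t) = powersetCard #s (Finset.Iio m) := by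
    ext t
    simp only [mem_filter, mem_initSeg, mem_powersetCard]
    constructor
    · rintro ⟨⟨hcard, hle⟩, hmt⟩
      refine ⟨fun b hb => ?_, hcard.symm⟩
      rw [Finset.mem_Iio]
      have hb' : b ≤ m := forall_le_mono hle (fun c hc => s.le_max' c hc) b hb
      exact lt_of_le_of_ne hb' (fun hbm => hmt (hbm ▸ hb))
    · rintro ⟨hsub, hcard⟩
      have hmt : m ∉ t := fun hmem => by
        have := Finset.mem_Iio.1 (hsub hmem); exact absurd this (lt_irrefl m)
      refine ⟨⟨hcard.symm, le_of_lt ?_⟩, hmt⟩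
      rw [toColex_lt_toColex_iff_exists_forall_lt]
      exact ⟨m, s.max'_mem hs, hmt, fun b hb _ => Finset.mem_Iio.1 (hsub hb)⟩
  have hmemm : #((initSeg s).filter (fun t => m ∈ t)) = #(initSeg (s.erase m)) := by
    refine card_bij' (fun t _ => t.erase m) (fun u _ => insert m u) ?hi ?hj ?left ?right
    case hi =>
      intro t ht
      rw [mem_filter, mem_initSeg] at ht
      obtain ⟨⟨hcard, hle⟩, hmt⟩ := ht
      rw [mem_initSeg]
      constructor
      · rw [card_erase_of_mem hmt, card_erase_of_mem (s.max'_mem hs), hcard]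
      · have h1 : ({m} : Finset (Fin n)) ⊆ t := singleton_subset_iff.2 hmt
        have h2 : ({m} : Finset (Fin n)) ⊆ s := singleton_subset_iff.2 (s.max'_mem hs)
        have := (toColex_sdiff_le_toColex_sdiff h1 h2).2 hle
        simpa [sdiff_singleton_eq_erase] using this
    case hj =>
      intro u hu
      rw [mem_initSeg] at hu
      obtain ⟨hcard, hle⟩ := hu
      have hmu : m ∉ u := by
        intro hmem
        have : m < m := forall_lt_mono hle
          (fun b hb => lt_of_le_of_ne (s.le_max' b (mem_of_mem_erase hb))
            (by simpa using (Finset.mem_erase.1 hb).1)) m hmem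
        exact absurd this (lt_irrefl m)
      rw [mem_filter, mem_initSeg]
      refine ⟨⟨?_, ?_⟩, mem_insert_self m u⟩
      · rw [card_insert_of_notMem hmu, ← hcard, card_erase_of_mem (s.max'_mem hs)]
        have : 0 < #s := card_pos.2 hs
        omega
      · have h1 : ({m} : Finset (Fin n)) ⊆ insert m u := singleton_subset_iff.2 (mem_insert_self m u)
        have h2 : ({m} : Finset (Fin n)) ⊆ s := singleton_subset_iff.2 (s.max'_mem hs)
        rw [← toColex_sdiff_le_toColex_sdiff h1 h2]
        have e1 : insert m u \ {m} = u := by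
          rw [sdiff_singleton_eq_erase, erase_insert hmu]
        have e2 : s \ {m} = s.erase m := sdiff_singleton_eq_erase m s
        rw [e1, e2]
        exact hle
    case left =>
      intro t ht
      rw [mem_filter] at ht
      exact insert_erase ht.2
    case right =>
      intro u hu
      rw [mem_initSeg] at hu
      have hmu : m ∉ u := by
        intro hmem
        have : m < m := forall_lt_mono hu.2
          (fun b hb => lt_of_le_of_ne (s.le_max' b (mem_of_mem_erase hb))
            (by simpa using (Finset.mem_erase.1 hb).1)) m hmem
        exact absurd this (lt_irrefl m)
      exact erase_insert hmu
  rw [← hsplit, hnotm, hmemm, card_powersetCard, Fin.card_Iio, Nat.add_comm]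

end KKGeo
namespace KKGeo
open Finset Colex

variable {n : ℕ}

lemma delKKaux_initSeg : ∀ (k : ℕ) (s : Finset (Fin n)) (hs : s.Nonempty), #s = k + 1 →
    delKKaux (k + 1) #(initSeg s) ≤ #(initSeg (s.erase (s.min' hs))) := by
  intro k
  induction k with
  | zero =>
    intro s hs hcard
    obtain ⟨a, rfl⟩ := Finset.card_eq_one.1 hcard
    have h1 : ({a} : Finset (Fin n)).min' hs = a := min'_singleton a
    rw [h1, Finset.erase_singleton, initSeg_empty_eq]
    have h2 : 0 < #(initSeg ({a} : Finset (Fin n))) := card_pos.2 initSeg_nonempty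
    obtain ⟨N, hN⟩ : ∃ N, #(initSeg ({a} : Finset (Fin n))) = N + 1 :=
      ⟨#(initSeg ({a} : Finset (Fin n))) - 1, by omega⟩
    rw [hN, delKKaux_one_pos, card_singleton]
  | succ k ih =>
    intro s hs hcard
    set m := s.max' hs with hmdef
    set c := s.min' hs with hcdef
    have hcm : c < m := s.min'_lt_max'_of_card (by omega)
    set s' := s.erase m with hs'def
    have hcins' : c ∈ s' := Finset.mem_erase.2 ⟨ne_of_lt hcm, s.min'_mem hs⟩
    have hs'ne : s'.Nonempty := ⟨c, hcins'⟩
    have hs'card : #s' = k + 1 := by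
      rw [hs'def, card_erase_of_mem (s.max'_mem hs), hcard]
      omega
    have hmins' : s'.min' hs'ne = c := by
      apply le_antisymm (s'.min'_le c hcins')
      exact le_min' _ _ _ (fun b hb => s.min'_le b (mem_of_mem_erase hb))
    -- elements of s' are < m
    have hs'lt : ∀ b ∈ s', b < m := fun b hb =>
      lt_of_le_of_ne (s.le_max' b (mem_of_mem_erase hb)) (by simpa using (Finset.mem_erase.1 hb).1)
    -- m large enough
    have hmval : k + 2 ≤ (m : ℕ) + 1 := by
      have hsub : s ⊆ Finset.Iic m := fun b hb => Finset.mem_Iic.2 (s.le_max' b hb)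
      have := card_le_card hsub
      rw [Fin.card_Iic, hcard] at this
      omega
    -- decomposition of #initSeg s
    have hdec : #(initSeg s) = Nat.choose (m : ℕ) (k + 2) + #(initSeg s') := by
      have := initSeg_card_erase_max s hs
      rw [hcard] at this
      exact this
    have hr1 : 1 ≤ #(initSeg s') := card_pos.2 initSeg_nonempty
    have hr2 : #(initSeg s') ≤ Nat.choose (m : ℕ) (k + 1) := by
      have := initSeg_card_le_of_lt hs'lt
      rwa [hs'card] at this
    have hkey : delKKaux (k + 2) #(initSeg s) ≤
        Nat.choose (m : ℕ) (k + 1) + delKKaux (k + 1) #(initSeg s') := by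
      rw [hdec]
      exact delKKaux_cascade hmval hr1 hr2
    have hih := ih s' hs'ne hs'card
    rw [hmins'] at hih
    -- right-hand side decomposition: u = s.erase c
    set u := s.erase c with hudef
    have hmu : m ∈ u := Finset.mem_erase.2 ⟨(ne_of_lt hcm).symm, s.max'_mem hs⟩
    have hune : u.Nonempty := ⟨m, hmu⟩
    have hucard : #u = k + 1 := by
      rw [hudef, card_erase_of_mem (s.min'_mem hs), hcard]
      omega
    have humax : u.max' hune = m := by
      apply le_antisymm
      · exact max'_le _ _ _ (fun b hb => s.le_max' b (mem_of_mem_erase hb))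
      · exact u.le_max' m hmu
    have hudec : #(initSeg u) = Nat.choose (m : ℕ) (k + 1) + #(initSeg (s'.erase c)) := by
      have h := initSeg_card_erase_max u hune
      rw [humax, hucard] at h
      have hcomm : u.erase m = s'.erase c := by
        rw [hudef, hs'def]; exact Finset.erase_right_comm
      rw [hcomm] at h
      exact h
    have hbr : delKKaux (k + 1 + 1) #(initSeg s) = delKKaux (k + 2) #(initSeg s) := rfl
    rw [hudec]
    omega

theorem delKKaux_le_card_shadow {k : ℕ} (𝒜 : Finset (Finset (Fin n)))
    (h : (𝒜 : Set (Finset (Fin n))).Sized (k + 1)) :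
    delKKaux (k + 1) #𝒜 ≤ #(Finset.shadow 𝒜) := by
  classical
  rcases 𝒜.eq_empty_or_nonempty with rfl | hne
  · simp [delKKaux_zero]
  have hpos : 0 < #𝒜 := card_pos.2 hne
  set P := powersetCard (k + 1) (univ : Finset (Fin n)) with hP
  have h𝒜P : 𝒜 ⊆ P := fun A hA =>
    mem_powersetCard.2 ⟨subset_univ A, h hA⟩
  set Q := P.image toColex with hQ
  have hQcard : #Q = #P := card_image_of_injective _ toColex.injective
  have hNQ : #𝒜 ≤ #Q := by rw [hQcard]; exact card_le_card h𝒜P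
  set e := Q.orderIsoOfFin rfl with he
  set i : Fin #Q := ⟨#𝒜 - 1, by omega⟩ with hi
  set sc : Colex (Finset (Fin n)) := (e i).1 with hsc
  set s : Finset (Fin n) := ofColex sc with hsdef
  have hscQ : sc ∈ Q := (e i).2
  have hscard : #s = k + 1 := by
    obtain ⟨t, htP, hteq⟩ := Finset.mem_image.1 hscQ
    have : s = t := by rw [hsdef, ← hteq, ofColex_toColex]
    rw [this]
    exact (mem_powersetCard.1 htP).2
  have hsne : s.Nonempty := card_pos.1 (by omega)
  have htc : toColex s = sc := by rw [hsdef, toColex_ofColex]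
  -- initSeg s as image
  have hfil : initSeg s = (Q.filter (fun q => q ≤ sc)).image ofColex := by
    ext t
    simp only [mem_initSeg, Finset.mem_image, mem_filter]
    constructor
    · rintro ⟨hcard, hle⟩
      refine ⟨toColex t, ⟨?_, ?_⟩, rfl⟩
      · rw [hQ]
        exact Finset.mem_image.2 ⟨t, mem_powersetCard.2 ⟨subset_univ t, by omega⟩, rfl⟩
      · rwa [htc] at hle
    · rintro ⟨q, ⟨hqQ, hqle⟩, rfl⟩
      obtain ⟨t', ht'P, ht'eq⟩ := Finset.mem_image.1 hqQ
      have hcard' : #(ofColex q) = k + 1 := by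
        rw [← ht'eq]; exact (mem_powersetCard.1 ht'P).2
      refine ⟨by omega, ?_⟩
      rw [htc]
      simpa using hqle
  have hfilcard : #(initSeg s) = #(Q.filter (fun q => q ≤ sc)) := by
    rw [hfil]; exact card_image_of_injective _ ofColex.injective
  -- count the filter via the order iso
  have hcount : Q.filter (fun q => q ≤ sc) = (Finset.Iic i).image (fun j => (e j).1) := by
    ext q
    simp only [mem_filter, Finset.mem_image, Finset.mem_Iic]
    constructor
    · rintro ⟨hqQ, hqle⟩
      refine ⟨e.symm ⟨q, hqQ⟩, ?_, by simp⟩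
      rw [← e.le_iff_le, e.apply_symm_apply]
      exact Subtype.coe_le_coe.1 (by simpa [hsc] using hqle)
    · rintro ⟨j, hj, rfl⟩
      exact ⟨(e j).2, Subtype.coe_le_coe.2 (e.le_iff_le.2 hj)⟩
  have hIiccard : #((Finset.Iic i).image (fun j => (e j).1)) = #𝒜 := by
    have hinj : Function.Injective (fun j : Fin #Q => (e j).1) :=
      fun a b hab => e.injective (Subtype.ext hab)
    rw [card_image_of_injective _ hinj, Fin.card_Iic]
    simp [hi]
    omega
  have hinitcard : #(initSeg s) = #𝒜 := by rw [hfilcard, hcount, hIiccard]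
  -- apply Kruskal–Katona
  have hIS : IsInitSeg (initSeg s) (k + 1) := by
    have := isInitSeg_initSeg (s := s)
    rwa [hscard] at this
  have hKK : #(Finset.shadow (initSeg s)) ≤ #(Finset.shadow 𝒜) :=
    Finset.kruskal_katona h (le_of_eq hinitcard) hIS
  have hshadow : Finset.shadow (initSeg s) = initSeg (s.erase (s.min' hsne)) :=
    shadow_initSeg hsne
  have hdel := delKKaux_initSeg k s hsne hscard
  rw [← hinitcard]
  calc delKKaux (k + 1) #(initSeg s) ≤ #(initSeg (s.erase (s.min' hsne))) := hdel
    _ = #(Finset.shadow (initSeg s)) := by rw [hshadow]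
    _ ≤ #(Finset.shadow 𝒜) := hKK

end KKGeo
namespace KKGeo
section Lattice

variable {L : Type*} [SemilatticeInf L] [OrderBot L] [Fintype L]

open Finset
open scoped Classical

/-- The join of a finset, if an upper bound exists; junk value `⊥` otherwise. -/
noncomputable def jn (t : Finset L) : L :=
  if h : (univ.filter (fun v => ∀ b ∈ t, b ≤ v)).Nonempty
  then (univ.filter (fun v => ∀ b ∈ t, b ≤ v)).inf' h id else ⊥

lemma jn_isLUB (t : Finset L) (u : L) (hu : ∀ b ∈ t, b ≤ u) : IsLUB (t : Set L) (jn t) := by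
  classical
  have hne : (univ.filter (fun v => ∀ b ∈ t, b ≤ v)).Nonempty :=
    ⟨u, mem_filter.2 ⟨mem_univ u, hu⟩⟩
  rw [jn]
  rw [dif_pos hne]
  constructor
  · intro b hb
    exact Finset.le_inf' hne id (fun v hv => (mem_filter.1 hv).2 b hb)
  · intro v hv
    exact Finset.inf'_le id (mem_filter.2 ⟨mem_univ v, fun b hb => hv hb⟩)

lemma le_jn {t : Finset L} {u : L} (hu : ∀ b ∈ t, b ≤ u) {b : L} (hb : b ∈ t) : b ≤ jn t :=
  (jn_isLUB t u hu).1 hb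

lemma jn_le {t : Finset L} {u : L} (hu : ∀ b ∈ t, b ≤ u) : jn t ≤ u :=
  (jn_isLUB t u hu).2 (fun b hb => hu b hb)

lemma jn_eq_of_isLUB {t : Finset L} {x : L} (hx : IsLUB (t : Set L) x) : jn t = x :=
  (jn_isLUB t x (fun b hb => hx.1 hb)).unique hx

variable (rk : L → ℕ)

/-- The atoms below `x`. -/
noncomputable def atomsBelow (x : L) : Finset L := univ.filter (fun a => rk a = 1 ∧ a ≤ x)

/-- The atoms below `x` that are `w`-smaller than `a`. -/
noncomputable def pref (w : L → ℕ) (x a : L) : Finset L :=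
  (atomsBelow rk x).filter (fun b => w b < w a)

/-- The greedy basis of `x` w.r.t. the auxiliary order `w`. -/
noncomputable def gbasis (w : L → ℕ) (x : L) : Finset L :=
  (atomsBelow rk x).filter (fun a => ¬ a ≤ jn (pref rk w x a))

lemma mem_atomsBelow {x a : L} : a ∈ atomsBelow rk x ↔ rk a = 1 ∧ a ≤ x := by
  rw [atomsBelow, mem_filter]; simp

lemma gbasis_subset_atomsBelow (w : L → ℕ) (x : L) : gbasis rk w x ⊆ atomsBelow rk x :=
  filter_subset _ _

lemma atomsBelow_le {x a : L} (h : a ∈ atomsBelow rk x) : a ≤ x := ((mem_atomsBelow rk).1 h).2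

variable {rk}
variable (h0 : rk ⊥ = 0) (hm : RankStrictMono rk) (hat : AtomicRk rk)
  (hgeo : ∀ x y j : L, IsLUB ({x, y} : Set L) j → rk (x ⊓ y) + rk j ≤ rk x + rk y)

include h0 hm in
lemma eq_bot_of_rk_zero {x : L} (hx : rk x = 0) : x = ⊥ := by
  by_contra hne
  have : ⊥ < x := lt_of_le_of_ne bot_le (Ne.symm hne)
  have := hm ⊥ x this
  omega

include hm hgeo in
lemma rk_sup_step {y a j : L} (ha : rk a = 1) (hay : ¬ a ≤ y)
    (hj : IsLUB ({y, a} : Set L) j) : rk j = rk y + 1 := by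
  have hsub : rk (y ⊓ a) + rk j ≤ rk y + rk a := hgeo y a j hj
  have hlt : y ⊓ a < a := by
    rcases lt_or_eq_of_le (inf_le_right : y ⊓ a ≤ a) with h | h
    · exact h
    · exact absurd (h ▸ (inf_le_left : y ⊓ a ≤ y)) hay
  have h1 : rk (y ⊓ a) < 1 := ha ▸ hm _ _ hlt
  have hyj : y < j := by
    have hyle : y ≤ j := hj.1 (by simp)
    rcases lt_or_eq_of_le hyle with h | h
    · exact h
    · exact absurd (h ▸ (hj.1 (by simp) : a ≤ j)) hay
  have := hm _ _ hyj
  omega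

include hat in
lemma isLUB_atomsBelow (x : L) : IsLUB ((atomsBelow rk x : Finset L) : Set L) x := by
  have hset : ((atomsBelow rk x : Finset L) : Set L) = {a : L | rk a = 1 ∧ a ≤ x} := by
    ext a; simp [mem_atomsBelow]
  rw [hset]; exact hat x

include hat in
lemma ub_atomsBelow_of_ub_gbasis (w : L → ℕ) (x u : L)
    (hu : ∀ b ∈ gbasis rk w x, b ≤ u) : ∀ a ∈ atomsBelow rk x, a ≤ u := by
  have key : ∀ N, ∀ a ∈ atomsBelow rk x, w a < N → a ≤ u := by
    intro N
    induction N with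
    | zero => intro a _ h; omega
    | succ N ih =>
      intro a ha hwa
      by_cases hb : a ∈ gbasis rk w x
      · exact hu a hb
      · have hle : a ≤ jn (pref rk w x a) := by
          rw [gbasis, mem_filter] at hb
          push_neg at hb
          exact hb ha
        have hup : ∀ b ∈ pref rk w x a, b ≤ u := by
          intro b hbp
          rw [pref, mem_filter] at hbp
          exact ih b hbp.1 (by omega)
        exact hle.trans (jn_le hup)
  exact fun a ha => key (w a + 1) a ha (by omega)

include hat in
lemma isLUB_gbasis (w : L → ℕ) (x : L) : IsLUB ((gbasis rk w x : Finset L) : Set L) x := by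
  constructor
  · intro a ha
    exact atomsBelow_le rk (gbasis_subset_atomsBelow rk w x ha)
  · intro u hu
    have h2 : ∀ a ∈ atomsBelow rk x, a ≤ u :=
      ub_atomsBelow_of_ub_gbasis hat w x u (fun b hb => hu hb)
    exact (isLUB_atomsBelow hat x).2 (fun a ha => h2 a ha)

include hat in
lemma jn_gbasis (w : L → ℕ) (x : L) : jn (gbasis rk w x) = x :=
  jn_eq_of_isLUB (isLUB_gbasis hat w x)

end Lattice
end KKGeo
namespace KKGeo
section Lattice2

variable {L : Type*} [SemilatticeInf L] [OrderBot L] [Fintype L]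

open Finset
open scoped Classical

variable {rk : L → ℕ}
variable (h0 : rk ⊥ = 0) (hm : RankStrictMono rk) (hat : AtomicRk rk)
  (hgeo : ∀ x y j : L, IsLUB ({x, y} : Set L) j → rk (x ⊓ y) + rk j ≤ rk x + rk y)

include h0 hm hgeo in
lemma rk_jn_of_subset_gbasis (w : L → ℕ) (hw : Function.Injective w) (x : L) :
    ∀ S : Finset L, S ⊆ gbasis rk w x → rk (jn S) = #S := by
  intro S
  induction S using Finset.strongInduction with
  | _ S ih =>
    intro hSx
    rcases S.eq_empty_or_nonempty with rfl | hne
    · have hj : jn (∅ : Finset L) = ⊥ := jn_eq_of_isLUB (by simpa using isLUB_empty)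
      rw [hj, h0]; simp
    · obtain ⟨a, haS, hamax⟩ := Finset.exists_max_image S w hne
      set S' := S.erase a with hS'def
      have hS'lt : S' ⊂ S := erase_ssubset haS
      have hS'sub : S' ⊆ gbasis rk w x := (erase_subset a S).trans hSx
      have hIH : rk (jn S') = #S' := ih S' hS'lt hS'sub
      have hubx : ∀ b ∈ S, b ≤ x := fun b hb =>
        atomsBelow_le rk (gbasis_subset_atomsBelow rk w x (hSx hb))
      have hubx' : ∀ b ∈ S', b ≤ x := fun b hb => hubx b (mem_of_mem_erase hb)
      have hamem := hSx haS
      rw [gbasis, mem_filter] at hamem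
      have ha1 : rk a = 1 := ((mem_atomsBelow rk).1 hamem.1).1
      have hprefub : ∀ b ∈ pref rk w x a, b ≤ x := fun b hb =>
        atomsBelow_le rk ((mem_filter.1 hb).1)
      have hS'pref : S' ⊆ pref rk w x a := by
        intro b hb
        have hbS : b ∈ S := mem_of_mem_erase hb
        have hba : b ≠ a := (Finset.mem_erase.1 hb).1
        rw [pref, mem_filter]
        refine ⟨gbasis_subset_atomsBelow rk w x (hSx hbS), ?_⟩
        have h1 : w b ≤ w a := hamax b hbS
        have h2 : w b ≠ w a := fun h => hba (hw h)
        omega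
      have hnle : ¬ a ≤ jn S' := by
        intro hle
        exact hamem.2 (hle.trans (jn_le (u := jn (pref rk w x a))
          (fun b hb => le_jn hprefub (hS'pref hb))))
      have hlub2 : IsLUB ({jn S', a} : Set L) (jn S) := by
        constructor
        · intro z hz
          rcases Set.mem_insert_iff.1 hz with rfl | hz'
          · exact jn_le (u := jn S) (fun b hb => le_jn hubx (mem_of_mem_erase hb))
          · rw [Set.mem_singleton_iff] at hz'
            subst hz'
            exact le_jn hubx haS
        · intro u hu
          have h1 : jn S' ≤ u := hu (Set.mem_insert _ _)
          have h2 : a ≤ u := hu (Set.mem_insert_of_mem _ rfl)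
          refine jn_le (fun b hb => ?_)
          by_cases hba : b = a
          · exact hba ▸ h2
          · exact (le_jn hubx' (Finset.mem_erase.2 ⟨hba, hb⟩)).trans h1
      have hstep : rk (jn S) = rk (jn S') + 1 := rk_sup_step hm hgeo ha1 hnle hlub2
      have hcard : #S' = #S - 1 := by rw [hS'def, card_erase_of_mem haS]
      have hpos : 0 < #S := card_pos.2 hne
      omega

include h0 hm hat hgeo in
lemma card_gbasis (w : L → ℕ) (hw : Function.Injective w) (x : L) :
    #(gbasis rk w x) = rk x := by
  have h1 := rk_jn_of_subset_gbasis h0 hm hgeo w hw x (gbasis rk w x) (Finset.Subset.refl _)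
  rw [jn_gbasis hat] at h1
  omega

include h0 hm hat hgeo in
lemma gbasis_jn_of_subset (w : L → ℕ) (hw : Function.Injective w) {x : L} {S : Finset L}
    (hS : S ⊆ gbasis rk w x) : gbasis rk w (jn S) = S := by
  have hubx : ∀ b ∈ S, b ≤ x := fun b hb =>
    atomsBelow_le rk (gbasis_subset_atomsBelow rk w x (hS hb))
  have hFx : jn S ≤ x := jn_le hubx
  have hSF : S ⊆ gbasis rk w (jn S) := by
    intro a haS
    have hmemx := hS haS
    rw [gbasis, mem_filter] at hmemx ⊢
    refine ⟨(mem_atomsBelow rk).2 ⟨((mem_atomsBelow rk).1 hmemx.1).1, le_jn hubx haS⟩, ?_⟩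
    intro hle
    apply hmemx.2
    refine hle.trans (jn_le (u := jn (pref rk w x a)) ?_)
    intro b hb
    simp only [pref, mem_filter] at hb
    have hbx : b ∈ atomsBelow rk x := (mem_atomsBelow rk).2
      ⟨((mem_atomsBelow rk).1 hb.1).1, (atomsBelow_le rk hb.1).trans hFx⟩
    have hok : ∀ c ∈ pref rk w x a, c ≤ x := by
      intro c hc
      simp only [pref, mem_filter] at hc
      exact atomsBelow_le rk hc.1
    refine le_jn (t := pref rk w x a) (u := x) hok ?_
    simp only [pref, mem_filter]
    exact ⟨hbx, hb.2⟩
  have h1 : rk (jn S) = #S := rk_jn_of_subset_gbasis h0 hm hgeo w hw x S hS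
  have h2 : #(gbasis rk w (jn S)) = rk (jn S) := card_gbasis h0 hm hat hgeo w hw (jn S)
  exact (Finset.eq_of_subset_of_card_le hSF (by omega)).symm

end Lattice2
end KKGeo
namespace KKGeo
section Glue

open Finset
open scoped Classical

variable {L : Type*} [SemilatticeInf L] [OrderBot L] [Fintype L]
variable {rk : L → ℕ}
variable (h0 : rk ⊥ = 0) (hm : RankStrictMono rk) (hat : AtomicRk rk)
  (hgeo : ∀ x y j : L, IsLUB ({x, y} : Set L) j → rk (x ⊓ y) + rk j ≤ rk x + rk y)

include h0 hm hat hgeo in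
theorem main_glue (f : ℕ → ℕ) (hf : ∀ i, f i = Nat.card {p : L | rk p = i}) :
    ∀ k : ℕ, delKKaux (k + 1) (f (k + 1)) ≤ f k := by
  intro k
  set n := Fintype.card L with hn
  set ι : L ≃ Fin n := Fintype.equivFin L with hι
  set w : L → ℕ := fun a => (ι a : ℕ) with hwdef
  have hw : Function.Injective w := fun a b hab => ι.injective (Fin.ext hab)
  set lvl : ℕ → Finset L := fun i => Finset.univ.filter (fun p => rk p = i) with hlvl
  have hlvlmem : ∀ i x, x ∈ lvl i ↔ rk x = i := by
    intro i x; rw [hlvl]; simp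
  have hflvl : ∀ i, f i = #(lvl i) := by
    intro i
    rw [hf i]
    have hset : {p : L | rk p = i} = ((lvl i : Finset L) : Set L) := by
      ext p; simp [hlvl]
    rw [hset, Nat.card_coe_set_eq, Set.ncard_coe_finset]
  set 𝒜 : Finset (Finset (Fin n)) :=
    (lvl (k+1)).image (fun x => (gbasis rk w x).image ι) with h𝒜
  have himg : ∀ T : Finset L, (T.image (fun a => ι a)).image (fun b => ι.symm b) = T := by
    intro T
    rw [Finset.image_image]
    have : (fun b => ι.symm b) ∘ (fun a : L => ι a) = id := by
      funext a; simp
    rw [this, Finset.image_id]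
  have hsized : (𝒜 : Set (Finset (Fin n))).Sized (k+1) := by
    intro A hA
    rw [Finset.mem_coe, h𝒜, Finset.mem_image] at hA
    obtain ⟨x, hx, rfl⟩ := hA
    rw [Finset.card_image_of_injective _ ι.injective,
      card_gbasis h0 hm hat hgeo w hw x]
    exact (hlvlmem _ x).1 hx
  have hcard𝒜 : #𝒜 = f (k+1) := by
    rw [hflvl (k+1), h𝒜]
    apply Finset.card_image_of_injOn
    intro x hx y hy hxy
    have hbxy : gbasis rk w x = gbasis rk w y := by
      have := congrArg (fun T : Finset (Fin n) => T.image (fun b => ι.symm b)) hxy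
      simpa [himg] using this
    calc x = jn (gbasis rk w x) := (jn_gbasis hat w x).symm
      _ = jn (gbasis rk w y) := by rw [hbxy]
      _ = y := jn_gbasis hat w y
  have h1 : delKKaux (k+1) #𝒜 ≤ #(Finset.shadow 𝒜) := delKKaux_le_card_shadow 𝒜 hsized
  -- every element of the shadow comes from a subset of a greedy basis
  have hshape : ∀ T ∈ Finset.shadow 𝒜, ∃ x S, S ⊆ gbasis rk w x ∧ #S = k ∧
      T.image (fun b => ι.symm b) = S ∧ T = S.image (fun a => ι a) := by
    intro T hT
    rw [Finset.mem_shadow_iff] at hT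
    obtain ⟨A, hA𝒜, a, haA, rfl⟩ := hT
    rw [h𝒜, Finset.mem_image] at hA𝒜
    obtain ⟨x, hx, rfl⟩ := hA𝒜
    obtain ⟨b, hb, rfl⟩ := Finset.mem_image.1 haA
    refine ⟨x, (gbasis rk w x).erase b, erase_subset _ _, ?_, ?_, ?_⟩
    · rw [card_erase_of_mem hb, card_gbasis h0 hm hat hgeo w hw x, (hlvlmem _ x).1 hx]
      omega
    · rw [← Finset.image_erase ι.injective, himg]
    · rw [← Finset.image_erase ι.injective]
  have h2 : #(Finset.shadow 𝒜) ≤ #(lvl k) := by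
    apply Finset.card_le_card_of_injOn (fun T => jn (T.image (fun b => ι.symm b)))
    · intro T hT
      obtain ⟨x, S, hSx, hScard, hTS, -⟩ := hshape T hT
      beta_reduce
      rw [Finset.mem_coe, hTS, hlvlmem]
      rw [rk_jn_of_subset_gbasis h0 hm hgeo w hw x S hSx, hScard]
    · intro T1 hT1 T2 hT2 heq
      obtain ⟨x1, S1, hS1, -, hTS1, hT1eq⟩ := hshape T1 (Finset.mem_coe.1 hT1)
      obtain ⟨x2, S2, hS2, -, hTS2, hT2eq⟩ := hshape T2 (Finset.mem_coe.1 hT2)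
      have heq' : jn (T1.image (fun b => ι.symm b)) = jn (T2.image (fun b => ι.symm b)) := heq
      rw [hTS1, hTS2] at heq'
      have hSeq : S1 = S2 := by
        rw [← gbasis_jn_of_subset h0 hm hat hgeo w hw hS1,
          ← gbasis_jn_of_subset h0 hm hat hgeo w hw hS2, heq']
      rw [hT1eq, hT2eq, hSeq]
  calc delKKaux (k+1) (f (k+1)) = delKKaux (k+1) #𝒜 := by rw [hcard𝒜]
    _ ≤ #(Finset.shadow 𝒜) := h1
    _ ≤ #(lvl k) := h2
    _ = f k := (hflvl k).symm

end Glue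
end KKGeo


/-- Every finite geometric meet semi-lattice satisfies the Kruskal–Katona
inequalities `∂_k(f_k) ≤ f_{k-1}` for all `k ≥ 0` (`f i` counts rank-`i`
elements). -/
theorem kruskalKatona_of_geometric {L : Type*} [SemilatticeInf L] [OrderBot L]
    [Fintype L] (rk : L → ℕ) (h0 : rk ⊥ = 0) (hc : CoverRank rk)
    (hm : RankStrictMono rk) (hat : AtomicRk rk)
    (hgeo : ∀ x y j : L, IsLUB ({x, y} : Set L) j →
      rk (x ⊓ y) + rk j ≤ rk x + rk y)
    (f : ℕ → ℕ) (hf : ∀ i, f i = Nat.card {p : L | rk p = i}) :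
    ∀ k : ℕ, delKK k (f (k + 1)) ≤ f k := by
  classical
  intro k
  have h := KKGeo.main_glue h0 hm hat hgeo f hf k
  simpa [delKK] using h
end

section
/- Every finite ranked meet semi-lattice with the diamond property satisfies the Kruskal–Katona inequalities 0 ≤ ∂_k(f_k) ≤ f_{k−1} for all k ≥ 0 (Wegner's theorem). -/
set_option linter.unusedSectionVars false

open scoped FinsetFamily

namespace WegnerAux

lemma le_choose_add {m j : ℕ} (hj : 1 ≤ j) : m ≤ Nat.choose m j + j := by
  induction m with
  | zero => omega
  | succ m ih =>
    rcases le_or_gt (m + 1) j with h | h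
    · omega
    · have hjm : j ≤ m := by omega
      have h1 : 1 ≤ Nat.choose m (j - 1) := Nat.choose_pos (by omega)
      have h2 : Nat.choose (m + 1) j = Nat.choose m (j - 1) + Nat.choose m j := by
        obtain ⟨j', rfl⟩ : ∃ j', j = j' + 1 := ⟨j - 1, by omega⟩
        have := Nat.choose_succ_succ m j'
        simpa using this
      omega

lemma cascadeTop_eq {j m n : ℕ} (hj : 1 ≤ j) (h1 : Nat.choose m j ≤ n)
    (h2 : n < Nat.choose (m + 1) j) : cascadeTop j n = m := by
  classical
  rw [cascadeTop, Nat.findGreatest_eq_iff]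
  refine ⟨?_, fun _ => h1, fun n' hn' _ hle => ?_⟩
  · have := le_choose_add (m := m) hj
    omega
  · have : Nat.choose (m + 1) j ≤ Nat.choose n' j := Nat.choose_mono _ (by omega)
    omega

lemma delKKaux_zero (j : ℕ) : delKKaux j 0 = 0 := by cases j <;> rfl

lemma delKKaux_succ_eq {j m n : ℕ} (hn : 1 ≤ n) (h1 : Nat.choose m (j + 1) ≤ n)
    (h2 : n < Nat.choose (m + 1) (j + 1)) :
    delKKaux (j + 1) n = Nat.choose m j + delKKaux j (n - Nat.choose m (j + 1)) := by
  obtain ⟨n', rfl⟩ : ∃ n', n = n' + 1 := ⟨n - 1, by omega⟩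
  rw [show delKKaux (j + 1) (n' + 1) = Nat.choose (cascadeTop (j + 1) (n' + 1)) j +
      delKKaux j (n' + 1 - Nat.choose (cascadeTop (j + 1) (n' + 1)) (j + 1)) from rfl,
    cascadeTop_eq (by omega) h1 h2]

lemma delKKaux_one {n : ℕ} (hn : 1 ≤ n) : delKKaux 1 n = 1 := by
  rw [delKKaux_succ_eq (m := n) hn (by simp) (by simp)]
  simp [delKKaux_zero]

lemma delKKaux_choose {j m : ℕ} (hj : 1 ≤ j) (hm : j ≤ m) :
    delKKaux j (Nat.choose m j) = Nat.choose m (j - 1) := by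
  obtain ⟨j', rfl⟩ : ∃ j', j = j' + 1 := ⟨j - 1, by omega⟩
  rcases Nat.eq_zero_or_pos j' with rfl | hj'
  · rw [Nat.choose_one_right, delKKaux_one (by omega)]
    simp
  · have h1 : 0 < Nat.choose m (j' + 1) := Nat.choose_pos hm
    have h2 : Nat.choose m (j' + 1) < Nat.choose (m + 1) (j' + 1) := by
      have hP := Nat.choose_succ_succ m j'
      simp only [Nat.succ_eq_add_one] at hP
      have : 0 < Nat.choose m j' := Nat.choose_pos (by omega)
      omega
    rw [delKKaux_succ_eq h1 le_rfl h2, Nat.sub_self, delKKaux_zero]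
    simp

lemma delKK_one (k : ℕ) : delKK k 1 = k + 1 := by
  rw [delKK, delKKaux_succ_eq (m := k + 1) le_rfl (by simp) (by
    rw [Nat.choose_succ_self_right]; omega), Nat.choose_self, Nat.sub_self, delKKaux_zero,
    Nat.choose_succ_self_right]

lemma delKK_zero (k : ℕ) : delKK k 0 = 0 := delKKaux_zero _

lemma delKK_zero' {n : ℕ} (hn : 1 ≤ n) : delKK 0 n = 1 := delKKaux_one hn

/-- The main arithmetic step: `∂_k(C(N,k+1) + d) ≤ C(N,k) + ∂_{k-1}(d)` for `d ≤ C(N,k)`,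
`k+1 ≤ N`. -/
lemma delKK_step {N k d : ℕ} (hk : 1 ≤ k) (hN : k + 1 ≤ N) (hd : d ≤ Nat.choose N k) :
    delKK k (Nat.choose N (k + 1) + d) ≤ Nat.choose N k + delKKaux k d := by
  have hP : Nat.choose (N + 1) (k + 1) = Nat.choose N k + Nat.choose N (k + 1) := by
    have := Nat.choose_succ_succ N k
    simpa using this
  rcases lt_or_eq_of_le hd with hd | rfl
  · have h1 : 1 ≤ Nat.choose N (k + 1) + d := by
      have := Nat.choose_pos (n := N) (k := k + 1) hN; omega
    rw [delKK, delKKaux_succ_eq (m := N) h1 (by omega) (by omega),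
      Nat.add_sub_cancel_left]
  · have hEq : Nat.choose N (k + 1) + Nat.choose N k = Nat.choose (N + 1) (k + 1) := by omega
    rw [delKK, hEq, delKKaux_choose (by omega) (by omega), delKKaux_choose hk (by omega)]
    simp only [Nat.add_sub_cancel]
    obtain ⟨k', rfl⟩ : ∃ k', k = k' + 1 := ⟨k - 1, by omega⟩
    have := Nat.choose_succ_succ N k'
    simp only [Nat.succ_eq_add_one, Nat.add_sub_cancel] at *
    omega



open Finset Finset.Colex

open scoped FinsetFamily

/-- Push a family of finsets of `Fin N` to a family of finsets of `ℕ`. -/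
def famUp {N : ℕ} (𝒜 : Finset (Finset (Fin N))) : Finset (Finset ℕ) :=
  𝒜.image (fun s => s.image Fin.val)

lemma setUp_injective {N : ℕ} : Function.Injective (fun s : Finset (Fin N) => s.image Fin.val) :=
  Finset.image_injective Fin.val_injective

lemma famUp_injective {N : ℕ} : Function.Injective (famUp (N := N)) :=
  Finset.image_injective setUp_injective

lemma card_famUp {N : ℕ} (𝒜 : Finset (Finset (Fin N))) : #(famUp 𝒜) = #𝒜 :=
  Finset.card_image_of_injective _ setUp_injective

lemma mem_famUp_iff {N : ℕ} {𝒜 : Finset (Finset (Fin N))} {s : Finset (Fin N)} :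
    s.image Fin.val ∈ famUp 𝒜 ↔ s ∈ 𝒜 := by
  unfold famUp
  constructor
  · rintro h
    obtain ⟨u, hu, he⟩ := Finset.mem_image.1 h
    rwa [← setUp_injective he]
  · intro h
    exact Finset.mem_image_of_mem _ h

lemma shadow_famUp {N : ℕ} (𝒜 : Finset (Finset (Fin N))) : ∂ (famUp 𝒜) = famUp (∂ 𝒜) := by
  ext t
  simp only [famUp, mem_image, mem_shadow_iff]
  constructor
  · rintro ⟨s, ⟨u, hu, rfl⟩, a, ha, rfl⟩
    obtain ⟨x, hx, rfl⟩ := Finset.mem_image.1 ha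
    exact ⟨u.erase x, ⟨u, hu, x, hx, rfl⟩, Finset.image_erase Fin.val_injective u x⟩
  · rintro ⟨s, ⟨u, hu, x, hx, rfl⟩, rfl⟩
    exact ⟨u.image Fin.val, ⟨u, hu, rfl⟩, Fin.val x,
      Finset.mem_image_of_mem _ hx, (Finset.image_erase Fin.val_injective u x).symm ▸ rfl⟩

lemma sized_famUp {N r : ℕ} {𝒜 : Finset (Finset (Fin N))} :
    Set.Sized r (famUp 𝒜 : Set (Finset ℕ)) ↔ Set.Sized r (𝒜 : Set (Finset (Fin N))) := by
  constructor
  · intro h s hs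
    have := h (Finset.mem_coe.2 (mem_famUp_iff.2 hs))
    rwa [Finset.card_image_of_injective _ Fin.val_injective] at this
  · rintro h s hs
    obtain ⟨u, hu, rfl⟩ := Finset.mem_image.1 hs
    rw [Finset.card_image_of_injective _ Fin.val_injective]
    exact h hu

lemma colex_famUp_le {N : ℕ} {s t : Finset (Fin N)} :
    toColex (s.image Fin.val) ≤ toColex (t.image Fin.val) ↔ toColex s ≤ toColex t :=
  toColex_image_le_toColex_image Fin.val_strictMono

lemma colex_famUp_lt {N : ℕ} {s t : Finset (Fin N)} :
    toColex (s.image Fin.val) < toColex (t.image Fin.val) ↔ toColex s < toColex t :=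
  toColex_image_lt_toColex_image Fin.val_strictMono

/-- A family of `ℕ`-sets all of whose elements are `< N` comes from a family on `Fin N`. -/
lemma exists_famUp {N : ℕ} (𝒜 : Finset (Finset ℕ)) (h : ∀ s ∈ 𝒜, ∀ i ∈ s, i < N) :
    ∃ 𝒜' : Finset (Finset (Fin N)), famUp 𝒜' = 𝒜 := by
  classical
  refine ⟨𝒜.attach.image (fun s => s.1.attachFin (h s.1 s.2)), ?_⟩
  unfold famUp
  rw [Finset.image_image]
  ext t
  simp only [Finset.mem_image, Finset.mem_attach, true_and, Function.comp_apply, Subtype.exists]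
  constructor
  · rintro ⟨s, hs, rfl⟩
    have : (s.attachFin (h s hs)).image Fin.val = s := by
      ext i
      simp only [Finset.mem_image, Finset.mem_attachFin]
      constructor
      · rintro ⟨x, hx, rfl⟩; exact hx
      · intro hi; exact ⟨⟨i, h s hs i hi⟩, hi, rfl⟩
    rw [this]; exact hs
  · intro ht
    refine ⟨t, ht, ?_⟩
    ext i
    simp only [Finset.mem_image, Finset.mem_attachFin]
    constructor
    · rintro ⟨x, hx, rfl⟩; exact hx
    · intro hi; exact ⟨⟨i, h t ht i hi⟩, hi, rfl⟩

lemma isInitSeg_of_famUp {N r : ℕ} {𝒜' : Finset (Finset (Fin N))}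
    (h : IsInitSeg (famUp 𝒜') r) : IsInitSeg 𝒜' r := by
  refine ⟨sized_famUp.1 h.1, fun s t hs ht => ?_⟩
  have h2 : toColex (t.image Fin.val) < toColex (s.image Fin.val) := colex_famUp_lt.2 ht.1
  have h3 : (t.image Fin.val).card = r := by
    rw [Finset.card_image_of_injective _ Fin.val_injective]; exact ht.2
  exact mem_famUp_iff.1 (h.2 (mem_famUp_iff.2 hs) ⟨h2, h3⟩)

lemma isInitSeg_famUp {N r : ℕ} {𝒜' : Finset (Finset (Fin N))}
    (h : IsInitSeg 𝒜' r) : IsInitSeg (famUp 𝒜') r := by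
  refine ⟨sized_famUp.2 h.1, fun s t hs ht => ?_⟩
  obtain ⟨u, hu, rfl⟩ := Finset.mem_image.1 hs
  have hbound : ∀ i ∈ t, i < N := by
    refine forall_lt_mono ht.1.le ?_
    rintro b hb
    obtain ⟨x, hx, rfl⟩ := Finset.mem_image.1 hb
    exact x.2
  obtain ⟨t', rfl⟩ : ∃ t' : Finset (Fin N), Finset.image Fin.val t' = t := by
    obtain ⟨𝒯, h𝒯⟩ := exists_famUp {t} (by simpa using hbound)
    have : t ∈ famUp 𝒯 := h𝒯.symm ▸ Finset.mem_singleton_self t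
    obtain ⟨t', _, rfl⟩ := Finset.mem_image.1 this
    exact ⟨t', rfl⟩
  have h2 : toColex t' < toColex u := colex_famUp_lt.1 ht.1
  have h3 : #t' = r := by
    have := ht.2
    rwa [Finset.card_image_of_injective _ Fin.val_injective] at this
  exact mem_famUp_iff.2 (h.2 hu ⟨h2, h3⟩)

/-- Kruskal–Katona on ground `ℕ`. -/
lemma kk_nat {r N : ℕ} {𝒜 𝒞 : Finset (Finset ℕ)}
    (h𝒜N : ∀ s ∈ 𝒜, ∀ i ∈ s, i < N) (h𝒞N : ∀ s ∈ 𝒞, ∀ i ∈ s, i < N)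
    (h𝒜 : Set.Sized r (𝒜 : Set (Finset ℕ))) (hc : #𝒞 ≤ #𝒜) (h𝒞 : IsInitSeg 𝒞 r) :
    #(∂ 𝒞) ≤ #(∂ 𝒜) := by
  obtain ⟨𝒜', rfl⟩ := exists_famUp 𝒜 h𝒜N
  obtain ⟨𝒞', rfl⟩ := exists_famUp 𝒞 h𝒞N
  rw [shadow_famUp, shadow_famUp, card_famUp, card_famUp]
  exact Finset.kruskal_katona (sized_famUp.1 h𝒜) (by rwa [card_famUp, card_famUp] at hc)
    (isInitSeg_of_famUp h𝒞)

/-- The shadow of a (finite, bounded) initial segment on ground `ℕ` is an initial segment. -/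
lemma isInitSeg_shadow_nat {r N : ℕ} {𝒞 : Finset (Finset ℕ)}
    (h𝒞N : ∀ s ∈ 𝒞, ∀ i ∈ s, i < N) (h𝒞 : IsInitSeg 𝒞 r) : IsInitSeg (∂ 𝒞) (r - 1) := by
  obtain ⟨𝒞', rfl⟩ := exists_famUp 𝒞 h𝒞N
  rw [shadow_famUp]
  exact isInitSeg_famUp ((isInitSeg_of_famUp h𝒞).shadow)



open Finset Finset.Colex

open scoped FinsetFamily

lemma ofColex_injective {α : Type*} : Function.Injective (ofColex : Colex (Finset α) → Finset α) :=
  ofColex.injective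

/-- There is an initial segment with the same cardinality and smaller shadow than any given
sized family over `ℕ`. -/
lemma exists_initSeg_of_family {r : ℕ} (𝒜 : Finset (Finset ℕ))
    (h𝒜 : Set.Sized r (𝒜 : Set (Finset ℕ))) :
    ∃ 𝒞 : Finset (Finset ℕ), IsInitSeg 𝒞 r ∧ #𝒞 = #𝒜 ∧ #(∂ 𝒞) ≤ #(∂ 𝒜) := by
  classical
  set N : ℕ := 𝒜.sup (fun s => s.sup id + 1) with hN
  have hbound : ∀ s ∈ 𝒜, ∀ i ∈ s, i < N := by
    intro s hs i hi
    have h1 : i ≤ s.sup id := Finset.le_sup (f := id) hi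
    have h2 : s.sup id + 1 ≤ N := Finset.le_sup (f := fun s => s.sup id + 1) hs
    omega
  set pool : Finset (Finset ℕ) := Finset.powersetCard r (Finset.range N) with hpool
  have h𝒜pool : 𝒜 ⊆ pool := by
    intro s hs
    rw [hpool, Finset.mem_powersetCard]
    exact ⟨fun i hi => Finset.mem_range.2 (hbound s hs i hi), h𝒜 hs⟩
  set pool' : Finset (Colex (Finset ℕ)) := pool.image toColex with hpool'
  set L : List (Colex (Finset ℕ)) := pool'.sort (· ≤ ·) with hL
  set n := #𝒜 with hn
  have hlenL : n ≤ L.length := by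
    rw [hL, Finset.length_sort, hpool', Finset.card_image_of_injective _ toColex.injective]
    exact Finset.card_le_card h𝒜pool
  set 𝒞 : Finset (Finset ℕ) := ((L.take n).map ofColex).toFinset with h𝒞
  have hnodup : ((L.take n).map ofColex).Nodup :=
    (((Finset.sort_nodup _ _).sublist (List.take_sublist _ _))).map ofColex_injective
  have hcard : #𝒞 = n := by
    rw [h𝒞, List.toFinset_card_of_nodup hnodup, List.length_map, List.length_take]
    omega
  have hmem : ∀ t : Finset ℕ, t ∈ 𝒞 ↔ toColex t ∈ L.take n := by
    intro t
    rw [h𝒞, List.mem_toFinset, List.mem_map]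
    constructor
    · rintro ⟨c, hc, rfl⟩
      exact hc
    · intro h
      exact ⟨toColex t, h, rfl⟩
  have hpoolmem : ∀ t : Finset ℕ, t ∈ 𝒞 → t ∈ pool := by
    intro t ht
    have h1 : toColex t ∈ L := (List.take_sublist _ _).mem ((hmem t).1 ht)
    rw [hL, Finset.mem_sort, hpool'] at h1
    obtain ⟨u, hu, he⟩ := Finset.mem_image.1 h1
    rwa [show u = t from congrArg ofColex he] at hu
  have hsized : Set.Sized r (𝒞 : Set (Finset ℕ)) := by
    intro t ht
    exact (Finset.mem_powersetCard.1 (hpoolmem t ht)).2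
  have h𝒞bound : ∀ s ∈ 𝒞, ∀ i ∈ s, i < N := by
    intro s hs i hi
    exact Finset.mem_range.1 ((Finset.mem_powersetCard.1 (hpoolmem s hs)).1 hi)
  have hinit : IsInitSeg 𝒞 r := by
    refine ⟨hsized, fun s t hs ht => ?_⟩
    have htbound : ∀ i ∈ t, i < N := forall_lt_mono ht.1.le (h𝒞bound s hs)
    have htpool : t ∈ pool := by
      rw [hpool, Finset.mem_powersetCard]
      exact ⟨fun i hi => Finset.mem_range.2 (htbound i hi), ht.2⟩
    have htL : toColex t ∈ L := by
      rw [hL, Finset.mem_sort, hpool']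
      exact Finset.mem_image_of_mem _ htpool
    rw [hmem]
    rcases (List.mem_append.1 (show toColex t ∈ L.take n ++ L.drop n by
        rw [List.take_append_drop]; exact htL)) with h | h
    · exact h
    · exfalso
      have hsorted : L.Pairwise (· ≤ ·) := Finset.pairwise_sort _ _
      have := hsorted.rel_of_mem_take_of_mem_drop ((hmem s).1 hs) h
      exact absurd this (not_le.2 ht.1)
  refine ⟨𝒞, hinit, hcard, ?_⟩
  exact kk_nat hbound h𝒞bound h𝒜 (le_of_eq hcard) hinit



lemma colex_insert_lt {a : ℕ} {s t : Finset ℕ} (hs : ∀ b ∈ s, b < a) (ht : ∀ b ∈ t, b < a)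
    (h : toColex s < toColex t) : toColex (insert a s) < toColex (insert a t) := by
  rw [toColex_lt_toColex] at h ⊢
  obtain ⟨hne, hch⟩ := h
  constructor
  · intro he
    apply hne
    have h1 : s = (insert a s).erase a := by
      rw [Finset.erase_insert (fun hc => lt_irrefl a (hs a hc))]
    have h2 : t = (insert a t).erase a := by
      rw [Finset.erase_insert (fun hc => lt_irrefl a (ht a hc))]
    rw [h1, h2, he]
  · intro x hx hxt
    have hxa : x ≠ a := fun he => hxt (he ▸ Finset.mem_insert_self a t)
    have hxs : x ∈ s := (Finset.mem_insert.1 hx).resolve_left hxa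
    obtain ⟨b, hb, hbs, hxb⟩ := hch hxs (fun hc => hxt (Finset.mem_insert_of_mem hc))
    exact ⟨b, Finset.mem_insert_of_mem hb, fun hc =>
      hbs ((Finset.mem_insert.1 hc).resolve_left (fun he => lt_irrefl a (he ▸ ht b hb)) ),
      hxb⟩

lemma colex_lt_of_topmem {a : ℕ} {s t : Finset ℕ} (hs : ∀ b ∈ s, b < a) (hat : a ∈ t) :
    toColex s < toColex t := by
  rw [toColex_lt_toColex]
  constructor
  · intro he
    exact lt_irrefl a (hs a (he ▸ hat))
  · intro x hx hxt
    exact ⟨a, hat, fun hc => lt_irrefl a (hs a hc), (hs x hx).le⟩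

/-- Shadow of an initial segment is at least the Kruskal–Katona bound. -/
lemma delKK_le_shadow_initSeg :
    ∀ N k : ℕ, ∀ 𝒞 : Finset (Finset ℕ), (∀ s ∈ 𝒞, ∀ i ∈ s, i < N) →
      IsInitSeg 𝒞 (k + 1) → delKK k #𝒞 ≤ #(∂ 𝒞) := by
  intro N
  induction N with
  | zero =>
    intro k 𝒞 hbound hinit
    have : 𝒞 = ∅ := by
      rw [Finset.eq_empty_iff_forall_notMem]
      intro s hs
      have h1 : #s = k + 1 := hinit.1 hs
      obtain ⟨i, hi⟩ := Finset.card_pos.1 (by rw [h1]; exact Nat.succ_pos k)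
      exact absurd (hbound s hs i hi) (by omega)
    simp [this, delKK_zero]
  | succ N ih =>
    intro k 𝒞 hbound hinit
    classical
    rcases 𝒞.eq_empty_or_nonempty with rfl | hne
    · simp [delKK_zero]
    rcases k with _ | k
    -- k = 0
    · rw [delKK_zero' (Finset.card_pos.2 hne)]
      obtain ⟨s, hs⟩ := hne
      obtain ⟨a, rfl⟩ := Finset.card_eq_one.1 (hinit.1 hs)
      refine Finset.card_pos.2 ⟨∅, Finset.mem_shadow_iff_insert_mem.2 ⟨a, by simp, by simpa using hs⟩⟩
    -- k + 1 ≥ 1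
    set 𝒞top := 𝒞.filter (fun s => N ∈ s) with h𝒞top
    rcases 𝒞top.eq_empty_or_nonempty with hTe | ⟨tstar, htstar⟩
    · -- no set contains N : recurse on N
      refine ih (k + 1) 𝒞 ?_ hinit
      intro s hs i hi
      have h1 : i < N + 1 := hbound s hs i hi
      have h2 : i ≠ N := by
        rintro rfl
        rw [Finset.eq_empty_iff_forall_notMem] at hTe
        exact hTe s (Finset.mem_filter.2 ⟨hs, hi⟩)
      omega
    have htsC : tstar ∈ 𝒞 := (Finset.mem_filter.1 htstar).1
    have htsN : N ∈ tstar := (Finset.mem_filter.1 htstar).2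
    have hcardts : #tstar = k + 2 := hinit.1 htsC
    have hsub : tstar ⊆ Finset.range (N + 1) := fun i hi => Finset.mem_range.2 (hbound _ htsC i hi)
    have hkN : k + 2 ≤ N + 1 := by
      have := Finset.card_le_card hsub
      rwa [hcardts, Finset.card_range] at this
    rcases eq_or_lt_of_le hkN with hfull | hklt
    · -- k + 2 = N + 1 : 𝒞 = {range (N+1)}
      have h𝒞eq : 𝒞 = {Finset.range (N + 1)} := by
        apply Finset.eq_singleton_iff_nonempty_unique_mem.2
        refine ⟨hne, fun s hs => ?_⟩
        have h1 : s ⊆ Finset.range (N + 1) := fun i hi => Finset.mem_range.2 (hbound s hs i hi)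
        apply Finset.eq_of_subset_of_card_le h1
        rw [Finset.card_range, hinit.1 hs]
        omega
      have hsh : (Finset.range (N + 1)).image (fun a => (Finset.range (N + 1)).erase a) ⊆ ∂ 𝒞 := by
        intro u hu
        obtain ⟨a, ha, rfl⟩ := Finset.mem_image.1 hu
        exact Finset.mem_shadow_iff.2 ⟨Finset.range (N + 1), by simp [h𝒞eq], a, ha, rfl⟩
      have hcardim : #((Finset.range (N + 1)).image (fun a => (Finset.range (N + 1)).erase a))
          = N + 1 := by
        rw [Finset.card_image_of_injOn, Finset.card_range]
        intro a ha b hb he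
        simp only at he
        by_contra hab
        have : a ∈ (Finset.range (N + 1)).erase b := Finset.mem_erase.2 ⟨hab, ha⟩
        rw [← he] at this
        exact (Finset.mem_erase.1 this).1 rfl
      have h1 : #𝒞 = 1 := by rw [h𝒞eq]; simp
      rw [h1, delKK_one]
      have := Finset.card_le_card hsh
      omega
    -- main case : k + 2 ≤ N
    have hkN' : k + 2 ≤ N := by omega
    set ℬ := 𝒞.filter (fun s => N ∉ s) with hℬ
    have hpw : Finset.powersetCard (k + 2) (Finset.range N) ⊆ 𝒞 := by
      intro u hu
      obtain ⟨husub, hucard⟩ := Finset.mem_powersetCard.1 hu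
      have hub : ∀ b ∈ u, b < N := fun b hb => Finset.mem_range.1 (husub hb)
      exact hinit.2 htsC ⟨colex_lt_of_topmem hub htsN, hucard⟩
    have hBeq : ℬ = Finset.powersetCard (k + 2) (Finset.range N) := by
      apply Finset.Subset.antisymm
      · intro s hs
        obtain ⟨hsC, hsN⟩ := Finset.mem_filter.1 hs
        refine Finset.mem_powersetCard.2 ⟨fun i hi => Finset.mem_range.2 ?_, hinit.1 hsC⟩
        have h1 : i < N + 1 := hbound s hsC i hi
        have h2 : i ≠ N := fun he => hsN (he ▸ hi)
        omega
      · intro u hu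
        refine Finset.mem_filter.2 ⟨hpw hu, fun hc => ?_⟩
        have := Finset.mem_range.1 ((Finset.mem_powersetCard.1 hu).1 hc)
        omega
    set 𝒟 := 𝒞top.image (fun s => s.erase N) with h𝒟
    have h𝒟card : #𝒟 = #𝒞top := by
      rw [h𝒟]
      apply Finset.card_image_of_injOn
      intro s hs t ht he
      simp only at he
      have h1 : N ∈ s := (Finset.mem_filter.1 hs).2
      have h2 : N ∈ t := (Finset.mem_filter.1 ht).2
      rw [← Finset.insert_erase h1, ← Finset.insert_erase h2, he]
    have h𝒟sub : ∀ w ∈ 𝒟, w ⊆ Finset.range N ∧ #w = k + 1 := by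
      intro w hw
      obtain ⟨s, hs, rfl⟩ := Finset.mem_image.1 hw
      have hsC := (Finset.mem_filter.1 hs).1
      have hsN := (Finset.mem_filter.1 hs).2
      constructor
      · intro i hi
        have h1 : i < N + 1 := hbound s hsC i (Finset.mem_of_mem_erase hi)
        have h2 : i ≠ N := (Finset.mem_erase.1 hi).1
        exact Finset.mem_range.2 (by omega)
      · rw [Finset.card_erase_of_mem hsN, hinit.1 hsC]
        omega
    have hd : #𝒟 ≤ Nat.choose N (k + 1) := by
      have : 𝒟 ⊆ Finset.powersetCard (k + 1) (Finset.range N) := by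
        intro w hw
        exact Finset.mem_powersetCard.2 ⟨(h𝒟sub w hw).1, (h𝒟sub w hw).2⟩
      have := Finset.card_le_card this
      rwa [Finset.card_powersetCard, Finset.card_range] at this
    have h𝒟init : IsInitSeg 𝒟 (k + 1) := by
      refine ⟨fun w hw => (h𝒟sub w hw).2, fun s' t hs' ht => ?_⟩
      obtain ⟨s, hs, rfl⟩ := Finset.mem_image.1 hs'
      have hsC := (Finset.mem_filter.1 hs).1
      have hsN := (Finset.mem_filter.1 hs).2
      have hs'b : ∀ b ∈ s.erase N, b < N := fun b hb => by
        have := Finset.mem_range.1 ((h𝒟sub _ hs').1 hb); omega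
      have htb : ∀ b ∈ t, b < N := forall_lt_mono ht.1.le hs'b
      have hNt : N ∉ t := fun hc => lt_irrefl N (htb N hc)
      have hlt : toColex (insert N t) < toColex s := by
        have := colex_insert_lt htb hs'b ht.1
        rwa [Finset.insert_erase hsN] at this
      have hcard : #(insert N t) = k + 2 := by
        rw [Finset.card_insert_of_notMem hNt, ht.2]
      have hmem : insert N t ∈ 𝒞 := hinit.2 hsC ⟨hlt, hcard⟩
      refine Finset.mem_image.2 ⟨insert N t, Finset.mem_filter.2 ⟨hmem, Finset.mem_insert_self _ _⟩, ?_⟩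
      rw [Finset.erase_insert hNt]
    have h𝒟bound : ∀ w ∈ 𝒟, ∀ i ∈ w, i < N := by
      intro w hw i hi
      exact Finset.mem_range.1 ((h𝒟sub w hw).1 hi)
    have hIH : delKK k #𝒟 ≤ #(∂ 𝒟) := ih k 𝒟 h𝒟bound h𝒟init
    -- shadow pieces
    have hS1 : Finset.powersetCard (k + 1) (Finset.range N) ⊆ ∂ 𝒞 := by
      intro u hu
      obtain ⟨husub, hucard⟩ := Finset.mem_powersetCard.1 hu
      obtain ⟨v, huv, hvsub, hvcard⟩ := Finset.exists_subsuperset_card_eq husub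
        (by omega : #u ≤ k + 2) (by rw [Finset.card_range]; omega)
      exact Finset.mem_shadow_iff_exists_mem_card_add_one.2
        ⟨v, hpw (Finset.mem_powersetCard.2 ⟨hvsub, hvcard⟩), huv, by omega⟩
    have hS2 : (∂ 𝒟).image (fun w => insert N w) ⊆ ∂ 𝒞 := by
      intro u hu
      obtain ⟨w, hw, rfl⟩ := Finset.mem_image.1 hu
      obtain ⟨x, hxw, hxmem⟩ := Finset.mem_shadow_iff_insert_mem.1 hw
      obtain ⟨s, hs, hse⟩ := Finset.mem_image.1 hxmem
      have hsC := (Finset.mem_filter.1 hs).1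
      have hsN := (Finset.mem_filter.1 hs).2
      have hxN : x ≠ N := by
        intro he
        have : x ∈ s.erase N := hse ▸ Finset.mem_insert_self x w
        exact (Finset.mem_erase.1 this).1 he
      refine Finset.mem_shadow_iff_insert_mem.2 ⟨x, ?_, ?_⟩
      · intro hc
        rcases Finset.mem_insert.1 hc with h | h
        · exact hxN h
        · exact hxw h
      · have hcomm : insert x (insert N w) = insert N (insert x w) := Finset.insert_comm x N w
        rw [hcomm, ← hse, Finset.insert_erase hsN]
        exact hsC
    have hS2card : #((∂ 𝒟).image (fun w => insert N w)) = #(∂ 𝒟) := by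
      apply Finset.card_image_of_injOn
      intro w1 hw1 w2 hw2 he
      simp only at he
      have hN1 : N ∉ w1 := by
        obtain ⟨s1, hs1, x1, hx1, rfl⟩ := Finset.mem_shadow_iff.1 hw1
        intro hc
        exact absurd (h𝒟bound s1 hs1 N (Finset.mem_of_mem_erase hc)) (lt_irrefl N)
      have hN2 : N ∉ w2 := by
        obtain ⟨s2, hs2, x2, hx2, rfl⟩ := Finset.mem_shadow_iff.1 hw2
        intro hc
        exact absurd (h𝒟bound s2 hs2 N (Finset.mem_of_mem_erase hc)) (lt_irrefl N)
      rw [← Finset.erase_insert hN1, ← Finset.erase_insert hN2, he]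
    have hdisj : Disjoint (Finset.powersetCard (k + 1) (Finset.range N))
        ((∂ 𝒟).image (fun w => insert N w)) := by
      rw [Finset.disjoint_left]
      intro u hu hc
      obtain ⟨w, hw, rfl⟩ := Finset.mem_image.1 hc
      have : N ∈ Finset.range N := (Finset.mem_powersetCard.1 hu).1 (Finset.mem_insert_self N w)
      exact absurd (Finset.mem_range.1 this) (lt_irrefl N)
    have hcount : Nat.choose N (k + 1) + #(∂ 𝒟) ≤ #(∂ 𝒞) := by
      have h1 : Finset.powersetCard (k + 1) (Finset.range N) ∪
          (∂ 𝒟).image (fun w => insert N w) ⊆ ∂ 𝒞 := Finset.union_subset hS1 hS2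
      have h2 := Finset.card_le_card h1
      rw [Finset.card_union_of_disjoint hdisj, hS2card, Finset.card_powersetCard,
        Finset.card_range] at h2
      exact h2
    -- cardinality of 𝒞
    have hCcard : #𝒞 = Nat.choose N (k + 2) + #𝒟 := by
      have h1 := Finset.card_filter_add_card_filter_not (s := 𝒞) (p := fun s => N ∉ s)
      have h2 : #ℬ = Nat.choose N (k + 2) := by
        rw [hBeq, Finset.card_powersetCard, Finset.card_range]
      simp only [not_not] at h1
      rw [← h𝒞top, ← hℬ] at h1
      rw [h𝒟card]
      omega
    rw [hCcard]
    calc delKK (k + 1) (Nat.choose N (k + 2) + #𝒟)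
        ≤ Nat.choose N (k + 1) + delKKaux (k + 1) #𝒟 :=
          delKK_step (by omega) (by omega) hd
      _ ≤ Nat.choose N (k + 1) + #(∂ 𝒟) := by
          have : delKKaux (k + 1) #𝒟 = delKK k #𝒟 := rfl
          omega
      _ ≤ #(∂ 𝒞) := hcount


lemma exists_bound (𝒞 : Finset (Finset ℕ)) : ∃ N, ∀ s ∈ 𝒞, ∀ i ∈ s, i < N := by
  refine ⟨𝒞.sup (fun s => s.sup id + 1), fun s hs i hi => ?_⟩
  have h1 : i ≤ s.sup id := Finset.le_sup (f := id) hi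
  have h2 : s.sup id + 1 ≤ 𝒞.sup (fun s => s.sup id + 1) :=
    Finset.le_sup (f := fun s => s.sup id + 1) hs
  omega

/-- Kruskal–Katona lower bound for the shadow of any sized family over `ℕ`. -/
lemma delKK_le_card_shadow {k : ℕ} (𝒜 : Finset (Finset ℕ))
    (h : Set.Sized (k + 1) (𝒜 : Set (Finset ℕ))) : delKK k #𝒜 ≤ #(∂ 𝒜) := by
  obtain ⟨𝒞, hinit, hcard, hsh⟩ := exists_initSeg_of_family 𝒜 h
  obtain ⟨N, hN⟩ := exists_bound 𝒞
  calc delKK k #𝒜 = delKK k #𝒞 := by rw [hcard]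
    _ ≤ #(∂ 𝒞) := delKK_le_shadow_initSeg N k 𝒞 hN hinit
    _ ≤ #(∂ 𝒜) := hsh


section Poset

variable {P : Type*} [SemilatticeInf P] [OrderBot P] [Fintype P] {rk : P → ℕ}
variable (h0 : rk ⊥ = 0) (hc : CoverRank rk) (hm : RankStrictMono rk) (hd : DiamondProp rk)

include h0 hm in
lemma bot_of_rank_zero {p : P} (hp : rk p = 0) : p = ⊥ := by
  by_contra h
  have h1 : (⊥ : P) < p := Ne.bot_lt' (Ne.symm h)
  have := hm _ _ h1
  omega

include hc hm h0 in
lemma exists_rank_pred {y : P} (hy : 1 ≤ rk y) : ∃ w, w ⋖ y ∧ rk w = rk y - 1 := by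
  classical
  have hne : (Finset.univ.filter (fun p => p < y)).Nonempty := by
    refine ⟨⊥, Finset.mem_filter.2 ⟨Finset.mem_univ _, ?_⟩⟩
    refine Ne.bot_lt' (fun he => ?_)
    rw [← he] at hy
    omega
  obtain ⟨w, hw, hmax⟩ := Finset.exists_maximal hne
  have hwy : w < y := (Finset.mem_filter.1 hw).2
  have hcov : w ⋖ y := ⟨hwy, fun z hz1 hz2 =>
    lt_irrefl _ (hz1.trans_le (hmax (Finset.mem_filter.2 ⟨Finset.mem_univ _, hz2⟩) hz1.le))⟩
  exact ⟨w, hcov, by have := hc _ _ hcov; omega⟩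

include h0 hc hm in
lemma exists_rank_one {y : P} (hy : 1 ≤ rk y) : ∃ a, rk a = 1 ∧ a ≤ y := by
  obtain ⟨n, hn⟩ : ∃ n, rk y = n := ⟨rk y, rfl⟩
  induction n using Nat.strong_induction_on generalizing y with
  | _ n ih =>
    rcases eq_or_lt_of_le hy with h1 | h1
    · exact ⟨y, h1.symm, le_rfl⟩
    · obtain ⟨w, hcov, hw⟩ := exists_rank_pred h0 hc hm (by omega : 1 ≤ rk y)
      obtain ⟨a, ha1, ha2⟩ := ih (rk w) (by omega) (y := w) (by omega) rfl
      exact ⟨a, ha1, ha2.trans hcov.1.le⟩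

include hm in
lemma meet_of_two {u w1 w2 : P} (hu1 : u ≤ w1) (hu2 : u ≤ w2) (hne : w1 ≠ w2)
    (hr1 : rk w1 = rk u + 1) (hr2 : rk w2 = rk u + 1) : w1 ⊓ w2 = u := by
  have h1 : u ≤ w1 ⊓ w2 := le_inf hu1 hu2
  have h2 : w1 ⊓ w2 ≠ w1 := by
    intro he
    have h3 : w1 ≤ w2 := he ▸ inf_le_right
    rcases eq_or_lt_of_le h3 with h4 | h4
    · exact hne h4
    · have := hm _ _ h4; omega
  have h3 : w1 ⊓ w2 < w1 := lt_of_le_of_ne inf_le_left h2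
  have h4 := hm _ _ h3
  rcases eq_or_lt_of_le h1 with h5 | h5
  · exact h5.symm
  · have := hm _ _ h5; omega

include h0 hc hm hd in
/-- The escape lemma: below any `y ≥ a` of rank `≥ 2` there is a corank-one element avoiding the
atom `a`. -/
lemma escape {a : P} (ha : rk a = 1) :
    ∀ n, 2 ≤ n → ∀ y : P, rk y = n → a ≤ y → ∃ w, w < y ∧ rk w = n - 1 ∧ ¬ a ≤ w := by
  intro n
  induction n using Nat.strong_induction_on with
  | _ n ih =>
    intro hn y hyn hay
    have hybot : (⊥ : P) < y := by
      refine Ne.bot_lt' (fun he => ?_)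
      rw [← he] at hyn
      omega
    -- find u < y with rk u = n - 2 and ¬ a ≤ u  (or short-circuit)
    have hstep : (∃ w, w < y ∧ rk w = n - 1 ∧ ¬ a ≤ w) ∨
        (∃ u, u < y ∧ rk u = n - 2 ∧ ¬ a ≤ u) := by
      rcases eq_or_lt_of_le hn with h2 | h3
      · refine Or.inr ⟨⊥, hybot, ?_, ?_⟩
        · omega
        · intro hab
          have := le_bot_iff.1 hab
          rw [this] at ha
          omega
      · -- n ≥ 3
        obtain ⟨w0, hcov, hw0⟩ := exists_rank_pred h0 hc hm (by omega : 1 ≤ rk y)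
        by_cases hcase : a ≤ w0
        · obtain ⟨u, hu1, hu2, hu3⟩ := ih (n - 1) (by omega) (by omega) w0 (by omega) hcase
          exact Or.inr ⟨u, hu1.trans hcov.1, by omega, hu3⟩
        · exact Or.inl ⟨w0, hcov.1, by omega, hcase⟩
    rcases hstep with h | ⟨u, hu1, hu2, hu3⟩
    · exact h
    · obtain ⟨w1, w2, hne, hw1, hw2⟩ := hd u y hu1 (by omega)
      have hrk1 : rk w1 = n - 1 := by
        have ha1 := hm _ _ hw1.1
        have ha2 := hm _ _ hw1.2
        omega
      have hrk2 : rk w2 = n - 1 := by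
        have ha1 := hm _ _ hw2.1
        have ha2 := hm _ _ hw2.2
        omega
      by_cases hc1 : a ≤ w1
      · by_cases hc2 : a ≤ w2
        · exfalso
          have hmeet : w1 ⊓ w2 = u :=
            meet_of_two hm hw1.1.le hw2.1.le hne (by omega) (by omega)
          exact hu3 (hmeet ▸ le_inf hc1 hc2)
        · exact ⟨w2, hw2.2, hrk2, hc2⟩
      · exact ⟨w1, hw1.2, hrk1, hc1⟩

end Poset


section Subtype

variable {P : Type*} [SemilatticeInf P] [OrderBot P] [Fintype P] {rk : P → ℕ}
variable {q : P → Prop}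

lemma subtype_covby (hbet : ∀ {x y z : P}, q x → q y → x < z → z < y → q z)
    {x y : {p // q p}} (h : x ⋖ y) : x.1 ⋖ y.1 := by
  refine ⟨h.1, fun z hz1 hz2 => ?_⟩
  have hzq : q z := hbet x.2 y.2 hz1 hz2
  have h3 : x < ⟨z, hzq⟩ := Subtype.coe_lt_coe.1 hz1
  have h4 : ¬ ((⟨z, hzq⟩ : {p // q p}) < y) := h.2 h3
  exact h4 (Subtype.coe_lt_coe.1 hz2)

lemma subtype_mid (hd : DiamondProp rk) (hbet : ∀ {x y z : P}, q x → q y → x < z → z < y → q z)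
    {x y : {p // q p}} (hxy : x.1 < y.1) (hr : rk y.1 = rk x.1 + 2) :
    ∃ w1 w2 : {p // q p}, w1 ≠ w2 ∧ w1 ∈ Set.Ioo x y ∧ w2 ∈ Set.Ioo x y := by
  obtain ⟨w1, w2, hne, hw1, hw2⟩ := hd x.1 y.1 hxy hr
  refine ⟨⟨w1, hbet x.2 y.2 hw1.1 hw1.2⟩, ⟨w2, hbet x.2 y.2 hw2.1 hw2.2⟩,
    fun he => hne (congrArg Subtype.val he), ⟨hw1.1, hw1.2⟩, ⟨hw2.1, hw2.2⟩⟩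

lemma ncard_split (q X : P → Prop) :
    Nat.card {p : P | X p} = Nat.card {p : P | q p ∧ X p} + Nat.card {p : P | ¬ q p ∧ X p} := by
  classical
  have e0 : {p : P | X p} ≃ {p : P // X p} := Equiv.subtypeEquivRight fun _ => Iff.rfl
  have e : {x : {p : P // X p} // q x.1} ⊕ {x : {p : P // X p} // ¬ q x.1} ≃ {p : P // X p} :=
    Equiv.sumCompl _
  have e1 : {x : {p : P // X p} // q x.1} ≃ {p : P | q p ∧ X p} :=
    (Equiv.subtypeSubtypeEquivSubtypeInter X q).trans
      (Equiv.subtypeEquivRight fun p => and_comm)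
  have e2 : {x : {p : P // X p} // ¬ q x.1} ≃ {p : P | ¬ q p ∧ X p} :=
    (Equiv.subtypeSubtypeEquivSubtypeInter X (fun p => ¬ q p)).trans
      (Equiv.subtypeEquivRight fun p => and_comm)
  calc Nat.card {p : P | X p} = Nat.card ({x : {p : P // X p} // q x.1} ⊕
      {x : {p : P // X p} // ¬ q x.1}) := by rw [Nat.card_congr (e.trans e0.symm)]
    _ = _ := by rw [Nat.card_sum, Nat.card_congr e1, Nat.card_congr e2]

lemma ncard_subtype_eq (X : P → Prop) (Y : {p // q p} → Prop)
    (hXY : ∀ x : {p // q p}, Y x ↔ X x.1) :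
    Nat.card {x : {p // q p} | Y x} = Nat.card {p : P | q p ∧ X p} := by
  classical
  have e1 : {x : {p // q p} | Y x} ≃ {x : {p // q p} // X x.1} :=
    Equiv.subtypeEquivRight fun x => hXY x
  exact Nat.card_congr (e1.trans (Equiv.subtypeSubtypeEquivSubtypeInter q X))

end Subtype


section Main

universe u

variable {P : Type u} [SemilatticeInf P] [OrderBot P] [Fintype P] {rk : P → ℕ}
variable (h0 : rk ⊥ = 0) (hc : CoverRank rk) (hm : RankStrictMono rk) (hd : DiamondProp rk)

include h0 hc hm hd in
lemma card_inj {a : P} (ha : rk a = 1) (k : ℕ) :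
    Nat.card {p : P | a ≤ p ∧ rk p = k + 2} ≤ Nat.card {p : P | ¬ a ≤ p ∧ rk p = k + 1} := by
  classical
  have hch : ∀ y : {p : P | a ≤ p ∧ rk p = k + 2},
      ∃ w, w < y.1 ∧ rk w = k + 1 ∧ ¬ a ≤ w := by
    intro y
    obtain ⟨w, hw1, hw2, hw3⟩ := escape h0 hc hm hd ha (k + 2) (by omega) y.1 y.2.2 y.2.1
    exact ⟨w, hw1, by omega, hw3⟩
  choose g hg1 hg2 hg3 using hch
  have hinj : Function.Injective
      (fun y : {p : P | a ≤ p ∧ rk p = k + 2} =>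
        (⟨g y, hg3 y, hg2 y⟩ : {p : P | ¬ a ≤ p ∧ rk p = k + 1})) := by
    intro y1 y2 he
    simp only [Subtype.mk.injEq] at he
    by_contra hne
    have hvne : y1.1 ≠ y2.1 := fun h => hne (Subtype.ext h)
    set m := y1.1 ⊓ y2.1 with hmdef
    have hwm : g y1 ≤ m := le_inf (hg1 y1).le (he ▸ (hg1 y2).le)
    have hmne : m ≠ y1.1 := by
      intro hEq
      have h3 : y1.1 ≤ y2.1 := hEq ▸ inf_le_right
      rcases eq_or_lt_of_le h3 with h4 | h4
      · exact hvne h4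
      · have := hm _ _ h4
        have e1 := y1.2.2
        have e2 := y2.2.2
        omega
    have hmlt : m < y1.1 := lt_of_le_of_ne inf_le_left hmne
    have hrkm : rk m < k + 2 := by
      have := hm _ _ hmlt
      have := y1.2.2
      omega
    have hweq : g y1 = m := by
      rcases eq_or_lt_of_le hwm with h4 | h4
      · exact h4
      · have := hm _ _ h4
        have := hg2 y1
        omega
    have ham : a ≤ m := le_inf y1.2.1 y2.2.1
    exact hg3 y1 (hweq ▸ ham)
  exact Nat.card_le_card_of_injective _ hinj

include h0 hc hm hd in
lemma level_nonempty_rank_one (hk : ∃ p : P, 1 ≤ rk p) : ∃ a : P, rk a = 1 := by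
  obtain ⟨y, hy⟩ := hk
  obtain ⟨a, ha, _⟩ := exists_rank_one h0 hc hm hy
  exact ⟨a, ha⟩

end Main

/-- Main induction: existence of a witnessing set family for each level pair. -/
lemma aux (c : ℕ) : ∀ (P : Type u) [SemilatticeInf P] [OrderBot P] [Fintype P] (rk : P → ℕ),
    Fintype.card P ≤ c → rk ⊥ = 0 → CoverRank rk → RankStrictMono rk → DiamondProp rk →
    ∀ k : ℕ, ∃ 𝒜 : Finset (Finset ℕ),
      Set.Sized (k + 1) (𝒜 : Set (Finset ℕ)) ∧ #𝒜 = Nat.card {p : P | rk p = k + 1} ∧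
      #(∂ 𝒜) ≤ Nat.card {p : P | rk p = k} := by
  induction c with
  | zero =>
    intro P _ _ _ rk hcard h0 hc hm hd k
    have : 0 < Fintype.card P := Fintype.card_pos_iff.2 ⟨⊥⟩
    omega
  | succ c ih =>
    intro P instSI instOB instFT rk hcard h0 hc hm hd k
    classical
    rcases k with _ | k
    · -- k = 0 : singletons
      refine ⟨(Finset.range (Nat.card {p : P | rk p = 1})).image (fun i => ({i} : Finset ℕ)),
        ?_, ?_, ?_⟩
      · intro s hs
        obtain ⟨i, _, rfl⟩ := Finset.mem_image.1 hs
        simp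
      · rw [Finset.card_image_of_injective _ (fun i j h => by
          simpa using h), Finset.card_range]
      · have hsub : ∂ ((Finset.range (Nat.card {p : P | rk p = 1})).image
            (fun i => ({i} : Finset ℕ))) ⊆ {∅} := by
          intro u hu
          obtain ⟨s, hs, x, hx, rfl⟩ := Finset.mem_shadow_iff.1 hu
          obtain ⟨i, _, rfl⟩ := Finset.mem_image.1 hs
          simp only [Finset.mem_singleton] at hx ⊢
          rw [hx]
          simp
        have h1 := Finset.card_le_card hsub
        have h2 : (0 : ℕ) < Nat.card {p : P | rk p = 0} := by
          have : Nonempty {p : P | rk p = 0} := ⟨⟨⊥, h0⟩⟩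
          exact Nat.card_pos
        simp only [Finset.card_singleton] at h1
        omega
    -- k + 1 : the inductive step
    by_cases htop : Nat.card {p : P | rk p = k + 2} = 0
    · refine ⟨∅, by simp [Set.Sized], by simpa using htop.symm, by simp⟩
    -- find an atom
    obtain ⟨a, ha⟩ : ∃ a : P, rk a = 1 := by
      refine level_nonempty_rank_one h0 hc hm hd ?_
      obtain ⟨⟨y, hy⟩⟩ := (Nat.card_ne_zero.1 htop).1
      exact ⟨y, by rw [Set.mem_setOf_eq] at hy; omega⟩

    -- === the upper subposet U = {p // a ≤ p} ===
    have hbetU : ∀ {x y z : P}, a ≤ x → a ≤ y → x < z → z < y → a ≤ z :=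
      fun hx _ hxz _ => hx.trans hxz.le
    have h1U : ∀ x : {p : P // a ≤ p}, 1 ≤ rk x.1 := by
      intro x
      rcases eq_or_lt_of_le x.2 with h | h
      · have h2 : rk x.1 = 1 := by rw [← h]; exact ha
        omega
      · have := hm _ _ h
        omega
    letI instSIU : SemilatticeInf {p : P // a ≤ p} :=
      Subtype.semilatticeInf (fun x y hx hy => le_inf hx hy)
    letI instOBU : OrderBot {p : P // a ≤ p} := { bot := ⟨a, le_rfl⟩, bot_le := fun x => x.2 }
    set rkU : {p : P // a ≤ p} → ℕ := fun x => rk x.1 - 1 with hrkU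
    have h0U : rkU ⊥ = 0 := by
      simp only [hrkU]
      rw [show ((⊥ : {p : P // a ≤ p}) : P) = a from rfl, ha]
    have hcU : CoverRank rkU := by
      intro x y hxy
      have h1 := subtype_covby hbetU hxy
      have h2 := hc _ _ h1
      have h3 := h1U x
      simp only [hrkU]
      omega
    have hmU : RankStrictMono rkU := by
      intro x y hxy
      have h2 := hm _ _ (Subtype.coe_lt_coe.2 hxy)
      have h3 := h1U x
      simp only [hrkU]
      omega
    have hdU : DiamondProp rkU := by
      intro x y hxy hr
      have hxy' : x.1 < y.1 := Subtype.coe_lt_coe.2 hxy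
      have hr' : rk y.1 = rk x.1 + 2 := by
        have := h1U x
        have := h1U y
        simp only [hrkU] at hr
        omega
      exact subtype_mid hd hbetU hxy' hr'
    have cardU : Fintype.card {p : P // a ≤ p} ≤ c := by
      have h1 : ¬ a ≤ (⊥ : P) := by
        intro h
        rw [le_bot_iff.1 h] at ha
        rw [h0] at ha
        omega
      have h2 : Fintype.card {p : P // a ≤ p} < Fintype.card P :=
        Fintype.card_subtype_lt (x := (⊥ : P)) h1
      omega
    obtain ⟨𝒜₁, h𝒜₁s, h𝒜₁c, h𝒜₁sh⟩ := ih {p : P // a ≤ p} rkU cardU h0U hcU hmU hdU k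
    have hU1 : Nat.card {x : {p : P // a ≤ p} | rkU x = k + 1} =
        Nat.card {p : P | a ≤ p ∧ rk p = k + 2} := by
      refine ncard_subtype_eq (fun p => rk p = k + 2) (fun x => rkU x = k + 1) (fun x => ?_)
      have := h1U x
      simp only [hrkU]
      omega
    have hU2 : Nat.card {x : {p : P // a ≤ p} | rkU x = k} =
        Nat.card {p : P | a ≤ p ∧ rk p = k + 1} := by
      refine ncard_subtype_eq (fun p => rk p = k + 1) (fun x => rkU x = k) (fun x => ?_)
      have := h1U x
      simp only [hrkU]
      omega
    rw [hU1] at h𝒜₁c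
    rw [hU2] at h𝒜₁sh
    -- === the lower subposet Q = {p // ¬ a ≤ p} ===
    have hbetQ : ∀ {x y z : P}, ¬ a ≤ x → ¬ a ≤ y → x < z → z < y → ¬ a ≤ z :=
      fun _ hy _ hzy h => hy (h.trans hzy.le)
    letI instSIQ : SemilatticeInf {p : P // ¬ a ≤ p} :=
      Subtype.semilatticeInf (fun x y hx _ => fun h => hx (h.trans inf_le_left))
    have hbotQ : ¬ a ≤ (⊥ : P) := by
      intro h
      rw [le_bot_iff.1 h] at ha
      rw [h0] at ha
      omega
    letI instOBQ : OrderBot {p : P // ¬ a ≤ p} := { bot := ⟨⊥, hbotQ⟩, bot_le := fun x => bot_le }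
    set rkQ : {p : P // ¬ a ≤ p} → ℕ := fun x => rk x.1 with hrkQ
    have h0Q : rkQ ⊥ = 0 := by
      simp only [hrkQ]
      exact h0
    have hcQ : CoverRank rkQ := fun x y hxy => hc _ _ (subtype_covby hbetQ hxy)
    have hmQ : RankStrictMono rkQ := fun x y hxy => hm _ _ (Subtype.coe_lt_coe.2 hxy)
    have hdQ : DiamondProp rkQ := fun x y hxy hr =>
      subtype_mid hd hbetQ (Subtype.coe_lt_coe.2 hxy) hr
    have cardQ : Fintype.card {p : P // ¬ a ≤ p} ≤ c := by
      have h2 : Fintype.card {p : P // ¬ a ≤ p} < Fintype.card P :=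
        Fintype.card_subtype_lt (x := a) (not_not_intro le_rfl)
      omega
    obtain ⟨𝒜₀, h𝒜₀s, h𝒜₀c, h𝒜₀sh⟩ :=
      ih {p : P // ¬ a ≤ p} rkQ cardQ h0Q hcQ hmQ hdQ (k + 1)
    have hQ1 : Nat.card {x : {p : P // ¬ a ≤ p} | rkQ x = k + 2} =
        Nat.card {p : P | ¬ a ≤ p ∧ rk p = k + 2} :=
      ncard_subtype_eq (fun p => rk p = k + 2) _ (fun x => Iff.rfl)
    have hQ2 : Nat.card {x : {p : P // ¬ a ≤ p} | rkQ x = k + 1} =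
        Nat.card {p : P | ¬ a ≤ p ∧ rk p = k + 1} :=
      ncard_subtype_eq (fun p => rk p = k + 1) _ (fun x => Iff.rfl)
    rw [hQ1] at h𝒜₀c
    rw [hQ2] at h𝒜₀sh
    -- === abbreviations for the counts ===
    set n₀ := Nat.card {p : P | ¬ a ≤ p ∧ rk p = k + 2} with hn₀
    set n₁ := Nat.card {p : P | a ≤ p ∧ rk p = k + 2} with hn₁
    set m₀ := Nat.card {p : P | ¬ a ≤ p ∧ rk p = k + 1} with hm₀
    set m₁ := Nat.card {p : P | a ≤ p ∧ rk p = k + 1} with hm₁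
    have hinj : n₁ ≤ m₀ := card_inj h0 hc hm hd ha k
    have hsplit2 : Nat.card {p : P | rk p = k + 2} = n₁ + n₀ :=
      ncard_split (fun p => a ≤ p) (fun p => rk p = k + 2)
    have hsplit1 : Nat.card {p : P | rk p = k + 1} = m₁ + m₀ :=
      ncard_split (fun p => a ≤ p) (fun p => rk p = k + 1)
    -- === initial segment versions ===
    obtain ⟨𝒞₀, h𝒞₀init, h𝒞₀card, h𝒞₀sh⟩ := exists_initSeg_of_family 𝒜₀ h𝒜₀s
    obtain ⟨𝒞₁, h𝒞₁init, h𝒞₁card, h𝒞₁sh⟩ := exists_initSeg_of_family 𝒜₁ h𝒜₁s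
    obtain ⟨N₀, hN₀⟩ := exists_bound 𝒞₀
    obtain ⟨N₁, hN₁⟩ := exists_bound 𝒞₁
    set M := max N₀ N₁ with hMdef
    have hM₀ : ∀ s ∈ 𝒞₀, ∀ i ∈ s, i < M := fun s hs i hi => by
      have := hN₀ s hs i hi
      omega
    have hM₁ : ∀ s ∈ 𝒞₁, ∀ i ∈ s, i < M := fun s hs i hi => by
      have := hN₁ s hs i hi
      omega
    have hM₀mem : ∀ s ∈ 𝒞₀, M ∉ s := fun s hs hMs => absurd (hM₀ s hs M hMs) (lt_irrefl M)
    have hM₁mem : ∀ u ∈ 𝒞₁, M ∉ u := fun u hu hMu => absurd (hM₁ u hu M hMu) (lt_irrefl M)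
    set 𝒜 := 𝒞₀ ∪ 𝒞₁.image (insert M) with h𝒜def
    have hsized : Set.Sized (k + 1 + 1) (𝒜 : Set (Finset ℕ)) := by
      intro s hs
      rcases Finset.mem_union.1 hs with h | h
      · exact h𝒞₀init.1 h
      · obtain ⟨u, hu, rfl⟩ := Finset.mem_image.1 h
        rw [Finset.card_insert_of_notMem (hM₁mem u hu), h𝒞₁init.1 hu]
    have hdisj : Disjoint 𝒞₀ (𝒞₁.image (insert M)) := by
      rw [Finset.disjoint_left]
      intro s hs hc'
      obtain ⟨u, hu, he⟩ := Finset.mem_image.1 hc'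
      exact hM₀mem s hs (he ▸ Finset.mem_insert_self M u)
    have hinsinj : ∀ u1 ∈ 𝒞₁, ∀ u2 ∈ 𝒞₁, insert M u1 = insert M u2 → u1 = u2 := by
      intro u1 hu1 u2 hu2 he
      rw [← Finset.erase_insert (hM₁mem u1 hu1), ← Finset.erase_insert (hM₁mem u2 hu2), he]
    have hcard𝒜 : #𝒜 = Nat.card {p : P | rk p = k + 1 + 1} := by
      rw [h𝒜def, Finset.card_union_of_disjoint hdisj,
        Finset.card_image_of_injOn (fun u1 hu1 u2 hu2 he => hinsinj u1 hu1 u2 hu2 he),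
        h𝒞₀card, h𝒞₁card, h𝒜₀c, h𝒜₁c, hsplit2]
      omega
    have hshadow : #(∂ 𝒜) ≤ Nat.card {p : P | rk p = k + 1} := by
      have hsub : ∂ 𝒜 ⊆ (∂ 𝒞₀ ∪ 𝒞₁) ∪ (∂ 𝒞₁).image (insert M) := by
        intro t ht
        obtain ⟨s, hs, x, hx, rfl⟩ := Finset.mem_shadow_iff.1 ht
        rcases Finset.mem_union.1 hs with h | h
        · exact Finset.mem_union_left _ (Finset.mem_union_left _
            (Finset.mem_shadow_iff.2 ⟨s, h, x, hx, rfl⟩))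
        · obtain ⟨u, hu, rfl⟩ := Finset.mem_image.1 h
          by_cases hxM : x = M
          · subst hxM
            rw [Finset.erase_insert (hM₁mem u hu)]
            exact Finset.mem_union_left _ (Finset.mem_union_right _ hu)
          · have hxu : x ∈ u := (Finset.mem_insert.1 hx).resolve_left hxM
            rw [Finset.erase_insert_of_ne (fun h => hxM h.symm)]
            exact Finset.mem_union_right _ (Finset.mem_image_of_mem _
              (Finset.mem_shadow_iff.2 ⟨u, hu, x, hxu, rfl⟩))
      have hsh₀init : IsInitSeg (∂ 𝒞₀) (k + 1) := by
        have := isInitSeg_shadow_nat hN₀ h𝒞₀init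
        simpa using this
      have hunion_le : #(∂ 𝒞₀ ∪ 𝒞₁) ≤ m₀ := by
        rcases hsh₀init.total h𝒞₁init with h | h
        · rw [Finset.union_eq_right.2 h]
          rw [h𝒞₁card, h𝒜₁c]
          exact hinj
        · rw [Finset.union_eq_left.2 h]
          exact le_trans h𝒞₀sh h𝒜₀sh
      have himage_le : #((∂ 𝒞₁).image (insert M)) ≤ m₁ := by
        calc #((∂ 𝒞₁).image (insert M)) ≤ #(∂ 𝒞₁) := Finset.card_image_le
          _ ≤ m₁ := le_trans h𝒞₁sh h𝒜₁sh
      calc #(∂ 𝒜) ≤ #((∂ 𝒞₀ ∪ 𝒞₁) ∪ (∂ 𝒞₁).image (insert M)) := Finset.card_le_card hsub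
        _ ≤ #(∂ 𝒞₀ ∪ 𝒞₁) + #((∂ 𝒞₁).image (insert M)) := Finset.card_union_le _ _
        _ ≤ m₀ + m₁ := by omega
        _ = Nat.card {p : P | rk p = k + 1} := by rw [hsplit1]; omega
    exact ⟨𝒜, hsized, hcard𝒜, hshadow⟩



end WegnerAux

/-- Wegner's theorem: every finite ranked meet semi-lattice with the diamond
property satisfies the Kruskal–Katona inequalities `∂_k(f_k) ≤ f_{k-1}` for all
`k ≥ 0` (`f i` counts rank-`i` elements, so `f 0 = f_{-1}`). -/
theorem wegner_kruskalKatona {P : Type*} [SemilatticeInf P] [OrderBot P]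
    [Fintype P] (rk : P → ℕ) (h0 : rk ⊥ = 0) (hc : CoverRank rk)
    (hm : RankStrictMono rk) (hd : DiamondProp rk)
    (f : ℕ → ℕ) (hf : ∀ i, f i = Nat.card {p : P | rk p = i}) :
    ∀ k : ℕ, delKK k (f (k + 1)) ≤ f k := by
  intro k
  classical
  obtain ⟨𝒜, hsized, hcard, hsh⟩ :=
    WegnerAux.aux (Fintype.card P) P rk le_rfl h0 hc hm hd k
  rw [hf (k + 1), hf k]
  calc delKK k (Nat.card {p : P | rk p = k + 1}) = delKK k 𝒜.card := by rw [hcard]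
    _ ≤ (Finset.shadow 𝒜).card := WegnerAux.delKK_le_card_shadow 𝒜 hsized
    _ ≤ Nat.card {p : P | rk p = k} := hsh
end

section
/- Let L be a ranked meet semi-lattice. The set L' of multichains (from downward-closed families F(l)) with componentwise order is a meet semi-lattice: the meet of (a_m ≤...≤ a_0) and (b_k ≤...≤ b_0) is (a_{min(m,k)} ∧ b_{min(m,k)} ≤ ... ≤ a_0 ∧ b_0), after discarding any initial entries equal to 0̂. -/
/-- The componentwise order on multichains.  A multichain `(a_m ≤ ... ≤ a_1 ≤ a_0)`
is represented as the list `[a_0, a_1, ..., a_m]` (top element first).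
`MCle a b` iff `a` is at most as long as `b` and componentwise below it. -/
def MCle {L : Type*} [Preorder L] (a b : List L) : Prop :=
  a.length ≤ b.length ∧
    ∀ (i : ℕ) (ha : i < a.length) (hb : i < b.length), a.get ⟨i, ha⟩ ≤ b.get ⟨i, hb⟩

/-- A multichain in `L ∖ {⊥}`: a weakly decreasing list (top first) of elements
strictly above `⊥`. -/
def IsMC {L : Type*} [Preorder L] [OrderBot L] (c : List L) : Prop :=
  List.Chain' (fun x y => y ≤ x) c ∧ ∀ x ∈ c, ⊥ < x

/-- Type synonym: multichains in `L`, partially ordered componentwise. -/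
def MC (L : Type*) := List L

instance {L : Type*} [PartialOrder L] : PartialOrder (MC L) where
  le a b := MCle (L := L) a b
  le_refl a := ⟨le_rfl, fun _ _ _ => le_rfl⟩
  le_trans a b c hab hbc :=
    ⟨hab.1.trans hbc.1, fun i ha hc =>
      (hab.2 i ha (lt_of_lt_of_le ha hab.1)).trans
        (hbc.2 i (lt_of_lt_of_le ha hab.1) hc)⟩
  le_antisymm a b hab hba :=
    List.ext_get (le_antisymm hab.1 hba.1)
      (fun i h1 h2 => le_antisymm (hab.2 i h1 h2) (hba.2 i h2 h1))

/-- The rank of a multichain: the sum of the ranks of its entries. -/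
def rankMC {L : Type*} (rk : L → ℕ) (c : List L) : ℕ := (c.map rk).sum

/-- The underlying set of `L'`: the union of the families `F l` together with the
empty multichain as minimum. -/
def MCcarrier {L : Type*} (F : L → Set (List L)) : Set (MC L) :=
  {c | c = ([] : List L) ∨ ∃ l : L, (c : List L) ∈ F l}

/-- `L'` is a meet semi-lattice: the meet of two multichains is the componentwise
meet of their common-length prefixes, after discarding the initial (lowest)
entries equal to `⊥`. -/
theorem Lprime_meet {L : Type*} [SemilatticeInf L] [OrderBot L] [DecidableEq L]
    (F : L → Set (List L))
    (hFmc : ∀ l : L, ∀ c ∈ F l, IsMC c ∧ ∀ x ∈ c, x ≤ l)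
    (hFclosed : ∀ l : L, ∀ a b : List L,
      IsMC a → a ≠ [] → MCle a b → a ≠ b → b ∈ F l → a ∈ F l) :
    ∀ a b : (MCcarrier F), ∃ m : (MCcarrier F),
      (m : MC L) =
        (((List.zipWith (· ⊓ ·) (a : MC L) (b : MC L)).reverse.dropWhile
          (fun x => decide (x = ⊥))).reverse) ∧
      IsGLB ({a, b} : Set (MCcarrier F)) m := by
  classical
  haveI : IsTrans L (fun x y : L => y ≤ x) := ⟨fun a b c h1 h2 => le_trans h2 h1⟩
  have getIsMC : ∀ c : List L, c ∈ MCcarrier F → IsMC c := by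
    rintro c (rfl | ⟨l, hl⟩)
    · exact ⟨List.isChain_nil, by simp⟩
    · exact (hFmc l c hl).1
  rintro ⟨a, ha⟩ ⟨b, hb⟩
  obtain ⟨a, rfl⟩ : ∃ x : List L, x = a := ⟨a, rfl⟩
  obtain ⟨b, rfl⟩ : ∃ x : List L, x = b := ⟨b, rfl⟩
  set p : L → Bool := fun x => decide (x = ⊥) with hp
  set z : List L := List.zipWith (· ⊓ ·) a b with hzdef
  set m : List L := (z.reverse.dropWhile p).reverse with hmdef
  have hpre : m <+: z := by
    have h1 : z.reverse.dropWhile p <:+ z.reverse := List.dropWhile_suffix p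
    have h2 := List.reverse_prefix.mpr h1
    rwa [List.reverse_reverse] at h2
  have hlenmz : m.length ≤ z.length := hpre.length_le
  have hza : z.length ≤ a.length := by
    rw [hzdef, List.length_zipWith]; exact inf_le_left
  have hzb : z.length ≤ b.length := by
    rw [hzdef, List.length_zipWith]; exact inf_le_right
  have hgetz : ∀ i (h : i < z.length),
      z[i] = a[i]'(h.trans_le hza) ⊓ b[i]'(h.trans_le hzb) := by
    intro i h
    simp only [hzdef, List.getElem_zipWith]
  have hgetmz : ∀ i (h : i < m.length), m[i] = z[i]'(h.trans_le hlenmz) :=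
    fun i h => hpre.getElem h
  -- entries of z beyond m are ⊥
  have hsplit : z = m ++ (z.reverse.takeWhile p).reverse := by
    conv_lhs => rw [← List.reverse_reverse z,
      ← List.takeWhile_append_dropWhile (p := p) (l := z.reverse)]
    rw [List.reverse_append]
  have hbott : ∀ x ∈ (z.reverse.takeWhile p).reverse, x = ⊥ := by
    intro x hx
    rw [List.mem_reverse] at hx
    simpa [hp] using List.mem_takeWhile_imp hx
  have hbotz : ∀ i (h : i < z.length), m.length ≤ i → z[i] = ⊥ := by
    intro i h hi
    rw [List.getElem_of_eq hsplit h, List.getElem_append_right hi]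
    exact hbott _ (List.getElem_mem _)
  -- chains
  have hmca : IsMC a := getIsMC a ha
  have hmcb : IsMC b := getIsMC b hb
  have hchaina := List.isChain_iff_getElem.mp hmca.1
  have hchainb := List.isChain_iff_getElem.mp hmcb.1
  have hchainz : List.Chain' (fun x y : L => y ≤ x) z := by
    refine List.isChain_iff_getElem.mpr ?_
    intro i h
    have h1 : i + 1 < z.length := by omega
    have h0 : i < z.length := by omega
    rw [hgetz _ h1, hgetz _ h0]
    have hia := hchaina i (by have := hza; omega)
    have hib := hchainb i (by have := hzb; omega)
    exact inf_le_inf hia hib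
  have hpairz : List.Pairwise (fun x y : L => y ≤ x) z :=
    List.isChain_iff_pairwise.mp hchainz
  have hmonoz : ∀ i j (hij : i ≤ j) (hj : j < z.length), z[j]'hj ≤ z[i]'(by omega) := by
    intro i j hij hj
    rcases eq_or_lt_of_le hij with rfl | hlt
    · exact le_rfl
    · exact List.pairwise_iff_getElem.mp hpairz i j (by omega) hj hlt
  have hchainm : List.Chain' (fun x y : L => y ≤ x) m := by
    refine List.isChain_iff_getElem.mpr ?_
    intro i h
    rw [hgetmz _ (by omega), hgetmz _ (by omega)]
    exact hmonoz i (i+1) (by omega) _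
  -- bot facts for m
  have hlastm : ∀ (hne : m ≠ []), m.getLast hne ≠ ⊥ := by
    intro hne
    have hdne : z.reverse.dropWhile p ≠ [] := by
      intro h; apply hne; rw [hmdef, h]; rfl
    have hhead := List.head_dropWhile_not p (l := z.reverse) hdne
    have hrev : m.reverse = z.reverse.dropWhile p := by
      rw [hmdef, List.reverse_reverse]
    have hmr : m.reverse ≠ [] := by rw [hrev]; exact hdne
    have e : m.reverse.head? = (z.reverse.dropWhile p).head? :=
      congrArg _ hrev
    rw [List.head?_eq_head hmr, List.head?_eq_head hdne] at e
    have e' : m.reverse.head hmr = (z.reverse.dropWhile p).head hdne :=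
      Option.some_inj.mp e
    rw [List.getLast_eq_head_reverse, e']
    intro hcon
    rw [hcon] at hhead
    simp [hp] at hhead
  have hbotm : ∀ x ∈ m, ⊥ < x := by
    intro x hx
    obtain ⟨i, hi, rfl⟩ := List.getElem_of_mem hx
    have hne : m ≠ [] := List.ne_nil_of_length_pos (by omega)
    have hlastget : m.getLast hne = m[m.length - 1] := List.getLast_eq_getElem (l := m) hne
    have hle : m.getLast hne ≤ m[i] := by
      rw [hlastget, hgetmz _ (by omega), hgetmz _ hi]
      exact hmonoz i (m.length - 1) (by omega) _
    rcases eq_or_ne m[i] ⊥ with hbo | hbo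
    · exact absurd (le_bot_iff.mp (hbo ▸ hle)) (hlastm hne)
    · exact bot_lt_iff_ne_bot.mpr hbo
  have hIsMCm : IsMC m := ⟨hchainm, hbotm⟩
  -- m ≤ a and m ≤ b as MCle
  have hmlea : MCle m a := by
    refine ⟨hlenmz.trans hza, fun i h1 h2 => ?_⟩
    simp only [List.get_eq_getElem]
    rw [hgetmz _ h1, hgetz _ (by omega)]
    exact inf_le_left
  have hmleb : MCle m b := by
    refine ⟨hlenmz.trans hzb, fun i h1 h2 => ?_⟩
    simp only [List.get_eq_getElem]
    rw [hgetmz _ h1, hgetz _ (by omega)]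
    exact inf_le_right
  have hmmem : m ∈ MCcarrier F := by
    by_cases hmne : m = []
    · exact Or.inl hmne
    · right
      have hane : a ≠ [] := by
        intro h
        apply hmne
        have : z.length = 0 := by rw [hzdef, h]; simp
        exact List.eq_nil_of_length_eq_zero (by omega)
      obtain (h | ⟨l, hl⟩) := ha
      · exact absurd h hane
      · refine ⟨l, ?_⟩
        by_cases hma : m = a
        · rwa [hma]
        · exact hFclosed l m a hIsMCm hmne hmlea hma hl
  refine ⟨⟨m, hmmem⟩, rfl, ?_⟩
  constructor
  · rintro x hx
    simp only [Set.mem_insert_iff, Set.mem_singleton_iff] at hx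
    rcases hx with rfl | rfl
    · exact hmlea
    · exact hmleb
  · rintro ⟨w, hwmem⟩ hw
    obtain ⟨w, rfl⟩ : ∃ x : List L, x = w := ⟨w, rfl⟩
    have hca : MCle w a := hw (Set.mem_insert _ _)
    have hcb : MCle w b := hw (Set.mem_insert_of_mem _ rfl)
    have hmcc : IsMC w := getIsMC w hwmem
    have hcz : w.length ≤ z.length := by
      rw [hzdef, List.length_zipWith]
      exact le_inf hca.1 hcb.1
    have hclem : w.length ≤ m.length := by
      by_contra hcon
      push_neg at hcon
      have hi : m.length < w.length := hcon
      have hiz : m.length < z.length := lt_of_lt_of_le hi hcz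
      have h1 : w[m.length]'hi ≤ z[m.length]'hiz := by
        rw [hgetz _ hiz]
        have ha' := hca.2 m.length hi (by omega)
        have hb' := hcb.2 m.length hi (by omega)
        simp only [List.get_eq_getElem] at ha' hb'
        exact le_inf ha' hb'
      rw [hbotz _ hiz le_rfl] at h1
      exact absurd (le_bot_iff.mp h1)
        (ne_of_gt (hmcc.2 _ (List.getElem_mem hi)))
    show MCle w m
    refine ⟨hclem, fun i h1 h2 => ?_⟩
    simp only [List.get_eq_getElem]
    rw [hgetmz _ h2, hgetz _ (by omega)]
    have ha' := hca.2 i h1 (by omega)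
    have hb' := hcb.2 i h1 (by omega)
    simp only [List.get_eq_getElem] at ha' hb'
    exact le_inf ha' hb'
end

section
/- Let P be a finite member of the family 𝒫 (a generalized multicomplex built from a geometric meet semi-lattice), and let k[P] = k[x_1,...,x_n]/I_P where I_P = I_0 + I_1 + I_2 + I_3. Then for all i, the dimension over k of the degree-(i+1) graded component of k[P] equals f_i(P), the number of rank-(i+1) elements of P. -/
/-- `JoinP P v p` : `p` is the join `∨ᵢ xᵢ^(v i)` computed in the poset of
monomials `P` (ordered by divisibility, i.e. pointwise on exponent vectors):
`p ∈ P` is the least element of `P` dividing by every pure power `xᵢ^(v i)`. -/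
def JoinP {A : Type*} [DecidableEq A] (P : Set (A → ℕ)) (v : A → ℕ)
    (p : A → ℕ) : Prop :=
  p ∈ P ∧ (∀ a : A, Pi.single a (v a) ≤ p) ∧
    ∀ q ∈ P, (∀ a : A, Pi.single a (v a) ≤ q) → p ≤ q


set_option linter.unusedSectionVars false

namespace GSRaux

variable {L : Type*} [SemilatticeInf L] [OrderBot L] [Fintype L] [DecidableEq L]
  [DecidableRel (α := L) (· ≤ ·)]
variable {A : Type*} [Fintype A] [DecidableEq A]

/-- upper bounds (in `L`) of a finite set of atom indices -/
def ubs (rk : L → ℕ) (atom : A ≃ {a : L // rk a = 1}) (T : Finset A) : Set L :=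
  {l | ∀ a ∈ T, (atom a : L) ≤ l}

variable (rk : L → ℕ) (atom : A ≃ {a : L // rk a = 1})

lemma isLUB_atoms (hat : AtomicRk rk) (l : L) :
    IsLUB ((fun a => (atom a : L)) '' {a : A | (atom a : L) ≤ l}) l := by
  have : ((fun a => (atom a : L)) '' {a : A | (atom a : L) ≤ l}) =
      {a : L | rk a = 1 ∧ a ≤ l} := by
    ext x
    constructor
    · rintro ⟨a, ha, rfl⟩; exact ⟨(atom a).2, ha⟩
    · rintro ⟨h1, h2⟩
      exact ⟨atom.symm ⟨x, h1⟩, by simpa using h2, by simp⟩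
  rw [this]; exact hat l

lemma le_of_atoms_subset (hat : AtomicRk rk) {l l' : L}
    (h : ∀ a : A, (atom a : L) ≤ l → (atom a : L) ≤ l') : l ≤ l' := by
  refine (isLUB_atoms rk atom hat l).2 ?_
  rintro x ⟨a, ha, rfl⟩
  exact h a ha

lemma eq_of_atoms_iff (hat : AtomicRk rk) {l l' : L}
    (h : ∀ a : A, (atom a : L) ≤ l ↔ (atom a : L) ≤ l') : l = l' :=
  le_antisymm (le_of_atoms_subset rk atom hat fun a ha => (h a).1 ha)
    (le_of_atoms_subset rk atom hat fun a ha => (h a).2 ha)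

lemma exists_cl {T : Finset A} (h : (ubs rk atom T).Nonempty) :
    ∃ j, IsLeast (ubs rk atom T) j := by
  classical
  obtain ⟨u, hu⟩ := h
  have hne : (Finset.univ.filter (fun l : L => ∀ a ∈ T, (atom a : L) ≤ l)).Nonempty :=
    ⟨u, by simpa [ubs] using hu⟩
  refine ⟨(Finset.univ.filter (fun l : L => ∀ a ∈ T, (atom a : L) ≤ l)).inf' hne id, ?_, ?_⟩
  · intro a ha
    refine Finset.le_inf' hne id ?_
    intro b hb
    simp only [Finset.mem_filter] at hb
    exact hb.2 a ha
  · intro u' hu'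
    exact Finset.inf'_le id (by simpa [ubs] using hu')

lemma isLeast_unique {s : Set L} {j j' : L} (h : IsLeast s j) (h' : IsLeast s j') : j = j' :=
  le_antisymm (h.2 h'.1) (h'.2 h.1)

lemma rk_lub_pair (hgeo : ∀ x y j : L, IsLUB ({x, y} : Set L) j →
      rk (x ⊓ y) + rk j ≤ rk x + rk y)
    {l j : L} {a : A} (h : IsLUB ({l, (atom a : L)} : Set L) j) :
    rk j ≤ rk l + 1 := by
  have := hgeo l (atom a) j h
  have h1 : rk ((atom a : L)) = 1 := (atom a).2
  omega

lemma cl_insert_lub (hat : AtomicRk rk) {T : Finset A} {a : A} {jT j : L}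
    (hT : IsLeast (ubs rk atom T) jT) (h : IsLeast (ubs rk atom (insert a T)) j) :
    IsLUB ({jT, (atom a : L)} : Set L) j := by
  have hset : upperBounds ({jT, (atom a : L)} : Set L) = ubs rk atom (insert a T) := by
    ext u
    constructor
    · intro hu b hb
      rcases Finset.mem_insert.1 hb with rfl | hbT
      · exact hu (by simp : (atom b : L) ∈ _)
      · exact le_trans (hT.1 b hbT) (hu (by simp : jT ∈ _))
    · intro hu x hx
      rcases hx with rfl | hx
      · exact hT.2 fun b hb => hu b (Finset.mem_insert_of_mem hb)
      · simp only [Set.mem_singleton_iff] at hx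
        subst hx
        exact hu a (Finset.mem_insert_self a T)
  exact ⟨by rw [hset]; exact h.1, by rw [hset]; exact h.2⟩

lemma rk_cl_le (h0 : rk ⊥ = 0) (hat : AtomicRk rk)
    (hgeo : ∀ x y j : L, IsLUB ({x, y} : Set L) j → rk (x ⊓ y) + rk j ≤ rk x + rk y) :
    ∀ (T : Finset A) (j : L), IsLeast (ubs rk atom T) j → rk j ≤ T.card := by
  classical
  intro T
  induction T using Finset.induction_on with
  | empty =>
    intro j hj
    have : j ≤ ⊥ := hj.2 (fun a ha => absurd ha (by simp))
    have : j = ⊥ := le_bot_iff.1 this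
    simp [this, h0]
  | @insert a T ha ih =>
    intro j hj
    have hne : (ubs rk atom T).Nonempty := ⟨j, fun b hb => hj.1 b (Finset.mem_insert_of_mem hb)⟩
    obtain ⟨jT, hjT⟩ := exists_cl rk atom hne
    have hlub := cl_insert_lub rk atom hat hjT hj
    have h1 := rk_lub_pair rk atom hgeo hlub
    have h2 := ih jT hjT
    have := Finset.card_insert_of_notMem ha
    omega

lemma rk_cl_union_le (h0 : rk ⊥ = 0) (hat : AtomicRk rk)
    (hgeo : ∀ x y j : L, IsLUB ({x, y} : Set L) j → rk (x ⊓ y) + rk j ≤ rk x + rk y) :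
    ∀ (U T : Finset A) (j jU : L), IsLeast (ubs rk atom T) j →
      IsLeast (ubs rk atom (T ∪ U)) jU → rk jU ≤ rk j + U.card := by
  classical
  intro U
  induction U using Finset.induction_on with
  | empty =>
    intro T j jU hj hjU
    rw [Finset.union_empty] at hjU
    simp [isLeast_unique hjU hj]
  | @insert a U ha ih =>
    intro T j jU hj hjU
    have hins : T ∪ insert a U = insert a (T ∪ U) := Finset.union_insert a T U
    rw [hins] at hjU
    have hne : (ubs rk atom (T ∪ U)).Nonempty :=
      ⟨jU, fun b hb => hjU.1 b (Finset.mem_insert_of_mem hb)⟩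
    obtain ⟨j', hj'⟩ := exists_cl rk atom hne
    have hlub := cl_insert_lub rk atom hat hj' hjU
    have h1 := rk_lub_pair rk atom hgeo hlub
    have h2 := ih T j j' hj hj'
    have := Finset.card_insert_of_notMem ha
    omega

lemma rk_cl_transfer (h0 : rk ⊥ = 0) (hm : RankStrictMono rk) (hat : AtomicRk rk)
    (hgeo : ∀ x y j : L, IsLUB ({x, y} : Set L) j → rk (x ⊓ y) + rk j ≤ rk x + rk y)
    {T T' : Finset A} {j j' : L} (hsub : T ⊆ T')
    (hj' : IsLeast (ubs rk atom T') j') (hrk' : rk j' = T'.card)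
    (hj : IsLeast (ubs rk atom T) j) : rk j = T.card := by
  classical
  have hU : T ∪ (T' \ T) = T' := Finset.union_sdiff_of_subset hsub
  have h1 : rk j' ≤ rk j + (T' \ T).card := by
    apply rk_cl_union_le rk atom h0 hat hgeo (T' \ T) T j j' hj
    rw [hU]; exact hj'
  have h2 : rk j ≤ T.card := rk_cl_le rk atom h0 hat hgeo T j hj
  have h3 : (T' \ T).card = T'.card - T.card := Finset.card_sdiff_of_subset hsub
  have h4 : T.card ≤ T'.card := Finset.card_le_card hsub
  omega

lemma erase_or (h0 : rk ⊥ = 0) (hm : RankStrictMono rk) (hat : AtomicRk rk)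
    (hgeo : ∀ x y j : L, IsLUB ({x, y} : Set L) j → rk (x ⊓ y) + rk j ≤ rk x + rk y) :
    ∀ (T : Finset A) (j : L), IsLeast (ubs rk atom T) j →
      rk j = T.card ∨ ∃ a ∈ T, IsLeast (ubs rk atom (T.erase a)) j := by
  classical
  intro T
  induction T using Finset.induction_on with
  | empty =>
    intro j hj
    left
    have : j ≤ ⊥ := hj.2 (fun a ha => absurd ha (by simp))
    simp [le_bot_iff.1 this, h0]
  | @insert a T ha ih =>
    intro j hj
    have hne : (ubs rk atom T).Nonempty := ⟨j, fun b hb => hj.1 b (Finset.mem_insert_of_mem hb)⟩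
    obtain ⟨jT, hjT⟩ := exists_cl rk atom hne
    rcases ih jT hjT with hrk | ⟨b, hbT, hbleast⟩
    · by_cases haj : (atom a : L) ≤ jT
      · -- ubs (insert a T) = ubs T, so j is least of ubs T too; erase a
        have hset : ubs rk atom (insert a T) = ubs rk atom T := by
          ext u
          constructor
          · intro hu b hb; exact hu b (Finset.mem_insert_of_mem hb)
          · intro hu b hb
            rcases Finset.mem_insert.1 hb with rfl | hb'
            · exact le_trans haj (hjT.2 hu)
            · exact hu b hb'
        right
        refine ⟨a, Finset.mem_insert_self a T, ?_⟩
        rw [Finset.erase_insert ha, ← hset]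
        exact hj
      · left
        have hle : rk j ≤ (insert a T).card :=
          rk_cl_le rk atom h0 hat hgeo _ j hj
        have hjTj : jT ≤ j := hjT.2 (fun b hb => hj.1 b (Finset.mem_insert_of_mem hb))
        have hne2 : jT ≠ j := by
          intro h
          exact haj (h ▸ hj.1 a (Finset.mem_insert_self a T))
        have hlt : rk jT < rk j := hm _ _ (lt_of_le_of_ne hjTj hne2)
        have hcard := Finset.card_insert_of_notMem ha
        omega
    · -- b removable from T, hence from insert a T
      right
      have hab : a ≠ b := fun h => ha (h ▸ hbT)
      refine ⟨b, Finset.mem_insert_of_mem hbT, ?_⟩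
      have hset : ubs rk atom ((insert a T).erase b) = ubs rk atom (insert a T) := by
        have : (insert a T).erase b = insert a (T.erase b) := by
          exact Finset.erase_insert_of_ne hab
        rw [this]
        ext u
        constructor
        · intro hu x hx
          rcases Finset.mem_insert.1 hx with rfl | hx'
          · exact hu x (Finset.mem_insert_self x _)
          · -- x ∈ T; jT ≤ u since u ∈ ubs (T.erase b)
            have h1 : u ∈ ubs rk atom (T.erase b) :=
              fun y hy => hu y (Finset.mem_insert_of_mem hy)
            have h2 : jT ≤ u := hbleast.2 h1
            exact le_trans (hjT.1 x hx') h2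
        · intro hu x hx
          rcases Finset.mem_insert.1 hx with rfl | hx'
          · exact hu x (Finset.mem_insert_self x _)
          · exact hu x (Finset.mem_insert_of_mem (Finset.mem_of_mem_erase hx'))
      rw [hset]
      exact hj

lemma exists_basis (h0 : rk ⊥ = 0) (hm : RankStrictMono rk) (hat : AtomicRk rk)
    (hgeo : ∀ x y j : L, IsLUB ({x, y} : Set L) j → rk (x ⊓ y) + rk j ≤ rk x + rk y)
    (l : L) :
    ∃ T : Finset A, (∀ a ∈ T, (atom a : L) ≤ l) ∧ IsLeast (ubs rk atom T) l ∧
      T.card = rk l := by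
  classical
  -- start from the full atom set of l and shrink
  suffices h : ∀ (n : ℕ) (T : Finset A), T.card ≤ n → (∀ a ∈ T, (atom a : L) ≤ l) →
      IsLeast (ubs rk atom T) l →
      ∃ T' : Finset A, (∀ a ∈ T', (atom a : L) ≤ l) ∧ IsLeast (ubs rk atom T') l ∧
        T'.card = rk l by
    have hfull : IsLeast (ubs rk atom (Finset.univ.filter (fun a => (atom a : L) ≤ l))) l := by
      constructor
      · intro a ha; exact (Finset.mem_filter.1 ha).2
      · intro u hu
        exact le_of_atoms_subset rk atom hat
          (fun a hal => hu a (Finset.mem_filter.2 ⟨Finset.mem_univ a, hal⟩))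
    exact h _ _ le_rfl (fun a ha => (Finset.mem_filter.1 ha).2) hfull
  intro n
  induction n with
  | zero =>
    intro T hT hTl hleast
    refine ⟨T, hTl, hleast, ?_⟩
    have : T = ∅ := Finset.card_eq_zero.1 (Nat.le_zero.1 hT)
    subst this
    have : l ≤ ⊥ := hleast.2 (fun a ha => absurd ha (by simp))
    simp [le_bot_iff.1 this, h0]
  | succ n ih =>
    intro T hT hTl hleast
    rcases erase_or rk atom h0 hm hat hgeo T l hleast with hrk | ⟨a, haT, hE⟩
    · exact ⟨T, hTl, hleast, hrk.symm ▸ rfl⟩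
    · refine ih (T.erase a) ?_ (fun b hb => hTl b (Finset.mem_of_mem_erase hb)) hE
      have := Finset.card_erase_of_mem haT
      have hpos : 0 < T.card := Finset.card_pos.2 ⟨a, haT⟩
      omega

/-! ### The monomial side -/

/-- total degree of an exponent vector -/
def deg {A : Type*} [Fintype A] (v : A → ℕ) : ℕ := ∑ a, v a

/-- support as a `Finset` -/
def Supp {A : Type*} [Fintype A] (v : A → ℕ) : Finset A :=
  Finset.univ.filter (fun a => 0 < v a)

section deglemmas
variable {A : Type*} [Fintype A] [DecidableEq A]

lemma mem_Supp {v : A → ℕ} {a : A} : a ∈ Supp v ↔ 0 < v a := by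
  simp [Supp]

lemma deg_add (u v : A → ℕ) : deg (u + v) = deg u + deg v := by
  simpa [deg] using Finset.sum_add_distrib

lemma deg_single (a : A) (n : ℕ) : deg (Pi.single a n : A → ℕ) = n := by
  simp [deg, Pi.single_apply]

lemma deg_mono {u v : A → ℕ} (h : u ≤ v) : deg u ≤ deg v :=
  Finset.sum_le_sum (fun a _ => h a)

lemma eq_of_le_of_deg_le {v m : A → ℕ} (h : v ≤ m) (hd : deg m ≤ deg v) : v = m := by
  by_contra hne
  have : ∃ b, v b ≠ m b := by
    by_contra hc
    push_neg at hc
    exact hne (funext hc)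
  obtain ⟨b, hb⟩ := this
  have : deg v < deg m :=
    Finset.sum_lt_sum (fun a _ => h a) ⟨b, Finset.mem_univ b, lt_of_le_of_ne (h b) hb⟩
  omega

lemma deg_sqf {v : A → ℕ} (h : ∀ a, v a ≤ 1) : deg v = (Supp v).card := by
  classical
  have : ∀ a, v a = if 0 < v a then 1 else 0 := by
    intro a; have := h a; split_ifs with hh <;> omega
  calc deg v = ∑ a, (if 0 < v a then 1 else 0) := Finset.sum_congr rfl (fun a _ => this a)
  _ = (Supp v).card := by
      rw [Supp, Finset.card_filter]

lemma sub_add_single {m : A → ℕ} {b : A} (h : 0 < m b) :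
    (m - Pi.single b 1) + Pi.single b 1 = m := by
  funext c
  by_cases hc : c = b
  · subst hc; simp [Pi.single_apply]; omega
  · simp [Pi.single_apply, hc]

lemma add_single_sub_self (m : A → ℕ) (a : A) : m + Pi.single a 1 - Pi.single a 1 = m := by
  funext c
  by_cases hc : c = a
  · subst hc; simp [Pi.single_apply]
  · simp [Pi.single_apply, hc]

lemma single_le_iff_ptwise {v q : A → ℕ} :
    (∀ a : A, Pi.single a (v a) ≤ q) ↔ v ≤ q := by
  constructor
  · intro h a
    have := h a a
    simpa [Pi.single_apply] using this
  · intro h a c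
    by_cases hc : c = a
    · subst hc; simpa [Pi.single_apply] using h c
    · simp [Pi.single_apply, hc]

end deglemmas

section Pside
variable {L : Type*} [SemilatticeInf L] [OrderBot L] [Fintype L] [DecidableEq L]
  [DecidableRel (α := L) (· ≤ ·)]
variable {A : Type*} [Fintype A] [DecidableEq A]
variable {rk : L → ℕ} {atom : A ≃ {a : L // rk a = 1}}
variable {mL : L → (A → ℕ)} {M : ℕ → Set (A → ℕ)} {P : Set (A → ℕ)}

/-- Induction principle along the construction of `P`. -/
lemma m_induction
    (hM0 : M 0 = {v | ∃ l : L, v = mL l})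
    (hstep : ∀ i : ℕ, M (i + 1) = M i ∨
      ∃ m ∈ M i, ∃ a : A, 0 < m a ∧
        (∀ b : A, 0 < m b → (m + Pi.single a 1 - Pi.single b 1) ∈ M i) ∧
        m + Pi.single a 1 ∉ M i ∧ M (i + 1) = M i ∪ {m + Pi.single a 1})
    (hP : P = ⋃ i, M i)
    (Q : (A → ℕ) → Prop)
    (hbase : ∀ l : L, Q (mL l))
    (hadd : ∀ m a, m ∈ P → Q m → 0 < m a →
      (∀ b, 0 < m b → (m + Pi.single a 1 - Pi.single b 1) ∈ P) → Q (m + Pi.single a 1)) :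
    ∀ m ∈ P, Q m := by
  have hMP : ∀ i, M i ⊆ P := fun i => hP ▸ Set.subset_iUnion M i
  have key : ∀ i, ∀ m ∈ M i, Q m := by
    intro i
    induction i with
    | zero =>
      intro m hm
      rw [hM0] at hm
      obtain ⟨l, rfl⟩ := hm
      exact hbase l
    | succ i ih =>
      intro m hm
      rcases hstep i with h | ⟨m₀, hm₀, a, hpos, hex, -, heq⟩
      · rw [h] at hm; exact ih m hm
      · rw [heq] at hm
        rcases hm with hm | hm
        · exact ih m hm
        · simp only [Set.mem_singleton_iff] at hm
          subst hm
          exact hadd m₀ a (hMP i hm₀) (ih m₀ hm₀) hpos (fun b hb => hMP i (hex b hb))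
  intro m hm
  rw [hP] at hm
  obtain ⟨i, hmi⟩ := Set.mem_iUnion.1 hm
  exact key i m hmi

lemma mL_mem (hM0 : M 0 = {v | ∃ l : L, v = mL l}) (hP : P = ⋃ i, M i) (l : L) :
    mL l ∈ P := by
  rw [hP]
  exact Set.mem_iUnion.2 ⟨0, hM0 ▸ ⟨l, rfl⟩⟩

/-- every monomial of `P`, except a square-free one, stays in `P` after removing
one variable -/
lemma down1 (hmL : ∀ (l : L) (a : A), mL l a = if (atom a : L) ≤ l then 1 else 0)
    (hM0 : M 0 = {v | ∃ l : L, v = mL l})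
    (hstep : ∀ i : ℕ, M (i + 1) = M i ∨
      ∃ m ∈ M i, ∃ a : A, 0 < m a ∧
        (∀ b : A, 0 < m b → (m + Pi.single a 1 - Pi.single b 1) ∈ M i) ∧
        m + Pi.single a 1 ∉ M i ∧ M (i + 1) = M i ∪ {m + Pi.single a 1})
    (hP : P = ⋃ i, M i) :
    ∀ m ∈ P, ∀ b, 0 < m b → (∃ c, 2 ≤ m c) → m - Pi.single b 1 ∈ P := by
  refine m_induction hM0 hstep hP _ ?_ ?_
  · intro l b _ ⟨c, hc⟩
    rw [hmL l c] at hc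
    split_ifs at hc <;> omega
  · intro m a hmP _ hpos hex b hb _
    by_cases hba : b = a
    · subst hba
      rw [add_single_sub_self]
      exact hmP
    · have hmb : 0 < m b := by
        have := hb
        simp only [Pi.add_apply, Pi.single_apply] at this
        simpa [hba] using this
      exact hex b hmb

/-- the support of every monomial of `P` is the atom set of an element of `L` -/
lemma supp_flat (hmL : ∀ (l : L) (a : A), mL l a = if (atom a : L) ≤ l then 1 else 0)
    (hM0 : M 0 = {v | ∃ l : L, v = mL l})
    (hstep : ∀ i : ℕ, M (i + 1) = M i ∨
      ∃ m ∈ M i, ∃ a : A, 0 < m a ∧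
        (∀ b : A, 0 < m b → (m + Pi.single a 1 - Pi.single b 1) ∈ M i) ∧
        m + Pi.single a 1 ∉ M i ∧ M (i + 1) = M i ∪ {m + Pi.single a 1})
    (hP : P = ⋃ i, M i) :
    ∀ m ∈ P, ∃ l : L, ∀ a : A, (0 < m a ↔ (atom a : L) ≤ l) := by
  refine m_induction hM0 hstep hP _ ?_ ?_
  · intro l
    exact ⟨l, fun a => by rw [hmL l a]; split_ifs with h <;> simp [h]⟩
  · rintro m a _ ⟨l, hl⟩ hpos _
    refine ⟨l, fun b => ?_⟩
    by_cases hba : b = a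
    · subst hba
      simp only [Pi.add_apply, Pi.single_apply, if_pos rfl]
      constructor
      · intro _; exact (hl b).1 hpos
      · intro _; omega
    · simp only [Pi.add_apply, Pi.single_apply, if_neg hba, add_zero]
      exact hl b

/-- any non-square-free monomial below a monomial of `P` is in `P` -/
lemma keydown (hmL : ∀ (l : L) (a : A), mL l a = if (atom a : L) ≤ l then 1 else 0)
    (hM0 : M 0 = {v | ∃ l : L, v = mL l})
    (hstep : ∀ i : ℕ, M (i + 1) = M i ∨
      ∃ m ∈ M i, ∃ a : A, 0 < m a ∧
        (∀ b : A, 0 < m b → (m + Pi.single a 1 - Pi.single b 1) ∈ M i) ∧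
        m + Pi.single a 1 ∉ M i ∧ M (i + 1) = M i ∪ {m + Pi.single a 1})
    (hP : P = ⋃ i, M i) :
    ∀ (n : ℕ) (m v : A → ℕ), m ∈ P → v ≤ m → deg m ≤ deg v + n →
      (∃ c, 2 ≤ v c) → v ∈ P := by
  intro n
  induction n with
  | zero =>
    intro m v hm hvm hd _
    rwa [eq_of_le_of_deg_le hvm (by omega)]
  | succ n ih =>
    intro m v hm hvm hd hc
    by_cases hvm' : v = m
    · rwa [hvm']
    · have : ∃ b, v b < m b := by
        by_contra hb
        push_neg at hb
        exact hvm' (le_antisymm hvm (fun b => hb b))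
      obtain ⟨b, hb⟩ := this
      obtain ⟨c, hc2⟩ := hc
      have hm' : m - Pi.single b 1 ∈ P :=
        down1 hmL hM0 hstep hP m hm b (by omega) ⟨c, le_trans hc2 (hvm c)⟩
      have hvle : v ≤ m - Pi.single b 1 := by
        intro x
        by_cases hx : x = b
        · subst hx; simp [Pi.single_apply]; omega
        · simp [Pi.single_apply, hx]; exact hvm x
      have hdeg : deg m = deg (m - Pi.single b 1) + 1 := by
        have h1 : (m - Pi.single b 1) + Pi.single b 1 = m := sub_add_single (by omega)
        have := deg_add (m - Pi.single b 1) (Pi.single b 1)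
        rw [h1] at this
        rw [this, deg_single]
      exact ih (m - Pi.single b 1) v hm' hvle (by omega) ⟨c, hc2⟩

lemma flat_rank (h0 : rk ⊥ = 0) (hm : RankStrictMono rk) (hat : AtomicRk rk)
    (hgeo : ∀ x y j : L, IsLUB ({x, y} : Set L) j → rk (x ⊓ y) + rk j ≤ rk x + rk y)
     (hmL : ∀ (l : L) (a : A), mL l a = if (atom a : L) ≤ l then 1 else 0)
    (hM0 : M 0 = {v | ∃ l : L, v = mL l})
    (hstep : ∀ i : ℕ, M (i + 1) = M i ∨
      ∃ m ∈ M i, ∃ a : A, 0 < m a ∧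
        (∀ b : A, 0 < m b → (m + Pi.single a 1 - Pi.single b 1) ∈ M i) ∧
        m + Pi.single a 1 ∉ M i ∧ M (i + 1) = M i ∪ {m + Pi.single a 1})
    (hP : P = ⋃ i, M i)
     {m : A → ℕ} {c : A} (hmP : m ∈ P) (hc : 2 ≤ m c) :
    ∀ W : Finset A, c ∈ W → (∀ a ∈ W, 0 < m a) →
      ∃ l : L, (∀ a : A, (atom a : L) ≤ l ↔ a ∈ W) ∧ rk l = W.card := by
  classical
  intro W
  induction W using Finset.strongInductionOn with
  | _ W ih =>
    intro hcW hWm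
    set zW : A → ℕ := (fun a => if a ∈ W then 1 else 0) + Pi.single c 1 with hzW
    have hzle : zW ≤ m := by
      intro a
      by_cases haW : a ∈ W
      · by_cases hac : a = c
        · subst hac; simp [zW, haW, Pi.single_apply]; omega
        · simp [zW, haW, Pi.single_apply, hac]
          exact hWm a haW
      · have hac : a ≠ c := fun h => haW (h ▸ hcW)
        simp [zW, haW, Pi.single_apply, hac]
    have hz2 : 2 ≤ zW c := by simp [zW, hcW, Pi.single_apply]
    have hzP : zW ∈ P :=
      keydown hmL hM0 hstep hP (deg m) m zW hmP hzle (by omega) ⟨c, hz2⟩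
    obtain ⟨l, hl⟩ := supp_flat hmL hM0 hstep hP zW hzP
    have hzpos : ∀ a, 0 < zW a ↔ a ∈ W := by
      intro a
      by_cases haW : a ∈ W
      · simp [zW, haW, Pi.single_apply]
      · have hac : a ≠ c := fun h => haW (h ▸ hcW)
        simp [zW, haW, Pi.single_apply, hac]
    have hiff : ∀ a : A, ((atom a : L) ≤ l ↔ a ∈ W) := fun a => by
      rw [← hl a]; exact hzpos a
    refine ⟨l, hiff, ?_⟩
    by_cases hW : W = {c}
    · subst hW
      have h1 : (atom c : L) ≤ l := (hiff c).2 (by simp)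
      have h2 : l ≤ (atom c : L) := by
        refine le_of_atoms_subset rk atom hat (fun a ha => ?_)
        have : a ∈ ({c} : Finset A) := (hiff a).1 ha
        simp only [Finset.mem_singleton] at this
        subst this; exact le_rfl
      rw [le_antisymm h2 h1]
      simp [(atom c).2]
    · obtain ⟨b, hbW, hbc⟩ : ∃ b ∈ W, b ≠ c := by
        by_contra h
        push_neg at h
        apply hW
        ext x
        simp only [Finset.mem_singleton]
        exact ⟨fun hx => h x hx, fun hx => hx ▸ hcW⟩
      have hWsub : W.erase b ⊂ W := Finset.erase_ssubset hbW
      obtain ⟨l', hl', hrk'⟩ := ih (W.erase b) hWsub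
        (Finset.mem_erase.2 ⟨Ne.symm hbc, hcW⟩)
        (fun a ha => hWm a (Finset.mem_of_mem_erase ha))
      have hleast : IsLeast (ubs rk atom W) l :=
        ⟨fun a ha => (hiff a).2 ha,
         fun u hu => le_of_atoms_subset rk atom hat (fun a hal => hu a ((hiff a).1 hal))⟩
      have hleast' : IsLeast (ubs rk atom (W.erase b)) l' :=
        ⟨fun a ha => (hl' a).2 ha,
         fun u hu => le_of_atoms_subset rk atom hat (fun a hal => hu a ((hl' a).1 hal))⟩
      have hunion : W.erase b ∪ {b} = W := by
        ext x
        simp only [Finset.mem_union, Finset.mem_erase, Finset.mem_singleton]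
        constructor
        · rintro (⟨-, h⟩ | rfl) <;> [exact h; exact hbW]
        · intro hx
          by_cases hxb : x = b
          · right; exact hxb
          · left; exact ⟨hxb, hx⟩
      have h1 : rk l ≤ rk l' + 1 := by
        have := rk_cl_union_le rk atom h0 hat hgeo {b} (W.erase b) l' l hleast'
          (by rw [hunion]; exact hleast)
        simpa using this
      have hne : l' ≠ l := by
        intro h
        have hb1 : (atom b : L) ≤ l := (hiff b).2 hbW
        have hb2 : ¬ (atom b : L) ≤ l' := fun hx => by
          have := (hl' b).1 hx
          simp at this
        exact hb2 (h ▸ hb1)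
      have hlel : l' ≤ l := le_of_atoms_subset rk atom hat
        (fun a ha => (hiff a).2 (Finset.mem_of_mem_erase ((hl' a).1 ha)))
      have hlt : rk l' < rk l := hm _ _ (lt_of_le_of_ne hlel hne)
      have hcard := Finset.card_erase_of_mem hbW
      have hpos : 0 < W.card := Finset.card_pos.2 ⟨b, hbW⟩
      omega

lemma comp_le_deg {v : A → ℕ} (c : A) : v c ≤ deg v :=
  Finset.single_le_sum (fun a _ => Nat.zero_le (v a)) (Finset.mem_univ c)

lemma supp_sub_single {m : A → ℕ} {c : A} (h : 2 ≤ m c) (a : A) :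
    0 < (m - Pi.single c 1 : A → ℕ) a ↔ 0 < m a := by
  rw [Pi.sub_apply]
  by_cases hac : a = c
  · subst hac; rw [Pi.single_eq_same]; omega
  · rw [Pi.single_eq_of_ne hac]; omega

lemma sqf_eq_mL (hmL : ∀ (l : L) (a : A), mL l a = if (atom a : L) ≤ l then 1 else 0)
    {m : A → ℕ} {l : L} (hsq : ∀ a, m a ≤ 1) (hl : ∀ a, (0 < m a ↔ (atom a : L) ≤ l)) :
    m = mL l := by
  funext a
  rw [hmL l a]
  have h1 := hsq a
  split_ifs with h
  · have := (hl a).2 h; omega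
  · have : ¬ 0 < m a := fun hx => h ((hl a).1 hx); omega

lemma rho_nsf (h0 : rk ⊥ = 0) (hm : RankStrictMono rk) (hat : AtomicRk rk)
    (hgeo : ∀ x y j : L, IsLUB ({x, y} : Set L) j → rk (x ⊓ y) + rk j ≤ rk x + rk y)
     (hmL : ∀ (l : L) (a : A), mL l a = if (atom a : L) ≤ l then 1 else 0)
    (hM0 : M 0 = {v | ∃ l : L, v = mL l})
    (hstep : ∀ i : ℕ, M (i + 1) = M i ∨
      ∃ m ∈ M i, ∃ a : A, 0 < m a ∧
        (∀ b : A, 0 < m b → (m + Pi.single a 1 - Pi.single b 1) ∈ M i) ∧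
        m + Pi.single a 1 ∉ M i ∧ M (i + 1) = M i ∪ {m + Pi.single a 1})
    (hP : P = ⋃ i, M i)
    
    {ρ : (A → ℕ) → ℕ} (hρ0 : ∀ l : L, ρ (mL l) = rk l)
    (hρs : ∀ m ∈ P, ∀ a : A, m + Pi.single a 1 ∈ P → ρ (m + Pi.single a 1) = ρ m + 1) :
    ∀ m ∈ P, (∃ c, 2 ≤ m c) → ρ m = deg m := by
  classical
  suffices h : ∀ (n : ℕ) (m : A → ℕ), m ∈ P → deg m ≤ n → (∃ c, 2 ≤ m c) → ρ m = deg m by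
    intro m hmP hc
    exact h (deg m) m hmP le_rfl hc
  intro n
  induction n with
  | zero =>
    intro m _ hd ⟨c, hc⟩
    have := comp_le_deg (v := m) c
    omega
  | succ n ih =>
    intro m hmP hd ⟨c, hc⟩
    have hm'P : m - Pi.single c 1 ∈ P :=
      down1 hmL hM0 hstep hP m hmP c (by omega) ⟨c, hc⟩
    have heq : (m - Pi.single c 1) + Pi.single c 1 = m := sub_add_single (by omega)
    have hρ : ρ m = ρ (m - Pi.single c 1) + 1 := by
      have := hρs (m - Pi.single c 1) hm'P c (by rw [heq]; exact hmP)
      rw [heq] at this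
      exact this
    have hdeg : deg m = deg (m - Pi.single c 1) + 1 := by
      have := deg_add (m - Pi.single c 1) (Pi.single c 1)
      rw [heq] at this
      rw [this, deg_single]
    by_cases h2 : ∃ c', 2 ≤ (m - Pi.single c 1 : A → ℕ) c'
    · rw [hρ, ih (m - Pi.single c 1) hm'P (by omega) h2]
      omega
    · push_neg at h2
      have hsq : ∀ a, (m - Pi.single c 1 : A → ℕ) a ≤ 1 := fun a => by have := h2 a; omega
      obtain ⟨l, hl⟩ := supp_flat hmL hM0 hstep hP _ hm'P
      have hm'eq : m - Pi.single c 1 = mL l := sqf_eq_mL hmL hsq hl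
      obtain ⟨l₂, hl₂, hrk₂⟩ := flat_rank h0 hm hat hgeo hmL hM0 hstep hP hmP hc (Supp m)
        (mem_Supp.2 (by omega)) (fun a ha => mem_Supp.1 ha)
      have hll : l = l₂ := by
        refine eq_of_atoms_iff rk atom hat (fun a => ?_)
        rw [← hl a, supp_sub_single hc a, hl₂ a, mem_Supp]
      have hsupp : Supp (m - Pi.single c 1) = Supp m := by
        ext a
        rw [mem_Supp, mem_Supp]
        exact supp_sub_single hc a
      have hdeg' : deg (m - Pi.single c 1) = (Supp m).card := by
        rw [deg_sqf hsq, hsupp]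
      rw [hρ, hm'eq, hρ0, hll, hrk₂]
      omega

lemma join_unique {v p p' : A → ℕ} (h : JoinP P v p) (h' : JoinP P v p') : p = p' :=
  le_antisymm (h.2.2 p' h'.1 h'.2.1) (h'.2.2 p h.1 h.2.1)

lemma join_nsf (hmL : ∀ (l : L) (a : A), mL l a = if (atom a : L) ≤ l then 1 else 0)
    (hM0 : M 0 = {v | ∃ l : L, v = mL l})
    (hstep : ∀ i : ℕ, M (i + 1) = M i ∨
      ∃ m ∈ M i, ∃ a : A, 0 < m a ∧
        (∀ b : A, 0 < m b → (m + Pi.single a 1 - Pi.single b 1) ∈ M i) ∧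
        m + Pi.single a 1 ∉ M i ∧ M (i + 1) = M i ∪ {m + Pi.single a 1})
    (hP : P = ⋃ i, M i)
     {v p : A → ℕ} (h2 : ∃ c, 2 ≤ v c) :
    JoinP P v p ↔ (v ∈ P ∧ p = v) := by
  constructor
  · intro h
    have hvp : v ≤ p := single_le_iff_ptwise.1 h.2.1
    have hvP : v ∈ P :=
      keydown hmL hM0 hstep hP (deg p) p v h.1 hvp (by omega) h2
    have hpv : p ≤ v := h.2.2 v hvP (single_le_iff_ptwise.2 le_rfl)
    exact ⟨hvP, le_antisymm hpv hvp⟩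
  · rintro ⟨hvP, rfl⟩
    exact ⟨hvP, single_le_iff_ptwise.2 le_rfl, fun q hq hvq => single_le_iff_ptwise.1 hvq⟩

lemma join_sf (hmL : ∀ (l : L) (a : A), mL l a = if (atom a : L) ≤ l then 1 else 0)
    (hM0 : M 0 = {v | ∃ l : L, v = mL l})
    (hstep : ∀ i : ℕ, M (i + 1) = M i ∨
      ∃ m ∈ M i, ∃ a : A, 0 < m a ∧
        (∀ b : A, 0 < m b → (m + Pi.single a 1 - Pi.single b 1) ∈ M i) ∧
        m + Pi.single a 1 ∉ M i ∧ M (i + 1) = M i ∪ {m + Pi.single a 1})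
    (hP : P = ⋃ i, M i)
     {v p : A → ℕ} (hsq : ∀ a, v a ≤ 1) :
    JoinP P v p ↔ ∃ j : L, IsLeast (ubs rk atom (Supp v)) j ∧ p = mL j := by
  have hdir : ∀ j : L, IsLeast (ubs rk atom (Supp v)) j → JoinP P v (mL j) := by
    intro j hj
    refine ⟨mL_mem hM0 hP j, single_le_iff_ptwise.2 ?_, ?_⟩
    · intro a
      by_cases hva : 0 < v a
      · have : (atom a : L) ≤ j := hj.1 a (mem_Supp.2 hva)
        rw [hmL j a, if_pos this]
        exact hsq a
      · have : v a = 0 := by omega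
        rw [this]
        exact Nat.zero_le _
    · intro q hq hvq
      obtain ⟨lq, hlq⟩ := supp_flat hmL hM0 hstep hP q hq
      have hvq' : v ≤ q := single_le_iff_ptwise.1 hvq
      have hlqub : lq ∈ ubs rk atom (Supp v) := by
        intro a ha
        have hva : 0 < v a := mem_Supp.1 ha
        exact (hlq a).1 (lt_of_lt_of_le hva (hvq' a))
      have hjlq : j ≤ lq := hj.2 hlqub
      intro a
      rw [hmL j a]
      split_ifs with h
      · exact (hlq a).2 (le_trans h hjlq)
      · exact Nat.zero_le _
  constructor
  · intro h
    obtain ⟨lp, hlp⟩ := supp_flat hmL hM0 hstep hP p h.1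
    have hne : (ubs rk atom (Supp v)).Nonempty := by
      refine ⟨lp, fun a ha => ?_⟩
      have hva : 0 < v a := mem_Supp.1 ha
      have hvp : v ≤ p := single_le_iff_ptwise.1 h.2.1
      exact (hlp a).1 (lt_of_lt_of_le hva (hvp a))
    obtain ⟨j, hj⟩ := exists_cl rk atom hne
    exact ⟨j, hj, join_unique h (hdir j hj)⟩
  · rintro ⟨j, hj, rfl⟩
    exact hdir j hj

lemma le_add_left' (u v : A → ℕ) : v ≤ u + v := fun a => Nat.le_add_left (v a) (u a)

lemma supp_subset_of_le {u v : A → ℕ} (h : u ≤ v) : Supp u ⊆ Supp v := fun a ha =>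
  mem_Supp.2 (lt_of_lt_of_le (mem_Supp.1 ha) (h a))

/-- `IsLeast` form of `flat_rank`'s output -/
lemma isLeast_of_atoms_iff (hat : AtomicRk rk) {W : Finset A} {l : L}
    (h : ∀ a : A, (atom a : L) ≤ l ↔ a ∈ W) : IsLeast (ubs rk atom W) l :=
  ⟨fun a ha => (h a).2 ha,
   fun u hu => le_of_atoms_subset rk atom hat (fun a hal => hu a ((h a).1 hal))⟩

/-- relation for `I₀` : no monomial with an exponent exceeding `rexp` has a join -/
lemma rel0 {rexp : A → ℕ} (hrexp : ∀ a : A, ∀ m ∈ P, m a ≤ rexp a)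
    {v : A → ℕ} {a : A} (h : rexp a < v a) (u : A → ℕ) :
    ¬ ∃ p, JoinP P (u + v) p := by
  rintro ⟨p, hp⟩
  have h1 : (u + v) a ≤ p a := single_le_iff_ptwise.1 hp.2.1 a
  have h2 : p a ≤ rexp a := hrexp a p hp.1
  have : v a ≤ (u + v) a := le_add_left' u v a
  omega

/-- relation for `I₁` : multiples of join-less monomials are join-less -/
lemma rel1 (hmL : ∀ (l : L) (a : A), mL l a = if (atom a : L) ≤ l then 1 else 0)
    (hM0 : M 0 = {v | ∃ l : L, v = mL l})
    (hstep : ∀ i : ℕ, M (i + 1) = M i ∨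
      ∃ m ∈ M i, ∃ a : A, 0 < m a ∧
        (∀ b : A, 0 < m b → (m + Pi.single a 1 - Pi.single b 1) ∈ M i) ∧
        m + Pi.single a 1 ∉ M i ∧ M (i + 1) = M i ∪ {m + Pi.single a 1})
    (hP : P = ⋃ i, M i)
     {v : A → ℕ} (hni : ¬ ∃ p, JoinP P v p) (u : A → ℕ) :
    ¬ ∃ p, JoinP P (u + v) p := by
  rintro ⟨p, hp⟩
  apply hni
  have hvp : v ≤ p := le_trans (le_add_left' u v) (single_le_iff_ptwise.1 hp.2.1)
  by_cases h2 : ∃ c, 2 ≤ v c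
  · have hvP : v ∈ P :=
      keydown hmL hM0 hstep hP (deg p) p v hp.1 hvp (by omega) h2
    exact ⟨v, (join_nsf hmL hM0 hstep hP h2).2 ⟨hvP, rfl⟩⟩
  · push_neg at h2
    have hsq : ∀ a, v a ≤ 1 := fun a => by have := h2 a; omega
    obtain ⟨lp, hlp⟩ := supp_flat hmL hM0 hstep hP p hp.1
    have hne : (ubs rk atom (Supp v)).Nonempty := by
      refine ⟨lp, fun a ha => ?_⟩
      exact (hlp a).1 (lt_of_lt_of_le (mem_Supp.1 ha) (hvp a))
    obtain ⟨j, hj⟩ := exists_cl rk atom hne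
    exact ⟨mL j, (join_sf hmL hM0 hstep hP hsq).2 ⟨j, hj, rfl⟩⟩

/-- relation for `I₂` : multiples of monomials whose join has wrong rank never have
a join of full rank -/
lemma rel2 (h0 : rk ⊥ = 0) (hm : RankStrictMono rk) (hat : AtomicRk rk)
    (hgeo : ∀ x y j : L, IsLUB ({x, y} : Set L) j → rk (x ⊓ y) + rk j ≤ rk x + rk y)
     (hmL : ∀ (l : L) (a : A), mL l a = if (atom a : L) ≤ l then 1 else 0)
    (hM0 : M 0 = {v | ∃ l : L, v = mL l})
    (hstep : ∀ i : ℕ, M (i + 1) = M i ∨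
      ∃ m ∈ M i, ∃ a : A, 0 < m a ∧
        (∀ b : A, 0 < m b → (m + Pi.single a 1 - Pi.single b 1) ∈ M i) ∧
        m + Pi.single a 1 ∉ M i ∧ M (i + 1) = M i ∪ {m + Pi.single a 1})
    (hP : P = ⋃ i, M i)
     {ρ : (A → ℕ) → ℕ} (hρ0 : ∀ l : L, ρ (mL l) = rk l)
    (hρs : ∀ m ∈ P, ∀ a : A, m + Pi.single a 1 ∈ P → ρ (m + Pi.single a 1) = ρ m + 1)
     {v p₀ : A → ℕ} (hj : JoinP P v p₀) (hne : ρ p₀ ≠ deg v)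
    (u : A → ℕ) : ∀ q, JoinP P (u + v) q → ρ q ≠ deg (u + v) := by
  intro q hq hρq
  by_cases h2v : ∃ c, 2 ≤ v c
  · obtain ⟨hvP, hpv⟩ := (join_nsf hmL hM0 hstep hP h2v).1 hj
    exact hne (by rw [hpv]; exact rho_nsf h0 hm hat hgeo hmL hM0 hstep hP hρ0 hρs v hvP h2v)
  · push_neg at h2v
    have hsqv : ∀ a, v a ≤ 1 := fun a => by have := h2v a; omega
    obtain ⟨j₀, hj₀, rfl⟩ := (join_sf hmL hM0 hstep hP hsqv).1 hj
    have hrkS : rk j₀ ≤ (Supp v).card := rk_cl_le rk atom h0 hat hgeo (Supp v) j₀ hj₀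
    have hlt : rk j₀ < (Supp v).card := by
      rcases lt_or_eq_of_le hrkS with h | h
      · exact h
      · exfalso; apply hne; rw [hρ0 j₀, h, ← deg_sqf hsqv]
    have hsubS : Supp v ⊆ Supp (u + v) := supp_subset_of_le (le_add_left' u v)
    by_cases h2z : ∃ c, 2 ≤ (u + v) c
    · obtain ⟨hzP, rfl⟩ := (join_nsf hmL hM0 hstep hP h2z).1 hq
      obtain ⟨c, hc⟩ := h2z
      obtain ⟨l₂, hl₂, hrk₂⟩ := flat_rank h0 hm hat hgeo hmL hM0 hstep hP hzP hc
        (Supp (u + v)) (mem_Supp.2 (by omega)) (fun a ha => mem_Supp.1 ha)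
      have hleast₂ := isLeast_of_atoms_iff hat hl₂
      have := rk_cl_transfer rk atom h0 hm hat hgeo hsubS hleast₂ hrk₂ hj₀
      omega
    · push_neg at h2z
      have hsqz : ∀ a, (u + v) a ≤ 1 := fun a => by have := h2z a; omega
      obtain ⟨j₁, hj₁, rfl⟩ := (join_sf hmL hM0 hstep hP hsqz).1 hq
      have hun : Supp v ∪ (Supp (u + v) \ Supp v) = Supp (u + v) :=
        Finset.union_sdiff_of_subset hsubS
      have h1 : rk j₁ ≤ rk j₀ + (Supp (u + v) \ Supp v).card := by
        apply rk_cl_union_le rk atom h0 hat hgeo _ _ j₀ j₁ hj₀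
        rw [hun]; exact hj₁
      have h2 : (Supp (u + v) \ Supp v).card = (Supp (u + v)).card - (Supp v).card :=
        Finset.card_sdiff_of_subset hsubS
      have h3 : (Supp v).card ≤ (Supp (u + v)).card := Finset.card_le_card hsubS
      have h4 : ρ (mL j₁) = rk j₁ := hρ0 j₁
      have h5 : deg (u + v) = (Supp (u + v)).card := deg_sqf hsqz
      omega

/-- squarefree monomials are determined by their support -/
lemma sqf_eq_of_supp_eq {v w : A → ℕ} (hv : ∀ a, v a ≤ 1) (hw : ∀ a, w a ≤ 1)
    (h : Supp v = Supp w) : v = w := by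
  funext a
  have h1 := hv a; have h2 := hw a
  by_cases ha : a ∈ Supp v
  · have ha' := ha; rw [h] at ha'
    have := mem_Supp.1 ha; have := mem_Supp.1 ha'
    omega
  · have ha' := ha; rw [h] at ha'
    have : ¬ 0 < v a := fun hx => ha (mem_Supp.2 hx)
    have : ¬ 0 < w a := fun hx => ha' (mem_Supp.2 hx)
    omega

/-- relation for `I₃` (one direction): if `v` and `w` have the same join of full
rank, a full-rank join of `u·v` is also the join of `u·w`. -/
lemma rel3_dir (h0 : rk ⊥ = 0) (hm : RankStrictMono rk) (hat : AtomicRk rk)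
    (hgeo : ∀ x y j : L, IsLUB ({x, y} : Set L) j → rk (x ⊓ y) + rk j ≤ rk x + rk y)
     (hmL : ∀ (l : L) (a : A), mL l a = if (atom a : L) ≤ l then 1 else 0)
    (hM0 : M 0 = {v | ∃ l : L, v = mL l})
    (hstep : ∀ i : ℕ, M (i + 1) = M i ∨
      ∃ m ∈ M i, ∃ a : A, 0 < m a ∧
        (∀ b : A, 0 < m b → (m + Pi.single a 1 - Pi.single b 1) ∈ M i) ∧
        m + Pi.single a 1 ∉ M i ∧ M (i + 1) = M i ∪ {m + Pi.single a 1})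
    (hP : P = ⋃ i, M i)
     {ρ : (A → ℕ) → ℕ} (hρ0 : ∀ l : L, ρ (mL l) = rk l)
    (hρs : ∀ m ∈ P, ∀ a : A, m + Pi.single a 1 ∈ P → ρ (m + Pi.single a 1) = ρ m + 1)
     {v w p : A → ℕ} (hjv : JoinP P v p) (hjw : JoinP P w p)
    (hρp : ρ p = deg v) (hdeg : deg v = deg w) (u q : A → ℕ)
    (hq : JoinP P (u + v) q) (hρq : ρ q = deg (u + v)) :
    JoinP P (u + w) q := by
  classical
  by_cases h2v : ∃ c, 2 ≤ v c
  · obtain ⟨hvP, rfl⟩ := (join_nsf hmL hM0 hstep hP h2v).1 hjv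
    by_cases h2w : ∃ c, 2 ≤ w c
    · obtain ⟨hwP, hvw⟩ := (join_nsf hmL hM0 hstep hP h2w).1 hjw
      rw [← hvw]; exact hq
    · push_neg at h2w
      have hsqw : ∀ a, w a ≤ 1 := fun a => by have := h2w a; omega
      obtain ⟨j, hj, hpj⟩ := (join_sf hmL hM0 hstep hP hsqw).1 hjw
      exfalso
      obtain ⟨c, hc⟩ := h2v
      have := congrFun hpj c
      rw [hmL j c] at this
      split_ifs at this <;> omega
  · push_neg at h2v
    have hsqv : ∀ a, v a ≤ 1 := fun a => by have := h2v a; omega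
    by_cases h2w : ∃ c, 2 ≤ w c
    · obtain ⟨hwP, hpw⟩ := (join_nsf hmL hM0 hstep hP h2w).1 hjw
      obtain ⟨j, hj, hpj⟩ := (join_sf hmL hM0 hstep hP hsqv).1 hjv
      exfalso
      obtain ⟨c, hc⟩ := h2w
      have := congrFun (hpw.symm.trans hpj : w = mL j) c
      rw [hmL j c] at this
      split_ifs at this <;> omega
    · push_neg at h2w
      have hsqw : ∀ a, w a ≤ 1 := fun a => by have := h2w a; omega
      obtain ⟨jS, hjS, hpS⟩ := (join_sf hmL hM0 hstep hP hsqv).1 hjv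
      obtain ⟨jT, hjT, hpT⟩ := (join_sf hmL hM0 hstep hP hsqw).1 hjw
      have hjeq : jT = jS := by
        refine eq_of_atoms_iff rk atom hat (fun a => ?_)
        have := congrFun (hpS.symm.trans hpT : mL jS = mL jT) a
        rw [hmL jS a, hmL jT a] at this
        constructor <;> intro h <;> [skip; skip] <;>
          · split_ifs at this with h1 h2 <;> first | assumption | omega
      subst hjeq
      -- now jT is the common least upper bound l₀
      have hrkl₀ : rk jT = deg v := by rw [← hρ0 jT, ← hpS]; exact hρp
      have hcardST : (Supp v).card = (Supp w).card := by
        rw [← deg_sqf hsqv, ← deg_sqf hsqw, hdeg]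
      have hsubS : Supp v ⊆ Supp (u + v) := supp_subset_of_le (le_add_left' u v)
      by_cases h2z : ∃ c, 2 ≤ (u + v) c
      · obtain ⟨hzP, rfl⟩ := (join_nsf hmL hM0 hstep hP h2z).1 hq
        obtain ⟨c, hc⟩ := h2z
        obtain ⟨l₂, hl₂, hrk₂⟩ := flat_rank h0 hm hat hgeo hmL hM0 hstep hP hzP hc
          (Supp (u + v)) (mem_Supp.2 (by omega)) (fun a ha => mem_Supp.1 ha)
        have hleast₂ := isLeast_of_atoms_iff hat hl₂
        have hl₀l₂ : jT ≤ l₂ := hjS.2 (fun x hx => hleast₂.1 x (hsubS hx))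
        have hsubT : Supp w ⊆ Supp (u + v) := fun a ha =>
          (hl₂ a).1 (le_trans (hjT.1 a ha) hl₀l₂)
        have hjU : IsLeast (ubs rk atom (Supp v ∪ Supp w)) jT := by
          constructor
          · intro a ha
            rcases Finset.mem_union.1 ha with h | h
            · exact hjS.1 a h
            · exact hjT.1 a h
          · intro u' hu'
            exact hjS.2 (fun x hx => hu' x (Finset.mem_union_left _ hx))
        have hsubU : Supp v ∪ Supp w ⊆ Supp (u + v) := Finset.union_subset hsubS hsubT
        have htrans := rk_cl_transfer rk atom h0 hm hat hgeo hsubU hleast₂ hrk₂ hjU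
        have hcardU : (Supp v ∪ Supp w).card = (Supp v).card := by
          rw [← htrans, hrkl₀, deg_sqf hsqv]
        have hUeq : Supp v = Supp v ∪ Supp w :=
          Finset.eq_of_subset_of_card_le Finset.subset_union_left (le_of_eq hcardU)
        have hTS : Supp w ⊆ Supp v := hUeq ▸ Finset.subset_union_right
        have hST : Supp w = Supp v :=
          Finset.eq_of_subset_of_card_le hTS (le_of_eq hcardST)
        have hvw : v = w := sqf_eq_of_supp_eq hsqv hsqw hST.symm
        rw [← hvw]; exact hq
      · push_neg at h2z
        have hsqz : ∀ a, (u + v) a ≤ 1 := fun a => by have := h2z a; omega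
        obtain ⟨j₁, hj₁, rfl⟩ := (join_sf hmL hM0 hstep hP hsqz).1 hq
        have hrkj₁ : rk j₁ = (Supp (u + v)).card := by
          rw [← deg_sqf hsqz, ← hρq, hρ0 j₁]
        -- the supports of u and w are disjoint
        have hdisjT : ∀ a, ¬(0 < u a ∧ 0 < w a) := by
          rintro a ⟨hua, hwa⟩
          have hal₀ : (atom a : L) ≤ jT := hjT.1 a (mem_Supp.2 hwa)
          have hav : v a = 0 := by have := h2z a; simp only [Pi.add_apply] at this; omega
          have hZ' : Supp v ⊆ (Supp (u + v)).erase a := by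
            intro x hx
            refine Finset.mem_erase.2 ⟨?_, hsubS hx⟩
            intro hxa
            rw [hxa] at hx
            exact absurd hav (by have := mem_Supp.1 hx; omega)
          have hneZ : (ubs rk atom ((Supp (u + v)).erase a)).Nonempty :=
            ⟨j₁, fun x hx => hj₁.1 x (Finset.mem_of_mem_erase hx)⟩
          obtain ⟨j₂, hj₂⟩ := exists_cl rk atom hneZ
          have hl₀j₂ : jT ≤ j₂ := hjS.2 (fun x hx => hj₂.1 x (hZ' hx))
          have haj₂ : (atom a : L) ≤ j₂ := le_trans hal₀ hl₀j₂
          have hj₂full : IsLeast (ubs rk atom (Supp (u + v))) j₂ := by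
            constructor
            · intro x hx
              by_cases hxa : x = a
              · subst hxa; exact haj₂
              · exact hj₂.1 x (Finset.mem_erase.2 ⟨hxa, hx⟩)
            · intro u' hu'
              exact hj₂.2 (fun x hx => hu' x (Finset.mem_of_mem_erase hx))
          have hj₂j₁ : j₂ = j₁ := isLeast_unique hj₂full hj₁
          have hc1 : rk j₂ ≤ ((Supp (u + v)).erase a).card :=
            rk_cl_le rk atom h0 hat hgeo _ j₂ hj₂
          have hmemz : a ∈ Supp (u + v) := mem_Supp.2 (by simp; omega)
          have := Finset.card_erase_of_mem hmemz
          have hposz : 0 < (Supp (u + v)).card := Finset.card_pos.2 ⟨a, hmemz⟩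
          rw [hj₂j₁] at hc1
          omega
        have hsqu : ∀ a, u a ≤ 1 := fun a => by have := h2z a; simp only [Pi.add_apply] at this; omega
        have hsqz₂ : ∀ a, (u + w) a ≤ 1 := by
          intro a
          have h1 := hsqu a; have h2 := hsqw a; have h3 := hdisjT a
          simp only [Pi.add_apply]
          by_cases hu0 : 0 < u a
          · have : ¬ 0 < w a := fun hw' => h3 ⟨hu0, hw'⟩
            omega
          · omega
        have hubs_eq : ubs rk atom (Supp (u + w)) = ubs rk atom (Supp (u + v)) := by
          ext u'
          constructor
          · intro hu' x hx
            have hx' : 0 < u x + v x := by simpa using mem_Supp.1 hx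
            by_cases hux : 0 < u x
            · exact hu' x (mem_Supp.2 (by simp; omega))
            · have hvx : 0 < v x := by omega
              have h1 : jT ≤ u' := hjT.2 (fun y hy =>
                hu' y (mem_Supp.2 (by simp; have := mem_Supp.1 hy; omega)))
              exact le_trans (hjS.1 x (mem_Supp.2 hvx)) h1
          · intro hu' x hx
            have hx' : 0 < u x + w x := by simpa using mem_Supp.1 hx
            by_cases hux : 0 < u x
            · exact hu' x (mem_Supp.2 (by simp; omega))
            · have hwx : 0 < w x := by omega
              have h1 : jT ≤ u' := hjS.2 (fun y hy =>
                hu' y (mem_Supp.2 (by simp; have := mem_Supp.1 hy; omega)))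
              exact le_trans (hjT.1 x (mem_Supp.2 hwx)) h1
        have hj₁' : IsLeast (ubs rk atom (Supp (u + w))) j₁ := by
          rw [hubs_eq]; exact hj₁
        exact (join_sf hmL hM0 hstep hP hsqz₂).2 ⟨j₁, hj₁', rfl⟩

/-- every element of `P` of rank `d` has a monomial of degree `d` whose join it is -/
lemma rep_exists (h0 : rk ⊥ = 0) (hm : RankStrictMono rk) (hat : AtomicRk rk)
    (hgeo : ∀ x y j : L, IsLUB ({x, y} : Set L) j → rk (x ⊓ y) + rk j ≤ rk x + rk y)
     (hmL : ∀ (l : L) (a : A), mL l a = if (atom a : L) ≤ l then 1 else 0)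
    (hM0 : M 0 = {v | ∃ l : L, v = mL l})
    (hstep : ∀ i : ℕ, M (i + 1) = M i ∨
      ∃ m ∈ M i, ∃ a : A, 0 < m a ∧
        (∀ b : A, 0 < m b → (m + Pi.single a 1 - Pi.single b 1) ∈ M i) ∧
        m + Pi.single a 1 ∉ M i ∧ M (i + 1) = M i ∪ {m + Pi.single a 1})
    (hP : P = ⋃ i, M i)
     {ρ : (A → ℕ) → ℕ} (hρ0 : ∀ l : L, ρ (mL l) = rk l)
    (hρs : ∀ m ∈ P, ∀ a : A, m + Pi.single a 1 ∈ P → ρ (m + Pi.single a 1) = ρ m + 1)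
     :
    ∀ p ∈ P, ∃ v : A → ℕ, deg v = ρ p ∧ JoinP P v p := by
  intro p hp
  by_cases h2 : ∃ c, 2 ≤ p c
  · exact ⟨p, (rho_nsf h0 hm hat hgeo hmL hM0 hstep hP hρ0 hρs p hp h2).symm,
      (join_nsf hmL hM0 hstep hP h2).2 ⟨hp, rfl⟩⟩
  · push_neg at h2
    have hsq : ∀ a, p a ≤ 1 := fun a => by have := h2 a; omega
    obtain ⟨l, hl⟩ := supp_flat hmL hM0 hstep hP p hp
    have hpeq : p = mL l := sqf_eq_mL hmL hsq hl
    obtain ⟨T, hTl, hTleast, hTcard⟩ := exists_basis rk atom h0 hm hat hgeo l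
    refine ⟨fun a => if a ∈ T then 1 else 0, ?_, ?_⟩
    · have hsqT : ∀ a : A, (fun a => if a ∈ T then (1:ℕ) else 0) a ≤ 1 := by
        intro a; by_cases h : a ∈ T <;> simp [h]
      have hsupp : Supp (fun a => if a ∈ T then (1:ℕ) else 0) = T := by
        ext a; rw [mem_Supp]; by_cases h : a ∈ T <;> simp [h]
      rw [deg_sqf hsqT, hsupp, hTcard, hpeq, hρ0]
    · have hsqT : ∀ a : A, (fun a => if a ∈ T then (1:ℕ) else 0) a ≤ 1 := by
        intro a; by_cases h : a ∈ T <;> simp [h]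
      have hsupp : Supp (fun a => if a ∈ T then (1:ℕ) else 0) = T := by
        ext a; rw [mem_Supp]; by_cases h : a ∈ T <;> simp [h]
      rw [hpeq]
      exact (join_sf hmL hM0 hstep hP hsqT).2 ⟨l, by rw [hsupp]; exact hTleast, rfl⟩

end Pside

end GSRaux

open GSRaux

/-- The generalized Stanley–Reisner ring of a finite member `P` of the family `𝒫`
(built from a geometric meet semi-lattice `L` by starting with the square-free
monomials `mL l` and repeatedly adjoining monomials `x_a · m`): the degree-`(i+1)`
graded component of `k[P] = k[x_a : a ∈ A] / (I₀ + I₁ + I₂ + I₃)` has dimension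
`f_i(P)`, the number of rank-`(i+1)` elements of `P`. -/
theorem generalized_stanley_reisner_dims {L : Type*} [SemilatticeInf L]
    [OrderBot L] [Fintype L] [DecidableEq L]
    [DecidableRel (α := L) (· ≤ ·)]
    (rk : L → ℕ) (h0 : rk ⊥ = 0) (hc : CoverRank rk) (hm : RankStrictMono rk)
    (hat : AtomicRk rk)
    (hgeo : ∀ x y j : L, IsLUB ({x, y} : Set L) j →
      rk (x ⊓ y) + rk j ≤ rk x + rk y)
    -- the variables are indexed by the atoms of `L`
    (A : Type*) [Fintype A] [DecidableEq A] (atom : A ≃ {a : L // rk a = 1})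
    -- `mL l` is the square-free monomial supported on the atoms below `l`
    (mL : L → (A → ℕ))
    (hmL : ∀ (l : L) (a : A), mL l a = if (atom a : L) ≤ l then 1 else 0)
    -- the step-by-step construction of `P ∈ 𝒫`
    (M : ℕ → Set (A → ℕ))
    (hM0 : M 0 = {v | ∃ l : L, v = mL l})
    (hstep : ∀ i : ℕ, M (i + 1) = M i ∨
      ∃ m ∈ M i, ∃ a : A, 0 < m a ∧
        (∀ b : A, 0 < m b → (m + Pi.single a 1 - Pi.single b 1) ∈ M i) ∧
        m + Pi.single a 1 ∉ M i ∧ M (i + 1) = M i ∪ {m + Pi.single a 1})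
    (P : Set (A → ℕ)) (hP : P = ⋃ i, M i) (hPfin : P.Finite)
    -- the rank function of `P`
    (ρ : (A → ℕ) → ℕ) (hρ0 : ∀ l : L, ρ (mL l) = rk l)
    (hρs : ∀ m ∈ P, ∀ a : A,
      m + Pi.single a 1 ∈ P → ρ (m + Pi.single a 1) = ρ m + 1)
    -- `rexp a` is the largest exponent of `x_a` among the monomials of `P`
    (rexp : A → ℕ)
    (hrexp : ∀ a : A, (∀ m ∈ P, m a ≤ rexp a) ∧ ∃ m ∈ P, m a = rexp a)
    (k : Type*) [Field k] :
    ∀ i : ℕ,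
      let mono : (A → ℕ) → MvPolynomial A k := fun v =>
        MvPolynomial.monomial (Finsupp.equivFunOnFinite.symm v) (1 : k)
      let gens : Set (MvPolynomial A k) :=
        {x | ∃ v : A → ℕ, (∃ a : A, rexp a < v a) ∧ x = mono v} ∪
        {x | ∃ v : A → ℕ, (∀ a : A, v a ≤ rexp a) ∧
          (¬ ∃ p : A → ℕ, JoinP P v p) ∧ x = mono v} ∪
        {x | ∃ v : A → ℕ, (∃ p : A → ℕ, JoinP P v p ∧ ρ p ≠ ∑ a : A, v a) ∧
          x = mono v} ∪
        {x | ∃ v w : A → ℕ, (∃ p : A → ℕ, JoinP P v p ∧ JoinP P w p ∧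
          ρ p = ∑ a : A, v a ∧ (∑ a : A, v a) = ∑ a : A, w a) ∧
          x = mono v - mono w}
      let I : Ideal (MvPolynomial A k) := Ideal.span gens
      Module.finrank k
        (Submodule.map (Ideal.Quotient.mkₐ k I).toLinearMap
          (MvPolynomial.homogeneousSubmodule A k (i + 1))) =
        Nat.card {p : A → ℕ | p ∈ P ∧ ρ p = i + 1} := by
  classical
  intro i mono gens I
  set d : ℕ := i + 1 with hd
  have hrexp1 : ∀ a : A, ∀ m ∈ P, m a ≤ rexp a := fun a => (hrexp a).1
  -- the set of rank-d elements of P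
  set F : Set (A → ℕ) := {p : A → ℕ | p ∈ P ∧ ρ p = d} with hF
  have hFfin : F.Finite := hPfin.subset (fun p hp => hp.1)
  haveI : Fintype F := hFfin.fintype
  -- the linear functional detecting classes
  let b : (A →₀ ℕ) → (F →₀ k) := fun e =>
    if h : deg (⇑e) = d ∧ ∃ p, JoinP P (⇑e) p ∧ ρ p = d then
      Finsupp.single ⟨h.2.choose, h.2.choose_spec.1.1, h.2.choose_spec.2⟩ 1
    else 0
  let φ : MvPolynomial A k →ₗ[k] (F →₀ k) := (MvPolynomial.basisMonomials A k).constr ℕ b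
  have hφmono : ∀ v : A → ℕ, φ (mono v) =
      (if h : deg v = d ∧ ∃ p, JoinP P v p ∧ ρ p = d then
        Finsupp.single ⟨h.2.choose, h.2.choose_spec.1.1, h.2.choose_spec.2⟩ 1
      else 0 : F →₀ k) := by
    intro v
    have h1 : mono v = (MvPolynomial.basisMonomials A k) (Finsupp.equivFunOnFinite.symm v) := by
      rw [MvPolynomial.coe_basisMonomials]
    rw [h1]
    exact Module.Basis.constr_basis _ _ _ _
  have hb_eq : ∀ (v q : A → ℕ) (hdeg : deg v = d) (hj : JoinP P v q) (hρq : ρ q = d),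
      φ (mono v) = Finsupp.single (⟨q, hj.1, hρq⟩ : F) 1 := by
    intro v q hdeg hj hρq
    rw [hφmono v, dif_pos ⟨hdeg, q, hj, hρq⟩]
    congr 1
    exact Subtype.ext (join_unique (Exists.choose_spec (⟨q, hj, hρq⟩ :
      ∃ p, JoinP P v p ∧ ρ p = d)).1 hj)
  have hb_zero : ∀ v : A → ℕ, ¬ (deg v = d ∧ ∃ p, JoinP P v p ∧ ρ p = d) →
      φ (mono v) = 0 := by
    intro v h
    rw [hφmono v, dif_neg h]
  have hmono_mul : ∀ u v : A → ℕ, mono u * mono v = mono (u + v) := by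
    intro u v
    show MvPolynomial.monomial _ (1 : k) * MvPolynomial.monomial _ 1 = MvPolynomial.monomial _ 1
    have hexp : Finsupp.equivFunOnFinite.symm u + Finsupp.equivFunOnFinite.symm v =
        Finsupp.equivFunOnFinite.symm (u + v) := by
      ext a
      simp [Finsupp.add_apply]
    rw [MvPolynomial.monomial_mul, one_mul, hexp]
  -- φ kills every monomial multiple of a generator
  have hgen : ∀ g ∈ gens, ∀ u : A → ℕ, φ (mono u * g) = 0 := by
    intro g hg u
    have hg' : g ∈ ({x | ∃ v : A → ℕ, (∃ a : A, rexp a < v a) ∧ x = mono v} ∪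
        {x | ∃ v : A → ℕ, (∀ a : A, v a ≤ rexp a) ∧
          (¬ ∃ p : A → ℕ, JoinP P v p) ∧ x = mono v} ∪
        {x | ∃ v : A → ℕ, (∃ p : A → ℕ, JoinP P v p ∧ ρ p ≠ ∑ a : A, v a) ∧
          x = mono v} ∪
        {x | ∃ v w : A → ℕ, (∃ p : A → ℕ, JoinP P v p ∧ JoinP P w p ∧
          ρ p = ∑ a : A, v a ∧ (∑ a : A, v a) = ∑ a : A, w a) ∧
          x = mono v - mono w} : Set (MvPolynomial A k)) := hg
    simp only [Set.mem_union, Set.mem_setOf_eq] at hg'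
    rcases hg' with ((⟨v, ⟨a, hva⟩, rfl⟩ | ⟨v, hvle, hnj, rfl⟩) | ⟨v, ⟨p, hjp, hρp⟩, rfl⟩) |
      ⟨v, w, ⟨p, hjv, hjw, hρp, hdvw⟩, rfl⟩
    · rw [hmono_mul]
      apply hb_zero
      rintro ⟨-, p, hj, -⟩
      exact rel0 hrexp1 hva u ⟨p, hj⟩
    · rw [hmono_mul]
      apply hb_zero
      rintro ⟨-, p, hj, -⟩
      exact rel1 hmL hM0 hstep hP hnj u ⟨p, hj⟩
    · rw [hmono_mul]
      apply hb_zero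
      rintro ⟨hdeg, q, hjq, hρq⟩
      have hne : ρ p ≠ deg v := hρp
      exact rel2 h0 hm hat hgeo hmL hM0 hstep hP hρ0 hρs hjp hne u q hjq (by rw [hρq, ← hdeg])
    · have hρp' : ρ p = deg v := hρp
      have hdvw' : deg v = deg w := hdvw
      rw [mul_sub, hmono_mul, hmono_mul, map_sub]
      by_cases hgood : deg (u + v) = d ∧ ∃ q, JoinP P (u + v) q ∧ ρ q = d
      · obtain ⟨hdg, q, hjq, hρq⟩ := hgood
        have hρq' : ρ q = deg (u + v) := by rw [hρq, ← hdg]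
        have hjq2 : JoinP P (u + w) q :=
          rel3_dir h0 hm hat hgeo hmL hM0 hstep hP hρ0 hρs hjv hjw hρp' hdvw' u q hjq hρq'
        have hdg2 : deg (u + w) = d := by
          rw [deg_add] at hdg ⊢
          omega
        rw [hb_eq (u + v) q hdg hjq hρq, hb_eq (u + w) q hdg2 hjq2 hρq, sub_self]
      · have hgood2 : ¬ (deg (u + w) = d ∧ ∃ q, JoinP P (u + w) q ∧ ρ q = d) := by
          rintro ⟨hdg2, q, hjq, hρq⟩
          apply hgood
          have hdg : deg (u + v) = d := by
            rw [deg_add] at hdg2 ⊢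
            omega
          refine ⟨hdg, q, ?_, hρq⟩
          have hρp'' : ρ p = deg w := by rw [hρp', hdvw']
          have hρq' : ρ q = deg (u + w) := by rw [hρq, ← hdg2]
          exact rel3_dir h0 hm hat hgeo hmL hM0 hstep hP hρ0 hρs hjw hjv hρp'' hdvw'.symm
            u q hjq hρq'
        rw [hb_zero _ hgood, hb_zero _ hgood2, sub_self]
  -- φ kills the whole ideal
  have hmono_zero : mono 0 = 1 := by
    show MvPolynomial.monomial _ (1 : k) = 1
    have h1 : (Finsupp.equivFunOnFinite.symm (0 : A → ℕ)) = 0 := by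
      ext a; rfl
    rw [h1, MvPolynomial.monomial_zero', MvPolynomial.C_1]
  have hI0 : ∀ x ∈ I, φ x = 0 := by
    have key : ∀ x ∈ I, ∀ u : A → ℕ, φ (mono u * x) = 0 := by
      intro x hx
      have hx' : x ∈ Submodule.span (MvPolynomial A k) gens := hx
      refine Submodule.span_induction (p := fun x _ => ∀ u : A → ℕ, φ (mono u * x) = 0)
        ?_ ?_ ?_ ?_ hx'
      · intro g hgg u
        exact hgen g hgg u
      · intro u
        rw [mul_zero, map_zero]
      · intro x y hxm hym hx1 hy1 u
        rw [mul_add, map_add, hx1 u, hy1 u, add_zero]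
      · intro r x hxm hx1
        suffices hr : ∀ (r : MvPolynomial A k) (u : A → ℕ), φ (mono u * (r * x)) = 0 by
          intro u
          rw [smul_eq_mul]
          exact hr r u
        intro r
        refine MvPolynomial.induction_on' r ?_ ?_
        · intro w c u
          have h1 : MvPolynomial.monomial w c = c • mono (⇑w) := by
            show _ = c • MvPolynomial.monomial (Finsupp.equivFunOnFinite.symm ⇑w) (1 : k)
            rw [Finsupp.equivFunOnFinite_symm_coe, MvPolynomial.smul_monomial, smul_eq_mul,
              mul_one]
          rw [h1, smul_mul_assoc, mul_smul_comm, map_smul, ← mul_assoc, hmono_mul,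
            hx1 (u + ⇑w), smul_zero]
        · intro p q hp hq u
          rw [add_mul, mul_add, map_add, hp u, hq u, add_zero]
    intro x hx
    have := key x hx 0
    rwa [hmono_zero, one_mul] at this
  -- representatives of the elements of F
  have hrep : ∀ p : F, ∃ v : A → ℕ, deg v = d ∧ JoinP P v (p : A → ℕ) := by
    intro p
    obtain ⟨v, hv1, hv2⟩ := rep_exists h0 hm hat hgeo hmL hM0 hstep hP hρ0 hρs
      (p : A → ℕ) p.2.1
    exact ⟨v, by rw [hv1, p.2.2], hv2⟩
  set rep : F → (A → ℕ) := fun p => (hrep p).choose with hrepdef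
  have hrep1 : ∀ p : F, deg (rep p) = d := fun p => (hrep p).choose_spec.1
  have hrep2 : ∀ p : F, JoinP P (rep p) (p : A → ℕ) := fun p => (hrep p).choose_spec.2
  set mkL := (Ideal.Quotient.mkₐ k I).toLinearMap with hmkLdef
  set g : F → (MvPolynomial A k ⧸ I) := fun p => mkL (mono (rep p)) with hgdef
  have hmkL_apply : ∀ x : MvPolynomial A k, mkL x = Ideal.Quotient.mk I x := by
    intro x
    rw [hmkLdef]
    simp [Ideal.Quotient.mkₐ_eq_mk]
  have hdeg_e : ∀ e : A →₀ ℕ, e.degree = deg ⇑e := by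
    intro e
    rw [Finsupp.degree]
    exact Finset.sum_subset (Finset.subset_univ _)
      (fun x _ hx => Finsupp.notMem_support_iff.1 hx)
  have hmono_mem : ∀ v : A → ℕ, deg v = d →
      mono v ∈ MvPolynomial.homogeneousSubmodule A k d := by
    intro v hv
    rw [MvPolynomial.mem_homogeneousSubmodule]
    exact MvPolynomial.isHomogeneous_monomial _ (by rw [hdeg_e]; exact hv)
  -- the image of the degree-d part is spanned by g
  have hW : Submodule.map mkL (MvPolynomial.homogeneousSubmodule A k d) =
      Submodule.span k (Set.range g) := by
    apply le_antisymm
    · rw [MvPolynomial.homogeneousSubmodule_eq_finsupp_supported,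
        AddMonoidAlgebra.supported_eq_span_single, Submodule.map_span, Submodule.span_le]
      rintro x ⟨y, ⟨e, he, rfl⟩, rfl⟩
      have he' : e.degree = d := he
      simp only [MvPolynomial.single_eq_monomial]
      have hy : MvPolynomial.monomial e (1 : k) = mono ⇑e := by
        show _ = MvPolynomial.monomial (Finsupp.equivFunOnFinite.symm ⇑e) (1 : k)
        rw [Finsupp.equivFunOnFinite_symm_coe]
      rw [hy]
      have hdegv : deg ⇑e = d := by rw [← hdeg_e]; exact he'
      by_cases hgood : ∃ q, JoinP P (⇑e) q ∧ ρ q = d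
      · obtain ⟨q, hjq, hρq⟩ := hgood
        have hqF : q ∈ F := ⟨hjq.1, hρq⟩
        have heq : mkL (mono ⇑e) = g ⟨q, hqF⟩ := by
          rw [hgdef]
          have hsub : mono ⇑e - mono (rep ⟨q, hqF⟩) ∈ I := by
            apply Ideal.subset_span
            refine Set.mem_union_right _ ⟨⇑e, rep ⟨q, hqF⟩, ⟨q, hjq, hrep2 ⟨q, hqF⟩, ?_, ?_⟩, rfl⟩
            · show ρ q = deg ⇑e
              rw [hρq, hdegv]
            · show deg ⇑e = deg (rep ⟨q, hqF⟩)
              rw [hdegv, hrep1 ⟨q, hqF⟩]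
          have := Ideal.Quotient.eq.2 hsub
          rw [hmkL_apply]
          exact this
        rw [heq]
        exact Submodule.subset_span (Set.mem_range_self _)
      · have hIv : mono ⇑e ∈ I := by
          apply Ideal.subset_span
          by_cases hle : ∀ a, (⇑e) a ≤ rexp a
          · by_cases hj : ∃ p, JoinP P (⇑e) p
            · obtain ⟨p, hp⟩ := hj
              refine Set.mem_union_left _ (Set.mem_union_right _ ⟨⇑e, ⟨p, hp, ?_⟩, rfl⟩)
              intro hρp
              exact hgood ⟨p, hp, by rw [show ρ p = deg ⇑e from hρp, hdegv]⟩
            · exact Set.mem_union_left _ (Set.mem_union_left _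
                (Set.mem_union_right _ ⟨⇑e, hle, hj, rfl⟩))
          · push_neg at hle
            obtain ⟨a, ha⟩ := hle
            exact Set.mem_union_left _ (Set.mem_union_left _
              (Set.mem_union_left _ ⟨⇑e, ⟨a, ha⟩, rfl⟩))
        have hz : mkL (mono ⇑e) = 0 := by
          rw [hmkL_apply]
          exact Ideal.Quotient.eq_zero_iff_mem.2 hIv
        rw [hz]
        exact Submodule.zero_mem _
    · rw [Submodule.span_le]
      rintro x ⟨p, rfl⟩
      exact Submodule.mem_map_of_mem (hmono_mem _ (hrep1 p))
  -- g is linearly independent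
  have h4 : ∀ p : F, φ (mono (rep p)) = Finsupp.single p 1 := by
    intro p
    have h := hb_eq (rep p) (p : A → ℕ) (hrep1 p) (hrep2 p) p.2.2
    rw [Subtype.coe_eta] at h
    exact h
  have hindep : LinearIndependent k g := by
    rw [linearIndependent_iff]
    intro l hl
    have h1 : Finsupp.linearCombination k g l = mkL (l.sum fun p c => c • mono (rep p)) := by
      rw [Finsupp.linearCombination_apply, map_finsuppSum]
      refine Finsupp.sum_congr (fun p _ => ?_)
      rw [map_smul, hgdef]
    have h2 : (l.sum fun p c => c • mono (rep p)) ∈ I := by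
      rw [h1] at hl
      rw [hmkL_apply] at hl
      exact Ideal.Quotient.eq_zero_iff_mem.1 hl
    have h3 := hI0 _ h2
    rw [map_finsuppSum] at h3
    have h5 : (l.sum fun p c => φ (c • mono (rep p))) = l := by
      have : (l.sum fun p c => φ (c • mono (rep p))) = l.sum fun p c => Finsupp.single p c := by
        refine Finsupp.sum_congr (fun p _ => ?_)
        rw [map_smul, h4 p, Finsupp.smul_single', mul_one]
      rw [this, Finsupp.sum_single]
    rw [h5] at h3
    exact h3
  rw [hW, finrank_span_eq_card hindep, Nat.card_eq_fintype_card]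
end
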